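/- arXiv:2307.06054 — 6 statements merged into one kernel-verified Lean document; each statement's English description precedes it below -/
import Mathlib

section
/- Let G be a d-regular graph with an even number of vertices and let (R,B) be a balanced colouring of G. Then the pair (P_2(R), P_2(B)) lies in the region D_d ⊆ [0,1]², where D_d is the convex hull of the 2d+2 points { (l/d, l²/d²) : 0 ≤ l ≤ d } ∪ { (l²/d², l/d) : 0 ≤ l ≤ d }. -/
open Finset
open scoped Classical

/-- The number of neighbours of `v` lying in `R` (the degree of `v` into `R`). -/
noncomputable def degIn {V : Type*} (G : SimpleGraph V) (R : Finset V) (v : V) : ℕ :=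
  (R.filter (fun w => G.Adj v w)).card

/-- `P₂(R)`: the probability that a random walk started at a uniform vertex of `R`
stays in `R` for two steps, in a `d`-regular graph. -/
noncomputable def P2 {V : Type*} (G : SimpleGraph V) (d : ℕ) (R : Finset V) : ℝ :=
  (∑ v ∈ R, (degIn G R v : ℝ) ^ 2) / (R.card * d ^ 2)

lemma consec_nonneg (k l : ℕ) : 0 ≤ ((k : ℝ) - l) * ((k : ℝ) - l - 1) := by
  rcases le_or_gt k l with h | h
  · have h' : (k : ℝ) ≤ l := by exact_mod_cast h
    nlinarith [h']
  · have h' : (l : ℝ) + 1 ≤ k := by exact_mod_cast h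
    exact mul_nonneg (by linarith) (by linarith)

lemma degIn_le_d {V : Type*} [Fintype V] (G : SimpleGraph V) {d : ℕ}
    (hreg : G.IsRegularOfDegree d) (R : Finset V) (v : V) : degIn G R v ≤ d := by
  have h : R.filter (fun w => G.Adj v w) ⊆ univ.filter (fun w => G.Adj v w) :=
    filter_subset_filter _ (subset_univ R)
  have h2 : (univ.filter (fun w => G.Adj v w)).card = d := by
    rw [← hreg v, SimpleGraph.degree, SimpleGraph.neighborFinset_eq_filter]
  exact h2 ▸ card_le_card h

lemma sum_degIn_eq {V : Type*} [Fintype V] (G : SimpleGraph V) {d : ℕ}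
    (hreg : G.IsRegularOfDegree d) (R B : Finset V)
    (hcov : ∀ v, v ∈ R ∨ v ∈ B) (hdisj : Disjoint R B) (hbal : R.card = B.card) :
    ∑ v ∈ R, degIn G R v = ∑ v ∈ B, degIn G B v := by
  have huniv : R ∪ B = univ := by
    ext v; simpa using hcov v
  have hsplit : ∀ v, degIn G R v + degIn G B v = d := by
    intro v
    have hd : degIn G R v + degIn G B v = ((R ∪ B).filter (fun w => G.Adj v w)).card := by
      rw [filter_union, card_union_of_disjoint (disjoint_filter_filter hdisj)]
      rfl
    rw [hd, huniv, ← SimpleGraph.neighborFinset_eq_filter, ← SimpleGraph.degree, hreg v]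
  have hcross : ∑ v ∈ R, degIn G B v = ∑ v ∈ B, degIn G R v := by
    unfold degIn
    simp_rw [card_filter]
    rw [Finset.sum_comm]
    refine Finset.sum_congr rfl fun x _ => Finset.sum_congr rfl fun y _ => ?_
    rw [G.adj_comm]
  have h1 : ∑ v ∈ R, degIn G R v + ∑ v ∈ R, degIn G B v = R.card * d := by
    rw [← sum_add_distrib]
    simp [hsplit, mul_comm]
  have h2 : ∑ v ∈ B, degIn G R v + ∑ v ∈ B, degIn G B v = B.card * d := by
    rw [← sum_add_distrib]
    simp [hsplit, mul_comm]
  rw [hbal] at h1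
  omega

lemma mem_of_horiz {H : Set (ℝ × ℝ)} (hH : Convex ℝ H) {u v w c : ℝ}
    (hp : (u, w) ∈ H) (hq : (v, w) ∈ H) (h1 : u ≤ c) (h2 : c ≤ v) : (c, w) ∈ H := by
  rcases eq_or_lt_of_le (h1.trans h2) with h | h
  · have hc : c = u := le_antisymm (h ▸ h2) h1
    exact hc ▸ hp
  · set θ := (c - u) / (v - u) with hθ
    have h0θ : 0 ≤ θ := div_nonneg (by linarith) (by linarith)
    have hθ1 : θ ≤ 1 := by rw [hθ, div_le_one (by linarith)]; linarith
    have hmem := hH hp hq (by linarith : (0:ℝ) ≤ 1 - θ) h0θ (by ring)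
    have heq : ((1 - θ) • ((u, w) : ℝ × ℝ) + θ • ((v, w) : ℝ × ℝ)) = (c, w) := by
      rw [Prod.smul_mk, Prod.smul_mk, Prod.mk_add_mk, Prod.mk.injEq]
      constructor
      · have hne : v - u ≠ 0 := by linarith
        simp only [smul_eq_mul]
        have h3 : θ * (v - u) = c - u := by rw [hθ]; exact div_mul_cancel₀ _ hne
        linear_combination h3
      · simp [smul_eq_mul]; ring
    rwa [heq] at hmem

lemma mem_of_vert {H : Set (ℝ × ℝ)} (hH : Convex ℝ H) {u v w c : ℝ}
    (hp : (w, u) ∈ H) (hq : (w, v) ∈ H) (h1 : u ≤ c) (h2 : c ≤ v) : (w, c) ∈ H := by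
  rcases eq_or_lt_of_le (h1.trans h2) with h | h
  · have hc : c = u := le_antisymm (h ▸ h2) h1
    exact hc ▸ hp
  · set θ := (c - u) / (v - u) with hθ
    have h0θ : 0 ≤ θ := div_nonneg (by linarith) (by linarith)
    have hθ1 : θ ≤ 1 := by rw [hθ, div_le_one (by linarith)]; linarith
    have hmem := hH hp hq (by linarith : (0:ℝ) ≤ 1 - θ) h0θ (by ring)
    have heq : ((1 - θ) • ((w, u) : ℝ × ℝ) + θ • ((w, v) : ℝ × ℝ)) = (w, c) := by
      rw [Prod.smul_mk, Prod.smul_mk, Prod.mk_add_mk, Prod.mk.injEq]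
      constructor
      · simp [smul_eq_mul]; ring
      · have hne : v - u ≠ 0 := by linarith
        simp only [smul_eq_mul]
        have h3 : θ * (v - u) = c - u := by rw [hθ]; exact div_mul_cancel₀ _ hne
        linear_combination h3
    rwa [heq] at hmem

set_option maxHeartbeats 1000000 in
/-- For any `d`-regular graph with an even number of vertices and any balanced colouring
`(R,B)`, the pair `(P₂(R), P₂(B))` lies in the region `D_d`, the convex hull of the points
`{(l/d, l²/d²) : 0 ≤ l ≤ d} ∪ {(l²/d², l/d) : 0 ≤ l ≤ d}`. -/
theorem P2_pair_mem_Dd {V : Type*} [Fintype V] (G : SimpleGraph V) (d : ℕ)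
    (hreg : G.IsRegularOfDegree d) (heven : Even (Fintype.card V))
    (R B : Finset V) (hcov : ∀ v, v ∈ R ∨ v ∈ B) (hdisj : Disjoint R B)
    (hbal : R.card = B.card) :
    (P2 G d R, P2 G d B) ∈
      convexHull ℝ {p : ℝ × ℝ | ∃ l : ℕ, l ≤ d ∧
        (p = ((l : ℝ) / d, ((l : ℝ) / d) ^ 2) ∨ p = (((l : ℝ) / d) ^ 2, (l : ℝ) / d))} := by
  set Spts : Set (ℝ × ℝ) := {p : ℝ × ℝ | ∃ l : ℕ, l ≤ d ∧
      (p = ((l : ℝ) / d, ((l : ℝ) / d) ^ 2) ∨ p = (((l : ℝ) / d) ^ 2, (l : ℝ) / d))} with hSpts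
  have hsub : Spts ⊆ convexHull ℝ Spts := subset_convexHull ℝ Spts
  have hHconv : Convex ℝ (convexHull ℝ Spts) := convex_convexHull ℝ Spts
  by_cases hdeg : R.card = 0 ∨ d = 0
  · -- degenerate case: both probabilities are 0
    have hR : P2 G d R = 0 := by
      rcases hdeg with h | h
      · simp [P2, h]
      · simp [P2, h]
    have hB : P2 G d B = 0 := by
      rcases hdeg with h | h
      · simp [P2, ← hbal, h]
      · simp [P2, h]
    rw [hR, hB]
    exact hsub ⟨0, Nat.zero_le d, Or.inl (by norm_num)⟩
  push_neg at hdeg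
  obtain ⟨hm0, hd0⟩ := hdeg
  obtain ⟨m, hmdef⟩ : ∃ m, R.card = m := ⟨_, rfl⟩
  obtain ⟨s, hsdef⟩ : ∃ s, ∑ v ∈ R, degIn G R v = s := ⟨_, rfl⟩
  rw [hmdef] at hm0
  have hsB : ∑ v ∈ B, degIn G B v = s := hsdef ▸ (sum_degIn_eq G hreg R B hcov hdisj hbal).symm
  have hBcard : B.card = m := hmdef ▸ hbal.symm
  have hxR : ∀ v, degIn G R v ≤ d := degIn_le_d G hreg R
  have hxB : ∀ v, degIn G B v ≤ d := degIn_le_d G hreg B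
  have hsle : s ≤ m * d := by
    rw [← hsdef, ← hmdef]
    calc ∑ v ∈ R, degIn G R v ≤ ∑ _v ∈ R, d := Finset.sum_le_sum fun v _ => hxR v
    _ = R.card * d := by rw [sum_const, smul_eq_mul]
  have hM : (0 : ℝ) < m := by exact_mod_cast Nat.pos_of_ne_zero hm0
  have hD : (0 : ℝ) < d := by exact_mod_cast Nat.pos_of_ne_zero hd0
  by_cases hsmd : s = m * d
  · -- all inner degrees equal d; the point is (1,1)
    have hallR : ∀ v ∈ R, degIn G R v = d := by
      intro v hv
      by_contra hne
      have hlt : degIn G R v < d := lt_of_le_of_ne (hxR v) hne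
      have : s < m * d := by
        rw [← hsdef, ← hmdef]
        calc ∑ v ∈ R, degIn G R v < ∑ _v ∈ R, d := Finset.sum_lt_sum (fun i _ => hxR i) ⟨v, hv, hlt⟩
        _ = R.card * d := by rw [sum_const, smul_eq_mul]
      omega
    have hallB : ∀ v ∈ B, degIn G B v = d := by
      intro v hv
      by_contra hne
      have hlt : degIn G B v < d := lt_of_le_of_ne (hxB v) hne
      have : s < m * d := by
        calc s = ∑ v ∈ B, degIn G B v := hsB.symm
        _ < ∑ _v ∈ B, d := Finset.sum_lt_sum (fun i _ => hxB i) ⟨v, hv, hlt⟩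
        _ = m * d := by rw [sum_const, smul_eq_mul, hBcard]
      omega
    have hPR : P2 G d R = 1 := by
      unfold P2
      rw [Finset.sum_congr rfl (fun v hv => by rw [hallR v hv] : ∀ v ∈ R, ((degIn G R v : ℝ))^2 = (d:ℝ)^2)]
      rw [sum_const, nsmul_eq_mul, hmdef]
      field_simp
    have hPB : P2 G d B = 1 := by
      unfold P2
      rw [Finset.sum_congr rfl (fun v hv => by rw [hallB v hv] : ∀ v ∈ B, ((degIn G B v : ℝ))^2 = (d:ℝ)^2)]
      rw [sum_const, nsmul_eq_mul, hBcard]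
      field_simp
    rw [hPR, hPB]
    refine hsub ⟨d, le_rfl, Or.inl ?_⟩
    rw [div_self hD.ne', Prod.mk.injEq]
    norm_num
  -- main case
  have hslt : s < m * d := lt_of_le_of_ne hsle hsmd
  obtain ⟨l, hldef⟩ : ∃ l, s / m = l := ⟨_, rfl⟩
  have hlm : l * m ≤ s := hldef ▸ Nat.div_mul_le_self s m
  have hsl1 : s < (l + 1) * m := by
    have h1 : m * l + s % m = s := by rw [← hldef]; exact Nat.div_add_mod s m
    have h2 : s % m < m := Nat.mod_lt _ (Nat.pos_of_ne_zero hm0)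
    have : s < l * m + m := by rw [mul_comm l m]; omega
    calc s < l * m + m := this
    _ = (l + 1) * m := by ring
  have hld : l + 1 ≤ d := by
    have : l < d := by
      rw [← hldef]
      exact (Nat.div_lt_iff_lt_mul (Nat.pos_of_ne_zero hm0)).mpr (by rw [Nat.mul_comm]; exact hslt)
    omega
  -- real versions
  have hLM : (l : ℝ) * m ≤ s := by exact_mod_cast hlm
  have hS1 : (s : ℝ) ≤ ((l : ℝ) + 1) * m := by exact_mod_cast hsl1.le
  have hLD : (l : ℝ) + 1 ≤ d := by exact_mod_cast hld
  have hSMD : (s : ℝ) ≤ m * d := by exact_mod_cast hsle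
  have hS0 : (0 : ℝ) ≤ s := Nat.cast_nonneg s
  have hL0 : (0 : ℝ) ≤ l := Nat.cast_nonneg l
  have hMD : (0 : ℝ) < (m : ℝ) * d := by positivity
  have hMD2 : (0 : ℝ) < (m : ℝ) * (d : ℝ) ^ 2 := by positivity
  set μ : ℝ := (s : ℝ) / (m * d) with hμdef
  set α : ℝ := ((2 * (l : ℝ) + 1) * s - l * (l + 1) * m) / (m * (d : ℝ) ^ 2) with hαdef
  clear_value μ α
  -- bounds for P2 of a set X with the same sum s and cardinality m
  have key : ∀ X : Finset V, (∀ v, degIn G X v ≤ d) → (∑ v ∈ X, degIn G X v) = s →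
      X.card = m → α ≤ P2 G d X ∧ P2 G d X ≤ μ := by
    intro X hX hXs hXc
    have hcast : (∑ v ∈ X, (degIn G X v : ℝ)) = s := by
      rw [← hXs]; push_cast; rfl
    have hA1 : ∑ v ∈ X, (degIn G X v : ℝ) ^ 2 ≤ (d : ℝ) * s := by
      calc ∑ v ∈ X, (degIn G X v : ℝ) ^ 2 ≤ ∑ v ∈ X, (d : ℝ) * (degIn G X v : ℝ) := by
            refine Finset.sum_le_sum fun v _ => ?_
            have h1 : (degIn G X v : ℝ) ≤ d := by exact_mod_cast hX v
            have h2 : (0 : ℝ) ≤ (degIn G X v : ℝ) := Nat.cast_nonneg _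
            nlinarith
      _ = (d : ℝ) * s := by rw [← mul_sum, hcast]
    have hA2 : (2 * (l : ℝ) + 1) * s - l * (l + 1) * m ≤ ∑ v ∈ X, (degIn G X v : ℝ) ^ 2 := by
      have hnn : (0 : ℝ) ≤ ∑ v ∈ X, ((degIn G X v : ℝ) - l) * ((degIn G X v : ℝ) - l - 1) :=
        Finset.sum_nonneg fun v _ => consec_nonneg _ _
      have hexp : ∑ v ∈ X, ((degIn G X v : ℝ) - l) * ((degIn G X v : ℝ) - l - 1)
          = (∑ v ∈ X, (degIn G X v : ℝ) ^ 2) - (2 * (l : ℝ) + 1) * s + l * (l + 1) * m := by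
        calc ∑ v ∈ X, ((degIn G X v : ℝ) - l) * ((degIn G X v : ℝ) - l - 1)
            = ∑ v ∈ X, ((degIn G X v : ℝ) ^ 2 - (2 * (l : ℝ) + 1) * (degIn G X v : ℝ)
                + (l : ℝ) * (l + 1)) := Finset.sum_congr rfl fun v _ => by ring
        _ = (∑ v ∈ X, (degIn G X v : ℝ) ^ 2) - (2 * (l : ℝ) + 1) * s + l * (l + 1) * m := by
            rw [sum_add_distrib, sum_sub_distrib, ← mul_sum, hcast, sum_const, nsmul_eq_mul, hXc]
            ring
      linarith [hexp ▸ hnn]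
    have hPX : P2 G d X = (∑ v ∈ X, (degIn G X v : ℝ) ^ 2) / (m * (d : ℝ) ^ 2) := by
      unfold P2; rw [hXc]
    constructor
    · rw [hPX, hαdef, div_le_div_iff₀ hMD2 hMD2]
      nlinarith [mul_nonneg (sub_nonneg.mpr hA2) hMD2.le]
    · rw [hPX, hμdef, div_le_div_iff₀ hMD2 hMD]
      nlinarith [mul_nonneg (sub_nonneg.mpr hA1) hMD.le]
  obtain ⟨haα, haμ⟩ := key R hxR hsdef hmdef
  obtain ⟨hbα, hbμ⟩ := key B hxB hsB hBcard
  -- bounds on μ and α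
  have hμ0 : 0 ≤ μ := by rw [hμdef]; exact div_nonneg hS0 hMD.le
  have hμ1 : μ ≤ 1 := by rw [hμdef, div_le_one hMD]; linarith
  have hα0 : 0 ≤ α := by
    rw [hαdef]
    apply div_nonneg _ hMD2.le
    nlinarith [mul_nonneg hL0 (sub_nonneg.mpr hLM), mul_nonneg (mul_nonneg hL0 hL0) hM.le]
  have hαμ : α ≤ μ := by
    rw [hαdef, hμdef, div_le_div_iff₀ hMD2 hMD]
    have hkey : (0 : ℝ) ≤ ((d : ℝ) - l - 1) * s + l * (((l : ℝ) + 1) * m - s) :=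
      add_nonneg (mul_nonneg (by linarith) hS0) (mul_nonneg hL0 (by linarith))
    nlinarith [mul_nonneg hMD.le hkey]
  -- corner points of the hull
  have h00 : ((0 : ℝ), (0 : ℝ)) ∈ convexHull ℝ Spts :=
    hsub ⟨0, Nat.zero_le d, Or.inl (by norm_num)⟩
  have h11 : ((1 : ℝ), (1 : ℝ)) ∈ convexHull ℝ Spts :=
    hsub ⟨d, le_rfl, Or.inl (by rw [div_self hD.ne', Prod.mk.injEq]; norm_num)⟩
  have hdiag : ∀ c : ℝ, 0 ≤ c → c ≤ 1 → ((c, c) : ℝ × ℝ) ∈ convexHull ℝ Spts := by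
    intro c h0 h1
    have hmem := hHconv h00 h11 (by linarith : (0:ℝ) ≤ 1 - c) h0 (by ring)
    have heq : ((1 - c) • (((0:ℝ), (0:ℝ)) : ℝ × ℝ) + c • (((1:ℝ), (1:ℝ)) : ℝ × ℝ)) = (c, c) := by
      rw [Prod.smul_mk, Prod.smul_mk, Prod.mk_add_mk, Prod.mk.injEq]
      constructor <;> simp [smul_eq_mul]
    rwa [heq] at hmem
  have hP0 : (((l : ℝ) / d, ((l : ℝ) / d) ^ 2) : ℝ × ℝ) ∈ convexHull ℝ Spts :=
    hsub ⟨l, by omega, Or.inl rfl⟩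
  have hP1 : ((((l : ℝ) + 1) / d, (((l : ℝ) + 1) / d) ^ 2) : ℝ × ℝ) ∈ convexHull ℝ Spts :=
    hsub ⟨l + 1, hld, Or.inl (by push_cast; rfl)⟩
  have hQ0 : ((((l : ℝ) / d) ^ 2, (l : ℝ) / d) : ℝ × ℝ) ∈ convexHull ℝ Spts :=
    hsub ⟨l, by omega, Or.inr rfl⟩
  have hQ1 : (((((l : ℝ) + 1) / d) ^ 2, ((l : ℝ) + 1) / d) : ℝ × ℝ) ∈ convexHull ℝ Spts :=
    hsub ⟨l + 1, hld, Or.inr (by push_cast; rfl)⟩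
  set t : ℝ := (s : ℝ) / m - l with htdef
  clear_value t
  have h0t : 0 ≤ t := by
    rw [htdef, sub_nonneg, le_div_iff₀ hM]; linarith
  have ht1 : t ≤ 1 := by
    rw [htdef, sub_le_iff_le_add, div_le_iff₀ hM]; nlinarith
  have hμα : ((μ, α) : ℝ × ℝ) ∈ convexHull ℝ Spts := by
    have hmem := hHconv hP0 hP1 (by linarith : (0:ℝ) ≤ 1 - t) h0t (by ring)
    have heq : ((1 - t) • (((l : ℝ) / d, ((l : ℝ) / d) ^ 2) : ℝ × ℝ)
        + t • ((((l : ℝ) + 1) / d, (((l : ℝ) + 1) / d) ^ 2) : ℝ × ℝ)) = (μ, α) := by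
      rw [Prod.smul_mk, Prod.smul_mk, Prod.mk_add_mk, Prod.mk.injEq, htdef, hμdef, hαdef]
      constructor
      · simp only [smul_eq_mul]; field_simp; ring
      · simp only [smul_eq_mul]; field_simp; ring
    rwa [heq] at hmem
  have hαμ' : ((α, μ) : ℝ × ℝ) ∈ convexHull ℝ Spts := by
    have hmem := hHconv hQ0 hQ1 (by linarith : (0:ℝ) ≤ 1 - t) h0t (by ring)
    have heq : ((1 - t) • ((((l : ℝ) / d) ^ 2, (l : ℝ) / d) : ℝ × ℝ)
        + t • (((((l : ℝ) + 1) / d) ^ 2, ((l : ℝ) + 1) / d) : ℝ × ℝ)) = (α, μ) := by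
      rw [Prod.smul_mk, Prod.smul_mk, Prod.mk_add_mk, Prod.mk.injEq, htdef, hμdef, hαdef]
      constructor
      · simp only [smul_eq_mul]; field_simp; ring
      · simp only [smul_eq_mul]; field_simp; ring
    rwa [heq] at hmem
  have hμμ : ((μ, μ) : ℝ × ℝ) ∈ convexHull ℝ Spts := hdiag μ hμ0 hμ1
  have hαα : ((α, α) : ℝ × ℝ) ∈ convexHull ℝ Spts := hdiag α hα0 (hαμ.trans hμ1)
  have hrow1 : ((P2 G d R, α) : ℝ × ℝ) ∈ convexHull ℝ Spts :=
    mem_of_horiz hHconv hαα hμα haα haμ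
  have hrow2 : ((P2 G d R, μ) : ℝ × ℝ) ∈ convexHull ℝ Spts :=
    mem_of_horiz hHconv hαμ' hμμ haα haμ
  exact mem_of_vert hHconv hrow1 hrow2 hbα hbμ
end

section
/- For every m ≥ 2, the set P(T^m) ⊆ ℝ² is convex. -/
open Finset
open scoped Classical

/-- Adjacency in the discrete torus `[k]^m = (ℤ/kℤ)^m`: two vertices are adjacent iff they
differ by `±1 (mod k)` in exactly one coordinate. -/
def torusAdj (m k : ℕ) (x y : Fin m → ZMod k) : Prop :=
  x ≠ y ∧ ∃ j, (y j = x j + 1 ∨ y j = x j - 1) ∧ ∀ i, i ≠ j → y i = x i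

/-- The number of neighbours of `v` lying in `R` in the torus `[k]^m`. -/
noncomputable def torusDegIn (m k : ℕ) (R : Finset (Fin m → ZMod k))
    (v : Fin m → ZMod k) : ℕ :=
  (R.filter (fun w => torusAdj m k v w)).card

/-- `P₂(R)` for the `2m`-regular torus `[k]^m`: the probability that a random walk
started at a uniform vertex of `R` stays in `R` for two steps. -/
noncomputable def torusP2 (m k : ℕ) (R : Finset (Fin m → ZMod k)) : ℝ :=
  (∑ v ∈ R, (torusDegIn m k R v : ℝ) ^ 2) / (R.card * (2 * m) ^ 2)

/-- The set `𝒫(𝒯^m) ⊆ ℝ²`: `(x,y)` belongs to it iff for every `ε > 0` there are a `k`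
(with `k^m` even) and a balanced colouring `(R,B)` of the torus `[k]^m` with
`|P₂(R) − x| < ε` and `|P₂(B) − y| < ε`. -/
def torusP (m : ℕ) : Set (ℝ × ℝ) :=
  { p | ∀ ε > (0 : ℝ), ∃ k : ℕ, 0 < k ∧ Even (k ^ m) ∧
      ∃ R B : Finset (Fin m → ZMod k),
        (∀ v, v ∈ R ∨ v ∈ B) ∧ Disjoint R B ∧ R.card = B.card ∧
        |torusP2 m k R - p.1| < ε ∧ |torusP2 m k B - p.2| < ε }


namespace TorusAux

variable {m : ℕ}

/-- coordinatewise reduction `ZMod k → ZMod k1` via `val`. -/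
def proj (k k1 : ℕ) (c : ZMod k) : ZMod k1 := ((c.val : ℕ) : ZMod k1)

lemma cast_mod_eq {k k1 : ℕ} (h : k1 ∣ k) (n : ℕ) :
    ((n % k : ℕ) : ZMod k1) = (n : ZMod k1) := by
  obtain ⟨q, rfl⟩ := h
  conv_rhs => rw [← Nat.div_add_mod n (k1 * q)]
  push_cast [ZMod.natCast_self]
  ring

lemma natCast_k_eq_zero {k k1 : ℕ} (h : k1 ∣ k) : ((k : ℕ) : ZMod k1) = 0 := by
  obtain ⟨q, rfl⟩ := h
  push_cast [ZMod.natCast_self]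
  ring

lemma proj_add_one {k k1 : ℕ} [NeZero k] (h : k1 ∣ k) (hk : 1 < k) (c : ZMod k) :
    proj k k1 (c + 1) = proj k k1 c + 1 := by
  unfold proj
  rw [ZMod.val_add, ZMod.val_one_eq_one_mod, Nat.mod_eq_of_lt hk, cast_mod_eq h]
  push_cast
  ring

lemma neg_one_eq {k : ℕ} (hk : 1 ≤ k) : (-1 : ZMod k) = ((k - 1 : ℕ) : ZMod k) := by
  have h2 : ((k - 1 : ℕ) : ZMod k) = (k : ZMod k) - 1 := by
    push_cast [Nat.cast_sub hk]
    ring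
  rw [h2, ZMod.natCast_self]
  ring

lemma val_neg_one' {k : ℕ} [NeZero k] (hk : 2 ≤ k) : (-1 : ZMod k).val = k - 1 := by
  rw [neg_one_eq (by omega), ZMod.val_natCast, Nat.mod_eq_of_lt (by omega)]

lemma proj_sub_one {k k1 : ℕ} [NeZero k] (h : k1 ∣ k) (hk : 2 ≤ k) (c : ZMod k) :
    proj k k1 (c + (-1)) = proj k k1 c + (-1) := by
  unfold proj
  rw [ZMod.val_add, val_neg_one' hk, cast_mod_eq h]
  push_cast [Nat.cast_sub (show 1 ≤ k by omega)]
  rw [natCast_k_eq_zero h]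
  ring

lemma val_add_one_of_lt {k : ℕ} [NeZero k] {c : ZMod k} (h : c.val + 1 < k) :
    (c + 1).val = c.val + 1 := by
  rw [ZMod.val_add, ZMod.val_one_eq_one_mod, Nat.mod_eq_of_lt (show 1 < k by omega),
    Nat.mod_eq_of_lt h]

lemma val_sub_one_of_pos {k : ℕ} [NeZero k] (hk : 2 ≤ k) {c : ZMod k} (h : 1 ≤ c.val) :
    (c + (-1)).val = c.val - 1 := by
  have hlt := c.val_lt
  rw [ZMod.val_add, val_neg_one' hk]
  have h2 : c.val + (k - 1) = k + (c.val - 1) := by omega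
  rw [h2, Nat.add_mod_left, Nat.mod_eq_of_lt (by omega)]

/-- the `(j, s)` neighbour of `v`. -/
def nbr {k : ℕ} (v : Fin m → ZMod k) (j : Fin m) (s : Bool) : Fin m → ZMod k :=
  Function.update v j (v j + if s then 1 else -1)

lemma nbr_apply_self {k} (v : Fin m → ZMod k) (j s) :
    nbr v j s j = v j + if s then 1 else -1 :=
  Function.update_self ..

lemma nbr_apply_ne {k} (v : Fin m → ZMod k) (j s) {i} (h : i ≠ j) : nbr v j s i = v i :=
  Function.update_of_ne h _ v

lemma delta_ne_zero {k : ℕ} [NeZero k] (hk : 2 ≤ k) (s : Bool) :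
    (if s then (1 : ZMod k) else -1) ≠ 0 := by
  cases s <;> intro h <;>
    simp only [Bool.false_eq_true, if_true, if_false] at h
  · have h2 := val_neg_one' hk
    rw [h, ZMod.val_zero] at h2
    omega
  · have h2 : (1 : ZMod k).val = 0 := by rw [h, ZMod.val_zero]
    rw [ZMod.val_one_eq_one_mod, Nat.mod_eq_of_lt (by omega)] at h2
    omega

lemma one_ne_negone {k : ℕ} [NeZero k] (hk : 3 ≤ k) : (1 : ZMod k) ≠ -1 := by
  intro h
  have h2 : ((2 : ℕ) : ZMod k) = 0 := by
    have h3 : (1 : ZMod k) + 1 = 0 := by nth_rewrite 1 [h]; ring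
    calc ((2 : ℕ) : ZMod k) = 1 + 1 := by push_cast; ring
      _ = 0 := h3
  rw [ZMod.natCast_eq_zero_iff] at h2
  have := Nat.le_of_dvd (by norm_num) h2
  omega

lemma adj_iff {k : ℕ} [NeZero k] (hk : 2 ≤ k) (v w : Fin m → ZMod k) :
    torusAdj m k v w ↔ ∃ j s, w = nbr v j s := by
  constructor
  · rintro ⟨hne, j, hj, hoff⟩
    rcases hj with h1 | h1
    · exact ⟨j, true, funext fun i => by
        by_cases hij : i = j
        · subst hij; rw [nbr_apply_self]; simpa using h1
        · rw [nbr_apply_ne _ _ _ hij]; exact hoff i hij⟩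
    · exact ⟨j, false, funext fun i => by
        by_cases hij : i = j
        · subst hij; rw [nbr_apply_self]; simpa [sub_eq_add_neg] using h1
        · rw [nbr_apply_ne _ _ _ hij]; exact hoff i hij⟩
  · rintro ⟨j, s, rfl⟩
    refine ⟨?_, j, ?_, fun i hij => nbr_apply_ne _ _ _ hij⟩
    · intro h
      have h2 := congrFun h j
      rw [nbr_apply_self] at h2
      exact delta_ne_zero hk s (by
        have := left_eq_add.mp h2
        exact this)
    · rw [nbr_apply_self]
      cases s
      · right; simp [sub_eq_add_neg]
      · left; simp

lemma nbr_injective {k : ℕ} [NeZero k] (hk : 3 ≤ k) (v : Fin m → ZMod k) :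
    Function.Injective (fun p : Fin m × Bool => nbr v p.1 p.2) := by
  rintro ⟨j, s⟩ ⟨j', s'⟩ h
  simp only at h
  by_cases hjj : j = j'
  · subst hjj
    have h2 := congrFun h j
    rw [nbr_apply_self, nbr_apply_self] at h2
    have hss := add_left_cancel h2
    cases s <;> cases s'
    · rfl
    · exact absurd hss.symm (by simpa using (one_ne_negone hk))
    · exact absurd hss (by simpa using (one_ne_negone hk))
    · rfl
  · exfalso
    have h1 := congrFun h j'
    rw [nbr_apply_self, nbr_apply_ne _ _ _ (fun hc => hjj hc.symm)] at h1
    exact delta_ne_zero (by omega) s' (left_eq_add.mp h1)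

lemma deg_eq_sum {k : ℕ} [NeZero k] (hk : 3 ≤ k) (R : Finset (Fin m → ZMod k))
    (v : Fin m → ZMod k) :
    torusDegIn m k R v = ∑ p : Fin m × Bool, if nbr v p.1 p.2 ∈ R then 1 else 0 := by
  have himg : R.filter (fun w => torusAdj m k v w)
      = (univ.filter (fun p : Fin m × Bool => nbr v p.1 p.2 ∈ R)).image
          (fun p : Fin m × Bool => nbr v p.1 p.2) := by
    ext w
    simp only [mem_filter, mem_image, mem_univ, true_and]
    constructor
    · rintro ⟨hwR, hadj⟩
      obtain ⟨j, s, rfl⟩ := (adj_iff (by omega) v w).mp hadj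
      exact ⟨(j, s), hwR, rfl⟩
    · rintro ⟨⟨j, s⟩, hR, rfl⟩
      exact ⟨hR, (adj_iff (by omega) v _).mpr ⟨j, s, rfl⟩⟩
  rw [torusDegIn, himg,
    Finset.card_image_of_injective _ (nbr_injective hk v), Finset.card_filter]

lemma deg_le {k : ℕ} [NeZero k] (hk : 3 ≤ k) (R : Finset (Fin m → ZMod k))
    (v : Fin m → ZMod k) : torusDegIn m k R v ≤ 2 * m := by
  rw [deg_eq_sum hk]
  calc (∑ p : Fin m × Bool, if nbr v p.1 p.2 ∈ R then 1 else 0)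
      ≤ ∑ _p : Fin m × Bool, 1 := Finset.sum_le_sum (fun p _ => by split <;> omega)
    _ = 2 * m := by simp [Finset.card_univ, mul_comm]

lemma nbr_two_eq (u : Fin m → ZMod 2) (j : Fin m) (s : Bool) : nbr u j s = nbr u j true := by
  cases s
  · have hd : (if (false : Bool) then (1 : ZMod 2) else -1)
        = (if (true : Bool) then (1 : ZMod 2) else -1) := by decide
    unfold nbr
    rw [hd]
  · rfl

lemma deg_eq_sum_two (R : Finset (Fin m → ZMod 2)) (u : Fin m → ZMod 2) :
    torusDegIn m 2 R u = ∑ j : Fin m, if nbr u j true ∈ R then 1 else 0 := by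
  have himg : R.filter (fun w => torusAdj m 2 u w)
      = (univ.filter (fun j : Fin m => nbr u j true ∈ R)).image
          (fun j : Fin m => nbr u j true) := by
    ext w
    simp only [mem_filter, mem_image, mem_univ, true_and]
    constructor
    · rintro ⟨hwR, hadj⟩
      obtain ⟨j, s, rfl⟩ := (adj_iff (by omega) u w).mp hadj
      rw [nbr_two_eq]
      exact ⟨j, by rwa [nbr_two_eq] at hwR, rfl⟩
    · rintro ⟨j, hR, rfl⟩
      exact ⟨hR, (adj_iff (by omega) u _).mpr ⟨j, true, rfl⟩⟩
  have hinj : Function.Injective (fun j : Fin m => nbr u j true) := by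
    intro j j' h
    by_contra hjj
    replace h : nbr u j true = nbr u j' true := h
    have h1 := congrFun h j'
    rw [nbr_apply_self, nbr_apply_ne _ _ _ (fun hc => hjj hc.symm)] at h1
    exact delta_ne_zero (by omega) true (left_eq_add.mp h1)
  rw [torusDegIn, himg, Finset.card_image_of_injective _ hinj, Finset.card_filter]

lemma deg_le_two (R : Finset (Fin m → ZMod 2)) (u : Fin m → ZMod 2) :
    torusDegIn m 2 R u ≤ m := by
  rw [deg_eq_sum_two]
  calc (∑ j : Fin m, if nbr u j true ∈ R then 1 else 0)
      ≤ ∑ _j : Fin m, 1 := Finset.sum_le_sum (fun p _ => by split <;> omega)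
    _ = m := by simp

end TorusAux

namespace TorusAux

lemma nat_count {k1 c r : ℕ} (hk1 : 0 < k1) (hr : r < k1) :
    ((Finset.range (k1 * c)).filter (fun n => n % k1 = r)).card = c := by
  have e : ((Finset.range (k1 * c)).filter (fun n => n % k1 = r)).card
      = (Finset.range c).card := by
    apply Finset.card_nbij' (fun n => n / k1) (fun t => k1 * t + r)
    · intro a ha
      simp only [Finset.mem_coe, Finset.mem_filter, Finset.mem_range] at ha
      exact Finset.mem_range.mpr ((Nat.div_lt_iff_lt_mul hk1).mpr (by
        rw [mul_comm]; exact ha.1))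
    · intro t ht
      simp only [Finset.mem_coe, Finset.mem_range] at ht
      simp only [Finset.mem_coe, Finset.mem_filter, Finset.mem_range]
      constructor
      · have h1 : k1 * t + r < k1 * (t + 1) := by rw [Nat.mul_succ]; omega
        have h2 : k1 * (t + 1) ≤ k1 * c := Nat.mul_le_mul_left _ (by omega)
        omega
      · rw [Nat.mul_add_mod, Nat.mod_eq_of_lt hr]
    · intro a ha
      simp only [Finset.mem_coe, Finset.mem_filter, Finset.mem_range] at ha
      rw [← ha.2]
      exact Nat.div_add_mod a k1
    · intro t _
      dsimp only; rw [Nat.mul_add_div hk1, Nat.div_eq_of_lt hr, add_zero]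
  rw [e, Finset.card_range]

lemma proj_eq_iff {k k1 : ℕ} [NeZero k] [NeZero k1] (x : ZMod k) (b : ZMod k1) :
    proj k k1 x = b ↔ x.val % k1 = b.val := by
  constructor
  · intro hx
    rw [← hx]
    unfold proj
    rw [ZMod.val_natCast]
  · intro hx
    unfold proj
    have h1 : ((x.val : ℕ) : ZMod k1) = ((x.val % k1 : ℕ) : ZMod k1) :=
      (ZMod.natCast_mod _ _).symm
    rw [h1, hx, ZMod.natCast_rightInverse b]

lemma zcount {k k1 : ℕ} [NeZero k] [NeZero k1] {a c : ℕ} (ha : a = k1 * c)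
    (hak : a ≤ k) (b : ZMod k1) :
    ((Finset.univ : Finset (ZMod k)).filter
      (fun x => x.val < a ∧ proj k k1 x = b)).card = c := by
  have hb := b.val_lt
  have hk1 : 0 < k1 := Nat.pos_of_ne_zero (NeZero.ne k1)
  have e : ((Finset.univ : Finset (ZMod k)).filter
        (fun x => x.val < a ∧ proj k k1 x = b)).card
      = ((Finset.range (k1 * c)).filter (fun n => n % k1 = b.val)).card := by
    rw [← ha]
    apply Finset.card_nbij' (fun x : ZMod k => x.val) (fun n : ℕ => (n : ZMod k))
    · intro x hx
      simp only [Finset.mem_coe, Finset.mem_filter, Finset.mem_univ, true_and, proj_eq_iff] at hx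
      simp only [Finset.mem_coe, Finset.mem_filter, Finset.mem_range]
      exact ⟨hx.1, hx.2⟩
    · intro n hn
      simp only [Finset.mem_coe, Finset.mem_filter, Finset.mem_range] at hn
      simp only [Finset.mem_coe, Finset.mem_filter, Finset.mem_univ, true_and, proj_eq_iff]
      rw [ZMod.val_natCast, Nat.mod_eq_of_lt (by omega)]
      exact ⟨hn.1, hn.2⟩
    · intro x _
      exact ZMod.natCast_rightInverse x
    · intro n hn
      simp only [Finset.mem_coe, Finset.mem_filter, Finset.mem_range] at hn
      dsimp only; rw [ZMod.val_natCast, Nat.mod_eq_of_lt (by omega)]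
  rw [e, nat_count hk1 hb]

lemma zcount_total {k k1 q : ℕ} [NeZero k] [NeZero k1] (hq : k = k1 * q)
    (b : ZMod k1) :
    ((Finset.univ : Finset (ZMod k)).filter (fun x => proj k k1 x = b)).card = q := by
  have h2 : (Finset.univ.filter (fun x : ZMod k => proj k k1 x = b))
      = Finset.univ.filter (fun x : ZMod k => x.val < k ∧ proj k k1 x = b) := by
    ext x
    simp [x.val_lt]
  rw [h2, zcount hq (le_refl k) b]

lemma zcount_ge {k k1 q a c : ℕ} [NeZero k] [NeZero k1] (hq : k = k1 * q)
    (ha : a = k1 * c) (hak : a ≤ k) (b : ZMod k1) :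
    ((Finset.univ : Finset (ZMod k)).filter
      (fun x => ¬ x.val < a ∧ proj k k1 x = b)).card = q - c := by
  have h1 := zcount (k := k) ha hak b
  have h2 := zcount_total hq b
  have h3 := Finset.card_filter_add_card_filter_not
    (s := Finset.univ.filter (fun x : ZMod k => proj k k1 x = b))
    (p := fun x => x.val < a)
  simp only [Finset.filter_filter] at h3
  have e1 : (Finset.univ.filter (fun x : ZMod k => proj k k1 x = b ∧ x.val < a))
      = Finset.univ.filter (fun x : ZMod k => x.val < a ∧ proj k k1 x = b) := by
    ext x; simp [and_comm]
  have e2 : (Finset.univ.filter (fun x : ZMod k => proj k k1 x = b ∧ ¬ x.val < a))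
      = Finset.univ.filter (fun x : ZMod k => ¬ x.val < a ∧ proj k k1 x = b) := by
    ext x; simp [and_comm]
  rw [e1, e2, h1, h2] at h3
  omega

lemma filter_eq_piFinset {m k : ℕ} [NeZero m] [NeZero k]
    (s : ∀ _ : Fin m, Finset (ZMod k)) :
    (Finset.univ : Finset (Fin m → ZMod k)).filter (fun x => ∀ i, x i ∈ s i)
      = Fintype.piFinset s := by
  ext x
  simp [Fintype.mem_piFinset]

lemma fiber_card {m k k1 q : ℕ} [NeZero m] [NeZero k] [NeZero k1]
    (hq : k = k1 * q) (c : ZMod k) (u : Fin m → ZMod k1) :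
    ((Finset.univ : Finset (Fin m → ZMod k)).filter
        (fun x => x 0 = c ∧ (fun i => proj k k1 (x i)) = u)).card
      = if proj k k1 c = u 0 then q ^ (m - 1) else 0 := by
  classical
  set s : ∀ _ : Fin m, Finset (ZMod k) := fun i =>
    if i = 0 then Finset.univ.filter (fun t => t = c ∧ proj k k1 t = u i)
    else Finset.univ.filter (fun t => proj k k1 t = u i) with hs
  have hs0 : s 0 = Finset.univ.filter (fun t => t = c ∧ proj k k1 t = u 0) := by
    simp [hs]
  have hsi : ∀ i : Fin m, i ≠ 0 → s i = Finset.univ.filter (fun t => proj k k1 t = u i) := by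
    intro i hi
    simp [hs, hi]
  have hset : (Finset.univ : Finset (Fin m → ZMod k)).filter
      (fun x => x 0 = c ∧ (fun i => proj k k1 (x i)) = u)
      = (Finset.univ : Finset (Fin m → ZMod k)).filter (fun x => ∀ i, x i ∈ s i) := by
    ext x
    simp only [Finset.mem_filter, Finset.mem_univ, true_and, funext_iff]
    constructor
    · rintro ⟨h0, hu⟩ i
      by_cases hi : i = 0
      · subst hi
        rw [hs0]
        simp only [Finset.mem_filter, Finset.mem_univ, true_and]
        exact ⟨h0, hu 0⟩
      · rw [hsi i hi]
        simp only [Finset.mem_filter, Finset.mem_univ, true_and]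
        exact hu i
    · intro hx
      have h0 := hx 0
      rw [hs0] at h0
      simp only [Finset.mem_filter, Finset.mem_univ, true_and] at h0
      refine ⟨h0.1, fun i => ?_⟩
      by_cases hi : i = 0
      · subst hi; exact h0.2
      · have hxi := hx i
        rw [hsi i hi] at hxi
        simp only [Finset.mem_filter, Finset.mem_univ, true_and] at hxi
        exact hxi
  rw [hset, filter_eq_piFinset, Fintype.card_piFinset]
  have h0mem : (0 : Fin m) ∈ (Finset.univ : Finset (Fin m)) := Finset.mem_univ _
  rw [← Finset.mul_prod_erase Finset.univ _ h0mem]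
  have hcard0 : (s 0).card = if proj k k1 c = u 0 then 1 else 0 := by
    rw [hs0]
    by_cases hh : proj k k1 c = u 0
    · rw [if_pos hh]
      have e : Finset.univ.filter (fun t : ZMod k => t = c ∧ proj k k1 t = u 0) = {c} := by
        ext t
        simp only [Finset.mem_filter, Finset.mem_univ, true_and, Finset.mem_singleton]
        constructor
        · exact fun ht => ht.1
        · rintro rfl; exact ⟨rfl, hh⟩
      rw [e, Finset.card_singleton]
    · rw [if_neg hh]
      have e : Finset.univ.filter (fun t : ZMod k => t = c ∧ proj k k1 t = u 0) = ∅ := by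
        ext t
        simp only [Finset.mem_filter, Finset.mem_univ, true_and, Finset.notMem_empty,
          iff_false, not_and]
        rintro rfl
        exact hh
      rw [e, Finset.card_empty]
  have hcardi : ∀ i ∈ Finset.univ.erase (0 : Fin m), (s i).card = q := by
    intro i hi
    have hi0 : i ≠ 0 := (Finset.mem_erase.mp hi).1
    rw [hsi i hi0]
    exact zcount_total hq (u i)
  rw [Finset.prod_congr rfl hcardi, Finset.prod_const, hcard0]
  have hcarde : (Finset.univ.erase (0 : Fin m)).card = m - 1 := by
    rw [Finset.card_erase_of_mem h0mem, Finset.card_univ, Fintype.card_fin]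
  rw [hcarde]
  split <;> ring

end TorusAux

namespace TorusAux

open Finset

lemma sum_comp_univ {α γ : Type*} [Fintype α] [Fintype γ] [DecidableEq γ] (F : α → γ)
    (g : γ → ℝ) :
    ∑ x : α, g (F x) = ∑ y : γ, ((univ.filter (fun x => F x = y)).card : ℝ) * g y := by
  calc ∑ x : α, g (F x) = ∑ x : α, ∑ y : γ, if F x = y then g y else 0 := by
        apply Finset.sum_congr rfl
        intro x _
        rw [Finset.sum_ite_eq univ (F x) g]
        simp
    _ = ∑ y : γ, ∑ x : α, if F x = y then g y else 0 := Finset.sum_comm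
    _ = _ := by
        apply Finset.sum_congr rfl
        intro y _
        rw [← Finset.sum_filter, Finset.sum_const, nsmul_eq_mul]

lemma sum_proj {m k k1 q : ℕ} [NeZero m] [NeZero k] [NeZero k1] (hq : k = k1 * q)
    (g : ZMod k → (Fin m → ZMod k1) → ℝ) :
    ∑ x : Fin m → ZMod k, g (x 0) (fun i => proj k k1 (x i))
      = (q : ℝ) ^ (m - 1) * ∑ c : ZMod k, ∑ u : Fin m → ZMod k1,
          (if proj k k1 c = u 0 then g c u else 0) := by
  have h1 := sum_comp_univ
    (fun x : Fin m → ZMod k => ((x 0, fun i => proj k k1 (x i)) : ZMod k × (Fin m → ZMod k1)))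
    (fun y => g y.1 y.2)
  simp only at h1
  rw [h1, Fintype.sum_prod_type, Finset.mul_sum]
  apply Finset.sum_congr rfl
  intro c _
  rw [Finset.mul_sum]
  apply Finset.sum_congr rfl
  intro u _
  have h2 : (univ.filter
        (fun x : Fin m → ZMod k => (x 0, fun i => proj k k1 (x i))
          = ((c, u) : ZMod k × (Fin m → ZMod k1)))).card
      = if proj k k1 c = u 0 then q ^ (m - 1) else 0 := by
    rw [← fiber_card hq c u]
    congr 1
    ext x
    simp [Prod.ext_iff]
  rw [h2]
  split
  · push_cast; ring
  · push_cast; ring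

lemma sum_region1 {m k k1 q a c : ℕ} [NeZero m] [NeZero k] [NeZero k1]
    (hq : k = k1 * q) (ha : a = k1 * c) (hak : a ≤ k) (f : (Fin m → ZMod k1) → ℝ) :
    ∑ x : Fin m → ZMod k, (if (x 0).val < a then f (fun i => proj k k1 (x i)) else 0)
      = (c : ℝ) * (q : ℝ) ^ (m - 1) * ∑ u, f u := by
  have h1 := sum_proj hq (g := fun (cc : ZMod k) u => if cc.val < a then f u else 0)
  rw [h1, Finset.sum_comm]
  have inner : ∀ u : Fin m → ZMod k1,
      (∑ cc : ZMod k, if proj k k1 cc = u 0 then (if cc.val < a then f u else 0) else 0)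
        = (c : ℝ) * f u := by
    intro u
    have h2 : ∀ cc : ZMod k,
        (if proj k k1 cc = u 0 then (if cc.val < a then f u else 0) else 0)
          = if (cc.val < a ∧ proj k k1 cc = u 0) then f u else 0 := by
      intro cc
      split_ifs <;> first | rfl | tauto
    rw [Finset.sum_congr rfl (fun cc _ => h2 cc), ← Finset.sum_filter, Finset.sum_const,
      nsmul_eq_mul, zcount ha hak (u 0)]
  rw [Finset.sum_congr rfl (fun u _ => inner u), ← Finset.mul_sum]
  ring

lemma sum_region2 {m k k1 q a c : ℕ} [NeZero m] [NeZero k] [NeZero k1]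
    (hq : k = k1 * q) (ha : a = k1 * c) (hak : a ≤ k) (f : (Fin m → ZMod k1) → ℝ) :
    ∑ x : Fin m → ZMod k, (if (x 0).val < a then 0 else f (fun i => proj k k1 (x i)))
      = ((q - c : ℕ) : ℝ) * (q : ℝ) ^ (m - 1) * ∑ u, f u := by
  have h1 := sum_proj hq (g := fun (cc : ZMod k) u => if cc.val < a then 0 else f u)
  rw [h1, Finset.sum_comm]
  have inner : ∀ u : Fin m → ZMod k1,
      (∑ cc : ZMod k, if proj k k1 cc = u 0 then (if cc.val < a then 0 else f u) else 0)
        = ((q - c : ℕ) : ℝ) * f u := by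
    intro u
    have h2 : ∀ cc : ZMod k,
        (if proj k k1 cc = u 0 then (if cc.val < a then 0 else f u) else 0)
          = if (¬ cc.val < a ∧ proj k k1 cc = u 0) then f u else 0 := by
      intro cc
      split_ifs <;> first | rfl | tauto
    rw [Finset.sum_congr rfl (fun cc _ => h2 cc), ← Finset.sum_filter, Finset.sum_const,
      nsmul_eq_mul, zcount_ge hq ha hak (u 0)]
  rw [Finset.sum_congr rfl (fun u _ => inner u), ← Finset.mul_sum]
  ring

lemma slice_card {m k : ℕ} [NeZero m] [NeZero k] (c : ZMod k) :
    ((univ : Finset (Fin m → ZMod k)).filter (fun x => x 0 = c)).card = k ^ (m - 1) := by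
  have h := fiber_card (m := m) (k := k) (k1 := 1) (q := k) (one_mul k).symm c (fun _ => 0)
  have he : ((univ : Finset (Fin m → ZMod k)).filter
        (fun x => x 0 = c ∧ (fun i => proj k 1 (x i)) = (fun _ => 0)))
      = (univ : Finset (Fin m → ZMod k)).filter (fun x => x 0 = c) := by
    ext x
    simp only [Finset.mem_filter, Finset.mem_univ, true_and, and_iff_left_iff_imp]
    intro _
    exact Subsingleton.elim _ _
  rw [he] at h
  rw [h, if_pos (Subsingleton.elim _ _)]

end TorusAux

namespace TorusAux

open Finset

variable {m : ℕ}

/-- The mixed colouring: pattern `R1` (pulled back mod `k1`) where the first coordinate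
has value `< a`, pattern `R2` (pulled back mod `k2`) elsewhere. -/
noncomputable def mix (m k k1 k2 a : ℕ) [NeZero m] [NeZero k]
    (R1 : Finset (Fin m → ZMod k1)) (R2 : Finset (Fin m → ZMod k2)) :
    Finset (Fin m → ZMod k) :=
  Finset.univ.filter fun x => if (x 0).val < a then (fun i => proj k k1 (x i)) ∈ R1
    else (fun i => proj k k2 (x i)) ∈ R2

lemma mem_mix {k k1 k2 a : ℕ} [NeZero m] [NeZero k]
    {R1 : Finset (Fin m → ZMod k1)} {R2 : Finset (Fin m → ZMod k2)}
    {x : Fin m → ZMod k} :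
    x ∈ mix m k k1 k2 a R1 R2
      ↔ (if (x 0).val < a then (fun i => proj k k1 (x i)) ∈ R1
          else (fun i => proj k k2 (x i)) ∈ R2) := by
  simp [mix]

lemma proj_nbr {k k1 : ℕ} [NeZero k] (h : k1 ∣ k) (hk : 2 ≤ k) (v : Fin m → ZMod k)
    (j : Fin m) (s : Bool) :
    (fun i => proj k k1 (nbr v j s i)) = nbr (fun i => proj k k1 (v i)) j s := by
  funext i
  by_cases hi : i = j
  · subst hi
    rw [nbr_apply_self, nbr_apply_self]
    cases s
    · simpa using proj_sub_one h hk (v i)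
    · simpa using proj_add_one h (by omega) (v i)
  · rw [nbr_apply_ne _ _ _ hi, nbr_apply_ne _ _ _ hi]

lemma sum_nbr_eq {k1 e1 : ℕ} [NeZero k1]
    (he : (e1 = 1 ∧ 3 ≤ k1) ∨ (e1 = 2 ∧ k1 = 2))
    (R1 : Finset (Fin m → ZMod k1)) (u : Fin m → ZMod k1) :
    (∑ p : Fin m × Bool, if nbr u p.1 p.2 ∈ R1 then 1 else 0)
      = e1 * torusDegIn m k1 R1 u := by
  rcases he with ⟨he, hk1⟩ | ⟨he, hk1⟩
  · subst he
    rw [one_mul, deg_eq_sum hk1]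
  · subst he hk1
    rw [deg_eq_sum_two, Fintype.sum_prod_type, Finset.mul_sum]
    apply Finset.sum_congr rfl
    intro j _
    rw [Fintype.sum_bool]
    rw [nbr_two_eq u j false]
    split <;> ring

lemma deg_mix_lt {k k1 k2 a e1 : ℕ} [NeZero m] [NeZero k] [NeZero k1]
    (hk : 3 ≤ k) (h1 : k1 ∣ k)
    (he : (e1 = 1 ∧ 3 ≤ k1) ∨ (e1 = 2 ∧ k1 = 2))
    (R1 : Finset (Fin m → ZMod k1)) (R2 : Finset (Fin m → ZMod k2))
    (v : Fin m → ZMod k) (hak : a ≤ k)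
    (hv1 : 1 ≤ (v 0).val) (hv2 : (v 0).val + 2 ≤ a) :
    torusDegIn m k (mix m k k1 k2 a R1 R2) v
      = e1 * torusDegIn m k1 R1 (fun i => proj k k1 (v i)) := by
  have hvlt := (v 0).val_lt
  have hmem : ∀ (j : Fin m) (s : Bool),
      (nbr v j s ∈ mix m k k1 k2 a R1 R2)
        ↔ nbr (fun i => proj k k1 (v i)) j s ∈ R1 := by
    intro j s
    have hval : (nbr v j s 0).val < a := by
      by_cases hj : (0 : Fin m) = j
      · subst hj
        rw [nbr_apply_self]
        cases s
        · have hv' : (v 0 + (if false then (1 : ZMod k) else -1)).val = (v 0).val - 1 := by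
            simpa using val_sub_one_of_pos (by omega) hv1
          omega
        · have hv' : (v 0 + (if true then (1 : ZMod k) else -1)).val = (v 0).val + 1 := by
            simpa using val_add_one_of_lt (by omega)
          omega
      · rw [nbr_apply_ne _ _ _ hj]
        omega
    rw [mem_mix, if_pos hval, proj_nbr h1 (by omega)]
  rw [deg_eq_sum hk, ← sum_nbr_eq he R1]
  apply Finset.sum_congr rfl
  intro p _
  by_cases hp : nbr v p.1 p.2 ∈ mix m k k1 k2 a R1 R2
  · rw [if_pos hp, if_pos ((hmem p.1 p.2).mp hp)]
  · rw [if_neg hp, if_neg (fun hc => hp ((hmem p.1 p.2).mpr hc))]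

lemma deg_mix_ge {k k1 k2 a e2 : ℕ} [NeZero m] [NeZero k] [NeZero k2]
    (hk : 3 ≤ k) (h2 : k2 ∣ k)
    (he : (e2 = 1 ∧ 3 ≤ k2) ∨ (e2 = 2 ∧ k2 = 2))
    (R1 : Finset (Fin m → ZMod k1)) (R2 : Finset (Fin m → ZMod k2))
    (v : Fin m → ZMod k)
    (hv1 : a < (v 0).val) (hv2 : (v 0).val + 2 ≤ k) :
    torusDegIn m k (mix m k k1 k2 a R1 R2) v
      = e2 * torusDegIn m k2 R2 (fun i => proj k k2 (v i)) := by
  have hmem : ∀ (j : Fin m) (s : Bool),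
      (nbr v j s ∈ mix m k k1 k2 a R1 R2)
        ↔ nbr (fun i => proj k k2 (v i)) j s ∈ R2 := by
    intro j s
    have hval : ¬ (nbr v j s 0).val < a := by
      by_cases hj : (0 : Fin m) = j
      · subst hj
        rw [nbr_apply_self]
        cases s
        · have hv' : (v 0 + (if false then (1 : ZMod k) else -1)).val = (v 0).val - 1 := by
            simpa using val_sub_one_of_pos (show 2 ≤ k by omega) (show 1 ≤ (v 0).val by omega)
          omega
        · have hv' : (v 0 + (if true then (1 : ZMod k) else -1)).val = (v 0).val + 1 := by
            simpa using val_add_one_of_lt (show (v 0).val + 1 < k by omega)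
          omega
      · rw [nbr_apply_ne _ _ _ hj]
        omega
    rw [mem_mix, if_neg hval, proj_nbr h2 (by omega)]
  rw [deg_eq_sum hk, ← sum_nbr_eq he R2]
  apply Finset.sum_congr rfl
  intro p _
  by_cases hp : nbr v p.1 p.2 ∈ mix m k k1 k2 a R1 R2
  · rw [if_pos hp, if_pos ((hmem p.1 p.2).mp hp)]
  · rw [if_neg hp, if_neg (fun hc => hp ((hmem p.1 p.2).mpr hc))]

end TorusAux

namespace TorusAux

open Finset

variable {m : ℕ}

lemma e_deg_le {k1 e1 : ℕ} [NeZero k1]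
    (he : (e1 = 1 ∧ 3 ≤ k1) ∨ (e1 = 2 ∧ k1 = 2))
    (R1 : Finset (Fin m → ZMod k1)) (u : Fin m → ZMod k1) :
    e1 * torusDegIn m k1 R1 u ≤ 2 * m := by
  rcases he with ⟨he, hk1⟩ | ⟨he, hk1⟩
  · subst he
    rw [one_mul]
    exact deg_le hk1 R1 u
  · subst he hk1
    have := deg_le_two R1 u
    omega

lemma cast_indicator_sum {α : Type*} [Fintype α] [DecidableEq α] (R : Finset α) :
    ∑ u : α, (if u ∈ R then (1 : ℝ) else 0) = R.card := by
  rw [← Finset.sum_filter]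
  rw [Finset.filter_univ_mem]
  simp

lemma filter_indicator_sum {α : Type*} [Fintype α] [DecidableEq α] (R : Finset α) (f : α → ℝ) :
    ∑ u : α, (if u ∈ R then f u else 0) = ∑ u ∈ R, f u := by
  rw [← Finset.sum_filter, Finset.filter_univ_mem]

lemma nat_mul_sub (k1 N A : ℕ) (hA : A ≤ N) : k1 * N - k1 * A = k1 * (N - A) := by
  obtain ⟨d, rfl⟩ : ∃ d, N = A + d := ⟨N - A, by omega⟩
  rw [Nat.add_sub_cancel_left, Nat.mul_add]
  omega

lemma mix_card {k k1 k2 N A a : ℕ} [NeZero m] [NeZero k] [NeZero k1] [NeZero k2]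
    (hk : k = k1 * k2 * N) (ha : a = k1 * k2 * A) (hA : A ≤ N)
    (R1 : Finset (Fin m → ZMod k1)) (R2 : Finset (Fin m → ZMod k2)) :
    ((mix m k k1 k2 a R1 R2).card : ℝ)
      = ((k2 * A : ℕ) : ℝ) * ((k2 * N : ℕ) : ℝ) ^ (m - 1) * R1.card
        + ((k1 * (N - A) : ℕ) : ℝ) * ((k1 * N : ℕ) : ℝ) ^ (m - 1) * R2.card := by
  have hak : a ≤ k := by
    rw [hk, ha]; exact Nat.mul_le_mul_left _ hA
  have h0 : (mix m k k1 k2 a R1 R2).card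
      = ∑ x : Fin m → ZMod k, if (if (x 0).val < a then (fun i => proj k k1 (x i)) ∈ R1
          else (fun i => proj k k2 (x i)) ∈ R2) then 1 else 0 :=
    Finset.card_filter _ _
  have h1 : ((mix m k k1 k2 a R1 R2).card : ℝ)
      = ∑ x : Fin m → ZMod k, if (if (x 0).val < a then (fun i => proj k k1 (x i)) ∈ R1
          else (fun i => proj k k2 (x i)) ∈ R2) then (1 : ℝ) else 0 := by
    rw [h0, Nat.cast_sum]
    apply Finset.sum_congr rfl
    intro x _
    split_ifs <;> simp
  rw [h1]
  have hsplit : ∀ x : Fin m → ZMod k,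
      (if (if (x 0).val < a then (fun i => proj k k1 (x i)) ∈ R1
          else (fun i => proj k k2 (x i)) ∈ R2) then (1 : ℝ) else 0)
      = (if (x 0).val < a then (if (fun i => proj k k1 (x i)) ∈ R1 then (1:ℝ) else 0) else 0)
        + (if (x 0).val < a then 0
            else (if (fun i => proj k k2 (x i)) ∈ R2 then (1:ℝ) else 0)) := by
    intro x
    split_ifs <;> norm_num
  rw [Finset.sum_congr rfl (fun x _ => hsplit x), Finset.sum_add_distrib]
  rw [sum_region1 (q := k2 * N) (c := k2 * A) (by rw [hk]; ring) (by rw [ha]; ring) hak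
    (fun u => if u ∈ R1 then (1:ℝ) else 0)]
  rw [sum_region2 (q := k1 * N) (c := k1 * A) (by rw [hk]; ring) (by rw [ha]; ring) hak
    (fun u => if u ∈ R2 then (1:ℝ) else 0)]
  rw [cast_indicator_sum, cast_indicator_sum, nat_mul_sub k1 N A hA]

lemma bad_card {k a : ℕ} [NeZero m] [NeZero k] :
    ((univ : Finset (Fin m → ZMod k)).filter
      (fun x => (x 0).val = 0 ∨ (x 0).val + 1 = a ∨ (x 0).val = a ∨ (x 0).val + 1 = k)).card
      ≤ 4 * k ^ (m - 1) := by
  classical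
  set C : Finset (ZMod k) :=
    {(0 : ZMod k), ((a - 1 : ℕ) : ZMod k), ((a : ℕ) : ZMod k), ((k - 1 : ℕ) : ZMod k)} with hC
  have hsub : (univ : Finset (Fin m → ZMod k)).filter
        (fun x => (x 0).val = 0 ∨ (x 0).val + 1 = a ∨ (x 0).val = a ∨ (x 0).val + 1 = k)
      ⊆ univ.filter (fun x => x 0 ∈ C) := by
    intro x hx
    simp only [Finset.mem_filter, Finset.mem_univ, true_and] at hx ⊢
    have hx0 : ((x 0).val : ZMod k) = x 0 := ZMod.natCast_rightInverse (x 0)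
    rw [hC]
    simp only [Finset.mem_insert, Finset.mem_singleton]
    rcases hx with h | h | h | h
    · left
      rw [← hx0, h]
      simp
    · right; left
      rw [← hx0]
      congr 1
      omega
    · right; right; left
      rw [← hx0, h]
    · right; right; right
      rw [← hx0]
      congr 1
      omega
  have hbu : (univ.filter (fun x : Fin m → ZMod k => x 0 ∈ C))
      = C.biUnion (fun c => univ.filter (fun x : Fin m → ZMod k => x 0 = c)) := by
    ext x
    simp [Finset.mem_biUnion]
  calc ((univ : Finset (Fin m → ZMod k)).filter
        (fun x => (x 0).val = 0 ∨ (x 0).val + 1 = a ∨ (x 0).val = a ∨ (x 0).val + 1 = k)).card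
      ≤ (univ.filter (fun x : Fin m → ZMod k => x 0 ∈ C)).card := Finset.card_le_card hsub
    _ ≤ ∑ c ∈ C, (univ.filter (fun x : Fin m → ZMod k => x 0 = c)).card := by
        rw [hbu]; exact Finset.card_biUnion_le
    _ = ∑ _c ∈ C, k ^ (m - 1) := Finset.sum_congr rfl (fun c _ => slice_card c)
    _ = C.card * k ^ (m - 1) := by rw [Finset.sum_const, smul_eq_mul]
    _ ≤ 4 * k ^ (m - 1) := by
        have hc4 : C.card ≤ 4 := by
          rw [hC]
          apply le_trans (Finset.card_insert_le _ _)
          have := Finset.card_insert_le ((a - 1 : ℕ) : ZMod k)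
            ({((a : ℕ) : ZMod k), ((k - 1 : ℕ) : ZMod k)} : Finset (ZMod k))
          have h2 := Finset.card_insert_le ((a : ℕ) : ZMod k)
            ({((k - 1 : ℕ) : ZMod k)} : Finset (ZMod k))
          simp only [Finset.card_singleton] at this h2 ⊢
          omega
        exact Nat.mul_le_mul_right _ hc4

end TorusAux

namespace TorusAux

open Finset

set_option maxHeartbeats 2000000 in
lemma side {m k k1 k2 N A a e1 e2 : ℕ} [NeZero m] [NeZero k] [NeZero k1] [NeZero k2]
    (hm : 2 ≤ m) (hk : k = k1 * k2 * N) (ha : a = k1 * k2 * A)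
    (he1 : (e1 = 1 ∧ 3 ≤ k1) ∨ (e1 = 2 ∧ k1 = 2))
    (he2 : (e2 = 1 ∧ 3 ≤ k2) ∨ (e2 = 2 ∧ k2 = 2))
    (hN : 0 < N) (hA : A ≤ N)
    (R1 : Finset (Fin m → ZMod k1)) (R2 : Finset (Fin m → ZMod k2))
    (hs1 : 2 * R1.card = k1 ^ m) (hs2 : 2 * R2.card = k2 ^ m) :
    |torusP2 m k (mix m k k1 k2 a R1 R2)
        - (((A : ℝ) / N) * (e1 : ℝ) ^ 2 * torusP2 m k1 R1
          + (((N - A : ℕ) : ℝ) / N) * (e2 : ℝ) ^ 2 * torusP2 m k2 R2)| ≤ 16 / k := by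
  classical
  have hk1p : 2 ≤ k1 := by rcases he1 with ⟨_, h⟩ | ⟨_, h⟩ <;> omega
  have hk2p : 2 ≤ k2 := by rcases he2 with ⟨_, h⟩ | ⟨_, h⟩ <;> omega
  have hk3 : 3 ≤ k := by
    have h4 : 2 * 2 ≤ k1 * k2 := Nat.mul_le_mul hk1p hk2p
    have h5 : (k1 * k2) * 1 ≤ (k1 * k2) * N := Nat.mul_le_mul_left _ hN
    omega
  have hdvd1 : k1 ∣ k := ⟨k2 * N, by rw [hk]; ring⟩
  have hdvd2 : k2 ∣ k := ⟨k1 * N, by rw [hk]; ring⟩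
  have hak : a ≤ k := by rw [hk, ha]; exact Nat.mul_le_mul_left _ hA
  have hmR : (0:ℝ) < (m:ℝ) := by exact_mod_cast (show 0 < m by omega)
  have hkR : (0:ℝ) < (k:ℝ) := by exact_mod_cast (show 0 < k by omega)
  have hNR : (0:ℝ) < (N:ℝ) := by exact_mod_cast hN
  have hk1R : (0:ℝ) < (k1:ℝ) := by exact_mod_cast (show 0 < k1 by omega)
  have hk2R : (0:ℝ) < (k2:ℝ) := by exact_mod_cast (show 0 < k2 by omega)
  have hwpos : (0:ℝ) < (2 * (m:ℝ)) ^ 2 := by positivity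
  -- the two pointwise summand functions
  set F : (Fin m → ZMod k) → ℝ := fun x =>
    if (if (x 0).val < a then (fun i => proj k k1 (x i)) ∈ R1
        else (fun i => proj k k2 (x i)) ∈ R2)
    then (torusDegIn m k (mix m k k1 k2 a R1 R2) x : ℝ) ^ 2 else 0 with hF
  set G : (Fin m → ZMod k) → ℝ := fun x =>
    if (x 0).val < a then
      (if (fun i => proj k k1 (x i)) ∈ R1
        then ((e1 : ℝ) * (torusDegIn m k1 R1 (fun i => proj k k1 (x i)) : ℝ)) ^ 2 else 0)
    else
      (if (fun i => proj k k2 (x i)) ∈ R2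
        then ((e2 : ℝ) * (torusDegIn m k2 R2 (fun i => proj k k2 (x i)) : ℝ)) ^ 2 else 0)
    with hG
  -- numerator of torusP2 as a sum over all vertices
  have hnum : (∑ v ∈ mix m k k1 k2 a R1 R2,
        (torusDegIn m k (mix m k k1 k2 a R1 R2) v : ℝ) ^ 2)
      = ∑ x : Fin m → ZMod k, F x := by
    have hmixdef : mix m k k1 k2 a R1 R2
        = Finset.univ.filter (fun x : Fin m → ZMod k =>
            if (x 0).val < a then (fun i => proj k k1 (x i)) ∈ R1
            else (fun i => proj k k2 (x i)) ∈ R2) := rfl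
    nth_rewrite 1 [hmixdef]
    rw [Finset.sum_filter]
  -- pointwise equality off the boundary slices
  have hgood : ∀ x : Fin m → ZMod k,
      ¬ ((x 0).val = 0 ∨ (x 0).val + 1 = a ∨ (x 0).val = a ∨ (x 0).val + 1 = k) →
      F x = G x := by
    intro x hx
    push_neg at hx
    obtain ⟨hb1, hb2, hb3, hb4⟩ := hx
    have hvlt := (x 0).val_lt
    rw [hF, hG]
    simp only
    by_cases hP : (x 0).val < a
    · have hd := deg_mix_lt (m := m) (a := a) hk3 hdvd1 he1 R1 R2 x hak (by omega) (by omega)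
      simp only [if_pos hP, hd]
      split
      · push_cast; ring
      · rfl
    · have hd := deg_mix_ge (m := m) (a := a) hk3 hdvd2 he2 R1 R2 x (by omega) (by omega)
      simp only [if_neg hP, hd]
      split
      · push_cast; ring
      · rfl
  -- pointwise bounds
  have hFbound : ∀ x : Fin m → ZMod k, 0 ≤ F x ∧ F x ≤ (2 * (m:ℝ)) ^ 2 := by
    intro x
    rw [hF]
    simp only
    by_cases hc : (if (x 0).val < a then (fun i => proj k k1 (x i)) ∈ R1
        else (fun i => proj k k2 (x i)) ∈ R2)
    · rw [if_pos hc]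
      constructor
      · positivity
      · have hd : (torusDegIn m k (mix m k k1 k2 a R1 R2) x : ℝ) ≤ 2 * (m:ℝ) := by
          exact_mod_cast deg_le hk3 (mix m k k1 k2 a R1 R2) x
        have hd0 : (0:ℝ) ≤ (torusDegIn m k (mix m k k1 k2 a R1 R2) x : ℝ) := by positivity
        exact pow_le_pow_left₀ hd0 hd 2
    · rw [if_neg hc]
      exact ⟨le_refl 0, le_of_lt hwpos⟩
  have hGbound : ∀ x : Fin m → ZMod k, 0 ≤ G x ∧ G x ≤ (2 * (m:ℝ)) ^ 2 := by
    intro x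
    rw [hG]
    simp only
    have hb1 : ((e1:ℝ) * (torusDegIn m k1 R1 (fun i => proj k k1 (x i)) : ℝ)) ^ 2
        ≤ (2 * (m:ℝ)) ^ 2 := by
      have h1 : (e1:ℝ) * (torusDegIn m k1 R1 (fun i => proj k k1 (x i)) : ℝ) ≤ 2 * (m:ℝ) := by
        exact_mod_cast e_deg_le he1 R1 (fun i => proj k k1 (x i))
      have h0 : (0:ℝ) ≤ (e1:ℝ) * (torusDegIn m k1 R1 (fun i => proj k k1 (x i)) : ℝ) := by
        positivity
      exact pow_le_pow_left₀ h0 h1 2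
    have hb2 : ((e2:ℝ) * (torusDegIn m k2 R2 (fun i => proj k k2 (x i)) : ℝ)) ^ 2
        ≤ (2 * (m:ℝ)) ^ 2 := by
      have h1 : (e2:ℝ) * (torusDegIn m k2 R2 (fun i => proj k k2 (x i)) : ℝ) ≤ 2 * (m:ℝ) := by
        exact_mod_cast e_deg_le he2 R2 (fun i => proj k k2 (x i))
      have h0 : (0:ℝ) ≤ (e2:ℝ) * (torusDegIn m k2 R2 (fun i => proj k k2 (x i)) : ℝ) := by
        positivity
      exact pow_le_pow_left₀ h0 h1 2
    split
    · split
      · exact ⟨by positivity, hb1⟩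
      · exact ⟨le_refl 0, le_of_lt hwpos⟩
    · split
      · exact ⟨by positivity, hb2⟩
      · exact ⟨le_refl 0, le_of_lt hwpos⟩
  -- global error estimate
  have herr : |(∑ x : Fin m → ZMod k, F x) - ∑ x : Fin m → ZMod k, G x|
      ≤ (4 * (k:ℝ) ^ (m - 1)) * (2 * (m:ℝ)) ^ 2 := by
    rw [← Finset.sum_sub_distrib]
    refine le_trans (Finset.abs_sum_le_sum_abs _ _) ?_
    rw [← Finset.sum_filter_add_sum_filter_not Finset.univ
      (fun x : Fin m → ZMod k =>
        (x 0).val = 0 ∨ (x 0).val + 1 = a ∨ (x 0).val = a ∨ (x 0).val + 1 = k)]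
    have hgz : (∑ x ∈ Finset.univ.filter (fun x : Fin m → ZMod k =>
        ¬ ((x 0).val = 0 ∨ (x 0).val + 1 = a ∨ (x 0).val = a ∨ (x 0).val + 1 = k)),
          |F x - G x|) = 0 := by
      apply Finset.sum_eq_zero
      intro x hx
      simp only [Finset.mem_filter] at hx
      rw [hgood x hx.2, sub_self, abs_zero]
    rw [hgz, add_zero]
    have hsumle : (∑ x ∈ Finset.univ.filter (fun x : Fin m → ZMod k =>
          (x 0).val = 0 ∨ (x 0).val + 1 = a ∨ (x 0).val = a ∨ (x 0).val + 1 = k),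
        |F x - G x|)
        ≤ (Finset.univ.filter (fun x : Fin m → ZMod k =>
          (x 0).val = 0 ∨ (x 0).val + 1 = a ∨ (x 0).val = a ∨ (x 0).val + 1 = k)).card
          • ((2 * (m:ℝ)) ^ 2) := by
      apply Finset.sum_le_card_nsmul
      intro x _
      obtain ⟨hF0, hFB⟩ := hFbound x
      obtain ⟨hG0, hGB⟩ := hGbound x
      rw [abs_sub_le_iff]
      constructor <;> linarith
    refine le_trans hsumle ?_
    rw [nsmul_eq_mul]
    have hb := bad_card (m := m) (k := k) (a := a)
    have hbR : ((Finset.univ.filter (fun x : Fin m → ZMod k =>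
          (x 0).val = 0 ∨ (x 0).val + 1 = a ∨ (x 0).val = a ∨ (x 0).val + 1 = k)).card : ℝ)
        ≤ 4 * (k:ℝ) ^ (m - 1) := by
      calc ((Finset.univ.filter (fun x : Fin m → ZMod k =>
            (x 0).val = 0 ∨ (x 0).val + 1 = a ∨ (x 0).val = a ∨ (x 0).val + 1 = k)).card : ℝ)
          ≤ ((4 * k ^ (m - 1) : ℕ) : ℝ) := by exact_mod_cast hb
        _ = 4 * (k:ℝ) ^ (m - 1) := by push_cast; ring
    have := mul_le_mul_of_nonneg_right hbR (le_of_lt hwpos)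
    linarith
  -- the model sum
  have hGsum : (∑ x : Fin m → ZMod k, G x)
      = ((k2 * A : ℕ) : ℝ) * ((k2 * N : ℕ) : ℝ) ^ (m - 1)
          * ((e1:ℝ) ^ 2 * ∑ u ∈ R1, (torusDegIn m k1 R1 u : ℝ) ^ 2)
        + ((k1 * (N - A) : ℕ) : ℝ) * ((k1 * N : ℕ) : ℝ) ^ (m - 1)
          * ((e2:ℝ) ^ 2 * ∑ u ∈ R2, (torusDegIn m k2 R2 u : ℝ) ^ 2) := by
    have hsplit : ∀ x : Fin m → ZMod k, G x
        = (if (x 0).val < a then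
            (if (fun i => proj k k1 (x i)) ∈ R1
              then ((e1 : ℝ) * (torusDegIn m k1 R1 (fun i => proj k k1 (x i)) : ℝ)) ^ 2
              else 0) else 0)
          + (if (x 0).val < a then 0 else
            (if (fun i => proj k k2 (x i)) ∈ R2
              then ((e2 : ℝ) * (torusDegIn m k2 R2 (fun i => proj k k2 (x i)) : ℝ)) ^ 2
              else 0)) := by
      intro x
      rw [hG]
      simp only
      split_ifs <;> ring
    rw [Finset.sum_congr rfl (fun x _ => hsplit x), Finset.sum_add_distrib]
    rw [sum_region1 (q := k2 * N) (c := k2 * A) (by rw [hk]; ring) (by rw [ha]; ring) hak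
      (fun u => if u ∈ R1 then ((e1 : ℝ) * (torusDegIn m k1 R1 u : ℝ)) ^ 2 else 0)]
    rw [sum_region2 (q := k1 * N) (c := k1 * A) (by rw [hk]; ring) (by rw [ha]; ring) hak
      (fun u => if u ∈ R2 then ((e2 : ℝ) * (torusDegIn m k2 R2 u : ℝ)) ^ 2 else 0)]
    rw [filter_indicator_sum R1 (fun u => ((e1 : ℝ) * (torusDegIn m k1 R1 u : ℝ)) ^ 2)]
    rw [filter_indicator_sum R2 (fun u => ((e2 : ℝ) * (torusDegIn m k2 R2 u : ℝ)) ^ 2)]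
    rw [nat_mul_sub k1 N A hA]
    rw [Finset.sum_congr rfl (fun (u : Fin m → ZMod k1) _ =>
      mul_pow (e1:ℝ) (torusDegIn m k1 R1 u : ℝ) 2), ← Finset.mul_sum]
    rw [Finset.sum_congr rfl (fun (u : Fin m → ZMod k2) _ =>
      mul_pow (e2:ℝ) (torusDegIn m k2 R2 u : ℝ) 2), ← Finset.mul_sum]
  -- cardinality of the mixed colouring
  have hcast1 : (R1.card : ℝ) = (k1:ℝ) ^ m / 2 := by
    have h2 : ((2 * R1.card : ℕ) : ℝ) = ((k1 ^ m : ℕ) : ℝ) := by exact_mod_cast congrArg Nat.cast hs1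
    push_cast at h2
    linarith
  have hcast2 : (R2.card : ℝ) = (k2:ℝ) ^ m / 2 := by
    have h2 : ((2 * R2.card : ℕ) : ℝ) = ((k2 ^ m : ℕ) : ℝ) := by exact_mod_cast congrArg Nat.cast hs2
    push_cast at h2
    linarith
  have hANcast : ((N - A : ℕ) : ℝ) = (N:ℝ) - (A:ℝ) := by
    push_cast [Nat.cast_sub hA]
    ring
  obtain ⟨n, hn⟩ : ∃ n, m = n + 1 := ⟨m - 1, by omega⟩
  subst hn
  simp only [Nat.add_sub_cancel] at hGsum herr
  have hcardk : ((mix (n+1) k k1 k2 a R1 R2).card : ℝ) = (k:ℝ) ^ (n+1) / 2 := by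
    rw [mix_card hk ha hA R1 R2, hcast1, hcast2]
    simp only [Nat.add_sub_cancel]
    rw [hk]
    push_cast [Nat.cast_sub hA]
    ring
  -- express the two reference probabilities
  have hX1 : torusP2 (n+1) k1 R1
      = (∑ u ∈ R1, (torusDegIn (n+1) k1 R1 u : ℝ) ^ 2) / ((k1:ℝ) ^ (n+1) / 2 * (2 * ((n:ℝ)+1)) ^ 2) := by
    rw [torusP2, hcast1]
    push_cast
    ring_nf
  have hX2 : torusP2 (n+1) k2 R2
      = (∑ u ∈ R2, (torusDegIn (n+1) k2 R2 u : ℝ) ^ 2) / ((k2:ℝ) ^ (n+1) / 2 * (2 * ((n:ℝ)+1)) ^ 2) := by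
    rw [torusP2, hcast2]
    push_cast
    ring_nf
  have hP2 : torusP2 (n+1) k (mix (n+1) k k1 k2 a R1 R2)
      = (∑ x : Fin (n+1) → ZMod k, F x) / ((k:ℝ) ^ (n+1) / 2 * (2 * ((n:ℝ)+1)) ^ 2) := by
    rw [torusP2, hnum, hcardk]
    push_cast
    ring_nf
  -- exact identity for the model value
  have hkR' : (k:ℝ) = (k1:ℝ) * (k2:ℝ) * (N:ℝ) := by rw [hk]; push_cast; ring
  push_cast [Nat.cast_sub hA] at hGsum herr
  have hk1ne : ((k1:ℝ)) ≠ 0 := ne_of_gt hk1R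
  have hk2ne : ((k2:ℝ)) ≠ 0 := ne_of_gt hk2R
  have hNne : ((N:ℝ)) ≠ 0 := ne_of_gt hNR
  have hkne : ((k:ℝ)) ≠ 0 := ne_of_gt hkR
  have hwpos' : (0:ℝ) < (2 * ((n:ℝ)+1)) ^ 2 := by positivity
  have hwne : ((2 * ((n:ℝ)+1)) ^ 2) ≠ 0 := ne_of_gt hwpos'
  have hT : ((A : ℝ) / N) * (e1 : ℝ) ^ 2 * torusP2 (n+1) k1 R1
      + (((N - A : ℕ) : ℝ) / N) * (e2 : ℝ) ^ 2 * torusP2 (n+1) k2 R2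
      = (∑ x : Fin (n+1) → ZMod k, G x)
          / ((k:ℝ) ^ (n+1) / 2 * (2 * ((n:ℝ)+1)) ^ 2) := by
    rw [hX1, hX2, hGsum, hANcast, hkR']
    field_simp
    ring
  have hDpos : (0:ℝ) < (k:ℝ) ^ (n+1) / 2 * (2 * ((n:ℝ)+1)) ^ 2 := by positivity
  have hdiff : torusP2 (n+1) k (mix (n+1) k k1 k2 a R1 R2)
      - (((A : ℝ) / N) * (e1 : ℝ) ^ 2 * torusP2 (n+1) k1 R1
        + (((N - A : ℕ) : ℝ) / N) * (e2 : ℝ) ^ 2 * torusP2 (n+1) k2 R2)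
      = ((∑ x : Fin (n+1) → ZMod k, F x) - (∑ x : Fin (n+1) → ZMod k, G x))
          / ((k:ℝ) ^ (n+1) / 2 * (2 * ((n:ℝ)+1)) ^ 2) := by
    rw [hP2, hT, div_sub_div_same]
  rw [hdiff, abs_div, abs_of_pos hDpos, div_le_iff₀ hDpos]
  have hrhs : 16 / (k:ℝ) * ((k:ℝ) ^ (n+1) / 2 * (2 * ((n:ℝ)+1)) ^ 2)
      = 8 * (k:ℝ) ^ n * (2 * ((n:ℝ)+1)) ^ 2 := by
    field_simp
    ring
  rw [hrhs]
  have hx0 : (0:ℝ) ≤ (k:ℝ) ^ n * (2 * ((n:ℝ)+1)) ^ 2 := by positivity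
  calc |(∑ x : Fin (n+1) → ZMod k, F x) - (∑ x : Fin (n+1) → ZMod k, G x)|
      ≤ (4 * (k:ℝ) ^ n) * (2 * ((n:ℝ)+1)) ^ 2 := herr
    _ ≤ 8 * (k:ℝ) ^ n * (2 * ((n:ℝ)+1)) ^ 2 := by nlinarith [hx0]

end TorusAux

namespace TorusAux

open Finset

lemma torusP2_nonneg {m k : ℕ} (R : Finset (Fin m → ZMod k)) : 0 ≤ torusP2 m k R := by
  rw [torusP2]
  positivity

lemma eP2_le_one {m k1 e1 : ℕ} [NeZero k1] (hm : 1 ≤ m)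
    (he : (e1 = 1 ∧ 3 ≤ k1) ∨ (e1 = 2 ∧ k1 = 2))
    (R : Finset (Fin m → ZMod k1)) :
    (e1:ℝ) ^ 2 * torusP2 m k1 R ≤ 1 := by
  have hmR : (0:ℝ) < (m:ℝ) := by exact_mod_cast (show 0 < m by omega)
  rcases eq_or_ne R.card 0 with h0 | h0
  · have hRe : R = ∅ := Finset.card_eq_zero.mp h0
    subst hRe
    simp [torusP2]
  · have hcpos : (0:ℝ) < R.card := by
      exact_mod_cast Nat.pos_of_ne_zero h0
    have key : (e1:ℝ) ^ 2 * (∑ v ∈ R, (torusDegIn m k1 R v : ℝ) ^ 2)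
        ≤ (R.card : ℝ) * (2 * (m:ℝ)) ^ 2 := by
      rw [Finset.mul_sum]
      calc (∑ v ∈ R, (e1:ℝ) ^ 2 * (torusDegIn m k1 R v : ℝ) ^ 2)
          ≤ ∑ _v ∈ R, (2 * (m:ℝ)) ^ 2 := by
            apply Finset.sum_le_sum
            intro v _
            have h1 : (e1:ℝ) * (torusDegIn m k1 R v : ℝ) ≤ 2 * (m:ℝ) := by
              exact_mod_cast e_deg_le he R v
            have h2 : (0:ℝ) ≤ (e1:ℝ) * (torusDegIn m k1 R v : ℝ) := by positivity
            calc (e1:ℝ) ^ 2 * (torusDegIn m k1 R v : ℝ) ^ 2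
                = ((e1:ℝ) * (torusDegIn m k1 R v : ℝ)) ^ 2 := by ring
              _ ≤ (2 * (m:ℝ)) ^ 2 := pow_le_pow_left₀ h2 h1 2
        _ = (R.card : ℝ) * (2 * (m:ℝ)) ^ 2 := by
            rw [Finset.sum_const, nsmul_eq_mul]
    rw [torusP2, mul_div_assoc']
    rw [div_le_one (by positivity)]
    exact key

set_option maxHeartbeats 4000000 in
lemma master {m k1 k2 e1 e2 : ℕ} [NeZero m] [NeZero k1] [NeZero k2] (hm : 2 ≤ m)
    (he1 : (e1 = 1 ∧ 3 ≤ k1) ∨ (e1 = 2 ∧ k1 = 2))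
    (he2 : (e2 = 1 ∧ 3 ≤ k2) ∨ (e2 = 2 ∧ k2 = 2))
    (R1 B1 : Finset (Fin m → ZMod k1)) (R2 B2 : Finset (Fin m → ZMod k2))
    (hc1 : ∀ v, v ∈ R1 ∨ v ∈ B1) (hd1 : Disjoint R1 B1) (hq1 : R1.card = B1.card)
    (hc2 : ∀ v, v ∈ R2 ∨ v ∈ B2) (hd2 : Disjoint R2 B2) (hq2 : R2.card = B2.card)
    (t δ : ℝ) (ht0 : 0 ≤ t) (ht1 : t ≤ 1) (hδ : 0 < δ) :
    ∃ k : ℕ, 0 < k ∧ 3 ≤ k ∧ Even (k ^ m) ∧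
      ∃ R B : Finset (Fin m → ZMod k),
        (∀ v, v ∈ R ∨ v ∈ B) ∧ Disjoint R B ∧ R.card = B.card ∧
        |torusP2 m k R - (t * (e1:ℝ) ^ 2 * torusP2 m k1 R1
            + (1 - t) * (e2:ℝ) ^ 2 * torusP2 m k2 R2)| < δ ∧
        |torusP2 m k B - (t * (e1:ℝ) ^ 2 * torusP2 m k1 B1
            + (1 - t) * (e2:ℝ) ^ 2 * torusP2 m k2 B2)| < δ := by
  classical
  have hk1p : 2 ≤ k1 := by rcases he1 with ⟨_, h⟩ | ⟨_, h⟩ <;> omega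
  have hk2p : 2 ≤ k2 := by rcases he2 with ⟨_, h⟩ | ⟨_, h⟩ <;> omega
  -- cardinalities of the two patterns
  have htot1 : R1.card + B1.card = k1 ^ m := by
    have huniv : R1 ∪ B1 = Finset.univ := by
      apply Finset.eq_univ_iff_forall.mpr
      intro v
      rcases hc1 v with h | h
      · exact Finset.mem_union_left _ h
      · exact Finset.mem_union_right _ h
    have := Finset.card_union_of_disjoint hd1
    rw [huniv, Finset.card_univ] at this
    rw [← this]
    congr 1
    rw [Fintype.card_fun, ZMod.card, Fintype.card_fin]
  have htot2 : R2.card + B2.card = k2 ^ m := by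
    have huniv : R2 ∪ B2 = Finset.univ := by
      apply Finset.eq_univ_iff_forall.mpr
      intro v
      rcases hc2 v with h | h
      · exact Finset.mem_union_left _ h
      · exact Finset.mem_union_right _ h
    have := Finset.card_union_of_disjoint hd2
    rw [huniv, Finset.card_univ] at this
    rw [← this]
    congr 1
    rw [Fintype.card_fun, ZMod.card, Fintype.card_fin]
  have hs1 : 2 * R1.card = k1 ^ m := by omega
  have hs1' : 2 * B1.card = k1 ^ m := by omega
  have hs2 : 2 * R2.card = k2 ^ m := by omega
  have hs2' : 2 * B2.card = k2 ^ m := by omega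
  -- choose the size of the big torus
  set N : ℕ := 2 * (Nat.ceil (20 / δ) + 1) with hNdef
  have hNpos : 0 < N := by omega
  have hNR : (0:ℝ) < N := by exact_mod_cast hNpos
  have hNbig : 20 / δ < (N:ℝ) := by
    have h1 : (20 / δ : ℝ) ≤ (Nat.ceil (20 / δ) : ℝ) := Nat.le_ceil _
    have h2 : ((Nat.ceil (20 / δ) : ℕ) : ℝ) < (N:ℝ) := by
      exact_mod_cast (show Nat.ceil (20 / δ) < N by omega)
    linarith
  have hδN : 18 / (N:ℝ) < δ := by
    rw [div_lt_iff₀ hNR]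
    have h20 : (20:ℝ) < δ * N := by
      rw [div_lt_iff₀ hδ] at hNbig
      linarith [hNbig]
    linarith
  set A : ℕ := Nat.floor (t * N) with hAdef
  have hA : A ≤ N := by
    have h1 : t * N ≤ (N:ℝ) := by nlinarith
    have h2 : Nat.floor (t * (N:ℝ)) ≤ Nat.floor ((N:ℝ)) := Nat.floor_le_floor h1
    rwa [Nat.floor_natCast] at h2
  have hfloor1 : ((A:ℕ):ℝ) ≤ t * N := Nat.floor_le (by positivity)
  have hfloor2 : t * (N:ℝ) < A + 1 := Nat.lt_floor_add_one _
  have hkpos : 0 < k1 * k2 * N := by positivity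
  haveI : NeZero (k1 * k2 * N) := ⟨by omega⟩
  have hkR : (0:ℝ) < ((k1 * k2 * N : ℕ):ℝ) := by exact_mod_cast hkpos
  have hkN : (N:ℝ) ≤ ((k1 * k2 * N : ℕ):ℝ) := by
    have : N ≤ k1 * k2 * N := by
      calc N = 1 * N := (one_mul N).symm
        _ ≤ (k1 * k2) * N := Nat.mul_le_mul_right _ (by nlinarith)
    exact_mod_cast this
  -- the balanced colouring on the big torus
  refine ⟨k1 * k2 * N, hkpos, ?_, ?_, mix m (k1*k2*N) k1 k2 (k1*k2*A) R1 R2,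
    mix m (k1*k2*N) k1 k2 (k1*k2*A) B1 B2, ?_, ?_, ?_, ?_, ?_⟩
  · calc 3 ≤ 2 * 2 * 1 := by omega
      _ ≤ k1 * k2 * N := by
        apply Nat.mul_le_mul
        apply Nat.mul_le_mul hk1p hk2p
        omega
  · -- Even (k ^ m)
    have hkeven : Even (k1 * k2 * N) := by
      refine Even.mul_left ⟨Nat.ceil (20 / δ) + 1, ?_⟩ _
      omega
    have hpow : (k1 * k2 * N) ^ m = (k1 * k2 * N) ^ (m - 1) * (k1 * k2 * N) := by
      rw [← pow_succ]
      congr 1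
      omega
    rw [hpow]
    exact hkeven.mul_left _
  · -- cover
    intro v
    by_cases hv : (v 0).val < k1 * k2 * A
    · rcases hc1 (fun i => proj (k1*k2*N) k1 (v i)) with h | h
      · left; rw [mem_mix, if_pos hv]; exact h
      · right; rw [mem_mix, if_pos hv]; exact h
    · rcases hc2 (fun i => proj (k1*k2*N) k2 (v i)) with h | h
      · left; rw [mem_mix, if_neg hv]; exact h
      · right; rw [mem_mix, if_neg hv]; exact h
  · -- disjoint
    rw [Finset.disjoint_left]
    intro x hR hB
    rw [mem_mix] at hR hB
    by_cases hv : (x 0).val < k1 * k2 * A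
    · rw [if_pos hv] at hR hB
      exact (Finset.disjoint_left.mp hd1) hR hB
    · rw [if_neg hv] at hR hB
      exact (Finset.disjoint_left.mp hd2) hR hB
  · -- equal cardinalities
    have hcR := mix_card (m := m) (k := k1*k2*N) rfl rfl hA R1 R2
    have hcB := mix_card (m := m) (k := k1*k2*N) rfl rfl hA B1 B2
    have : ((mix m (k1*k2*N) k1 k2 (k1*k2*A) R1 R2).card : ℝ)
        = ((mix m (k1*k2*N) k1 k2 (k1*k2*A) B1 B2).card : ℝ) := by
      rw [hcR, hcB, hq1, hq2]
    exact_mod_cast this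
  · -- approximation for R
    have hside := side (m := m) (k := k1*k2*N) (a := k1*k2*A) hm rfl rfl he1 he2
      hNpos hA R1 R2 hs1 hs2
    have hX10 := torusP2_nonneg (m := m) (k := k1) R1
    have hX20 := torusP2_nonneg (m := m) (k := k2) R2
    have hX11 := eP2_le_one (m := m) (by omega) he1 R1
    have hX21 := eP2_le_one (m := m) (by omega) he2 R2
    have habs : |((A:ℝ)/N) - t| ≤ 1 / (N:ℝ) := by
      have e : (A:ℝ)/N - t = ((A:ℝ) - t*N)/N := by field_simp
      rw [e, abs_div, abs_of_pos hNR]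
      have h1 : |(A:ℝ) - t * (N:ℝ)| ≤ 1 := by
        rw [abs_le]
        constructor <;> linarith
      gcongr
    have hstep : |(((A:ℝ)/N) * (e1:ℝ)^2 * torusP2 m k1 R1
          + (((N - A : ℕ):ℝ)/N) * (e2:ℝ)^2 * torusP2 m k2 R2)
        - (t * (e1:ℝ)^2 * torusP2 m k1 R1 + (1-t) * (e2:ℝ)^2 * torusP2 m k2 R2)|
        ≤ 1 / (N:ℝ) := by
      have hNA : ((N - A : ℕ):ℝ) = (N:ℝ) - A := by
        push_cast [Nat.cast_sub hA]; ring
      have e : (((A:ℝ)/N) * (e1:ℝ)^2 * torusP2 m k1 R1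
            + (((N - A : ℕ):ℝ)/N) * (e2:ℝ)^2 * torusP2 m k2 R2)
          - (t * (e1:ℝ)^2 * torusP2 m k1 R1 + (1-t) * (e2:ℝ)^2 * torusP2 m k2 R2)
          = ((A:ℝ)/N - t) * ((e1:ℝ)^2 * torusP2 m k1 R1 - (e2:ℝ)^2 * torusP2 m k2 R2) := by
        rw [hNA]
        field_simp
        ring
      rw [e, abs_mul]
      have h1 : |(e1:ℝ)^2 * torusP2 m k1 R1 - (e2:ℝ)^2 * torusP2 m k2 R2| ≤ 1 := by
        rw [abs_le]
        constructor
        · nlinarith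
        · nlinarith
      calc |(A:ℝ)/N - t| * |(e1:ℝ)^2 * torusP2 m k1 R1 - (e2:ℝ)^2 * torusP2 m k2 R2|
          ≤ (1/(N:ℝ)) * 1 := by
            apply mul_le_mul habs h1 (abs_nonneg _) (by positivity)
        _ = 1 / (N:ℝ) := mul_one _
    calc |torusP2 m (k1*k2*N) (mix m (k1*k2*N) k1 k2 (k1*k2*A) R1 R2)
          - (t * (e1:ℝ)^2 * torusP2 m k1 R1 + (1-t) * (e2:ℝ)^2 * torusP2 m k2 R2)|
        ≤ |torusP2 m (k1*k2*N) (mix m (k1*k2*N) k1 k2 (k1*k2*A) R1 R2)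
            - (((A:ℝ)/N) * (e1:ℝ)^2 * torusP2 m k1 R1
              + (((N - A : ℕ):ℝ)/N) * (e2:ℝ)^2 * torusP2 m k2 R2)|
          + |(((A:ℝ)/N) * (e1:ℝ)^2 * torusP2 m k1 R1
              + (((N - A : ℕ):ℝ)/N) * (e2:ℝ)^2 * torusP2 m k2 R2)
            - (t * (e1:ℝ)^2 * torusP2 m k1 R1 + (1-t) * (e2:ℝ)^2 * torusP2 m k2 R2)| :=
          abs_sub_le _ _ _
      _ ≤ 16 / ((k1*k2*N : ℕ):ℝ) + 1 / (N:ℝ) := by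
          apply add_le_add hside hstep
      _ ≤ 16 / (N:ℝ) + 1 / (N:ℝ) := by
          have : 16 / ((k1*k2*N : ℕ):ℝ) ≤ 16 / (N:ℝ) := by
            gcongr
          linarith
      _ < δ := by
          have : 16 / (N:ℝ) + 1 / (N:ℝ) ≤ 18 / (N:ℝ) := by
            rw [← add_div]
            gcongr
            norm_num
          linarith
  · -- approximation for B  (identical argument)
    have hside := side (m := m) (k := k1*k2*N) (a := k1*k2*A) hm rfl rfl he1 he2
      hNpos hA B1 B2 hs1' hs2'
    have hX10 := torusP2_nonneg (m := m) (k := k1) B1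
    have hX20 := torusP2_nonneg (m := m) (k := k2) B2
    have hX11 := eP2_le_one (m := m) (by omega) he1 B1
    have hX21 := eP2_le_one (m := m) (by omega) he2 B2
    have habs : |((A:ℝ)/N) - t| ≤ 1 / (N:ℝ) := by
      have e : (A:ℝ)/N - t = ((A:ℝ) - t*N)/N := by field_simp
      rw [e, abs_div, abs_of_pos hNR]
      have h1 : |(A:ℝ) - t * (N:ℝ)| ≤ 1 := by
        rw [abs_le]
        constructor <;> linarith
      gcongr
    have hstep : |(((A:ℝ)/N) * (e1:ℝ)^2 * torusP2 m k1 B1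
          + (((N - A : ℕ):ℝ)/N) * (e2:ℝ)^2 * torusP2 m k2 B2)
        - (t * (e1:ℝ)^2 * torusP2 m k1 B1 + (1-t) * (e2:ℝ)^2 * torusP2 m k2 B2)|
        ≤ 1 / (N:ℝ) := by
      have hNA : ((N - A : ℕ):ℝ) = (N:ℝ) - A := by
        push_cast [Nat.cast_sub hA]; ring
      have e : (((A:ℝ)/N) * (e1:ℝ)^2 * torusP2 m k1 B1
            + (((N - A : ℕ):ℝ)/N) * (e2:ℝ)^2 * torusP2 m k2 B2)
          - (t * (e1:ℝ)^2 * torusP2 m k1 B1 + (1-t) * (e2:ℝ)^2 * torusP2 m k2 B2)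
          = ((A:ℝ)/N - t) * ((e1:ℝ)^2 * torusP2 m k1 B1 - (e2:ℝ)^2 * torusP2 m k2 B2) := by
        rw [hNA]
        field_simp
        ring
      rw [e, abs_mul]
      have h1 : |(e1:ℝ)^2 * torusP2 m k1 B1 - (e2:ℝ)^2 * torusP2 m k2 B2| ≤ 1 := by
        rw [abs_le]
        constructor
        · nlinarith
        · nlinarith
      calc |(A:ℝ)/N - t| * |(e1:ℝ)^2 * torusP2 m k1 B1 - (e2:ℝ)^2 * torusP2 m k2 B2|
          ≤ (1/(N:ℝ)) * 1 := by
            apply mul_le_mul habs h1 (abs_nonneg _) (by positivity)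
        _ = 1 / (N:ℝ) := mul_one _
    calc |torusP2 m (k1*k2*N) (mix m (k1*k2*N) k1 k2 (k1*k2*A) B1 B2)
          - (t * (e1:ℝ)^2 * torusP2 m k1 B1 + (1-t) * (e2:ℝ)^2 * torusP2 m k2 B2)|
        ≤ |torusP2 m (k1*k2*N) (mix m (k1*k2*N) k1 k2 (k1*k2*A) B1 B2)
            - (((A:ℝ)/N) * (e1:ℝ)^2 * torusP2 m k1 B1
              + (((N - A : ℕ):ℝ)/N) * (e2:ℝ)^2 * torusP2 m k2 B2)|
          + |(((A:ℝ)/N) * (e1:ℝ)^2 * torusP2 m k1 B1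
              + (((N - A : ℕ):ℝ)/N) * (e2:ℝ)^2 * torusP2 m k2 B2)
            - (t * (e1:ℝ)^2 * torusP2 m k1 B1 + (1-t) * (e2:ℝ)^2 * torusP2 m k2 B2)| :=
          abs_sub_le _ _ _
      _ ≤ 16 / ((k1*k2*N : ℕ):ℝ) + 1 / (N:ℝ) := by
          apply add_le_add hside hstep
      _ ≤ 16 / (N:ℝ) + 1 / (N:ℝ) := by
          have : 16 / ((k1*k2*N : ℕ):ℝ) ≤ 16 / (N:ℝ) := by
            gcongr
          linarith
      _ < δ := by
          have : 16 / (N:ℝ) + 1 / (N:ℝ) ≤ 18 / (N:ℝ) := by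
            rw [← add_div]
            gcongr
            norm_num
          linarith

end TorusAux

namespace TorusAux

open Finset

variable {m : ℕ}

lemma sum_nbr {k : ℕ} (u : Fin m → ZMod k) (j : Fin m) (s : Bool) :
    ∑ i, nbr u j s i = (∑ i, u i) + (if s then 1 else -1) := by
  rw [nbr, Finset.sum_update_of_mem (Finset.mem_univ j),
    ← Finset.add_sum_erase _ u (Finset.mem_univ j), Finset.erase_eq]
  ring

/-- The chequerboard pattern on `{0,1}^m` with prescribed parity. -/
noncomputable def paritySet (m : ℕ) (c : ZMod 2) : Finset (Fin m → ZMod 2) :=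
  Finset.univ.filter (fun u => (∑ i, u i) = c)

lemma paritySet_cover (u : Fin m → ZMod 2) :
    u ∈ paritySet m 0 ∨ u ∈ paritySet m 1 := by
  have h2 : ∀ z : ZMod 2, z = 0 ∨ z = 1 := by decide
  rcases h2 (∑ i, u i) with h | h
  · left; simp [paritySet, h]
  · right; simp [paritySet, h]

lemma paritySet_disjoint : Disjoint (paritySet m 0) (paritySet m 1) := by
  rw [Finset.disjoint_left]
  intro u h0 h1
  simp only [paritySet, Finset.mem_filter, Finset.mem_univ, true_and] at h0 h1
  rw [h0] at h1
  exact absurd h1 (by decide)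

lemma paritySet_card [NeZero m] : (paritySet m 0).card = (paritySet m 1).card := by
  apply Finset.card_nbij' (fun u => Function.update u 0 (u 0 + 1))
    (fun u => Function.update u 0 (u 0 + 1))
  · intro u hu
    simp only [paritySet, Finset.mem_coe, Finset.mem_filter, Finset.mem_univ, true_and] at hu ⊢
    rw [Finset.sum_update_of_mem (Finset.mem_univ 0), ← Finset.erase_eq]
    rw [← Finset.add_sum_erase _ u (Finset.mem_univ 0)] at hu
    rw [show (u 0 + 1) + ∑ i ∈ Finset.univ.erase 0, u i
        = (u 0 + ∑ i ∈ Finset.univ.erase 0, u i) + 1 by ring, hu]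
    decide
  · intro u hu
    simp only [paritySet, Finset.mem_coe, Finset.mem_filter, Finset.mem_univ, true_and] at hu ⊢
    rw [Finset.sum_update_of_mem (Finset.mem_univ 0), ← Finset.erase_eq]
    rw [← Finset.add_sum_erase _ u (Finset.mem_univ 0)] at hu
    rw [show (u 0 + 1) + ∑ i ∈ Finset.univ.erase 0, u i
        = (u 0 + ∑ i ∈ Finset.univ.erase 0, u i) + 1 by ring, hu]
    decide
  · intro u _
    funext i
    by_cases hi : i = 0
    · subst hi
      dsimp only; rw [Function.update_self, Function.update_self]
      have h2 : (1 : ZMod 2) + 1 = 0 := by decide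
      calc u 0 + 1 + 1 = u 0 + (1 + 1) := by ring
        _ = u 0 := by rw [h2, add_zero]
    · dsimp only; rw [Function.update_of_ne hi, Function.update_of_ne hi]
  · intro u _
    funext i
    by_cases hi : i = 0
    · subst hi
      dsimp only; rw [Function.update_self, Function.update_self]
      have h2 : (1 : ZMod 2) + 1 = 0 := by decide
      calc u 0 + 1 + 1 = u 0 + (1 + 1) := by ring
        _ = u 0 := by rw [h2, add_zero]
    · dsimp only; rw [Function.update_of_ne hi, Function.update_of_ne hi]

lemma paritySet_P2 (c : ZMod 2) : torusP2 m 2 (paritySet m c) = 0 := by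
  have hz : ∀ v ∈ paritySet m c, (torusDegIn m 2 (paritySet m c) v : ℝ) ^ 2 = 0 := by
    intro v hv
    simp only [paritySet, Finset.mem_filter, Finset.mem_univ, true_and] at hv
    have hd : torusDegIn m 2 (paritySet m c) v = 0 := by
      rw [torusDegIn, Finset.card_eq_zero, Finset.filter_eq_empty_iff]
      intro w hw
      simp only [paritySet, Finset.mem_filter, Finset.mem_univ, true_and] at hw
      intro hadj
      obtain ⟨j, s, rfl⟩ := (adj_iff (le_refl 2) v w).mp hadj
      have h1 : ∑ i, nbr v j s i = (∑ i, v i) + 1 := by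
        rw [sum_nbr]
        congr 1
        cases s
        · decide
        · rfl
      rw [h1, hv] at hw
      have : (1 : ZMod 2) = 0 := by
        have := hw
        calc (1 : ZMod 2) = (c + 1) - c := by ring
          _ = c - c := by rw [hw]
          _ = 0 := by ring
      exact absurd this (by decide)
    rw [hd]
    norm_num
  rw [torusP2, Finset.sum_congr rfl hz, Finset.sum_const, smul_zero, zero_div]

end TorusAux

namespace TorusAux

lemma upgrade {m : ℕ} [NeZero m] (hm : 2 ≤ m) (p : ℝ × ℝ) (hp : p ∈ torusP m)
    {ε : ℝ} (hε : 0 < ε) :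
    ∃ k1 : ℕ, 3 ≤ k1 ∧ ∃ R1 B1 : Finset (Fin m → ZMod k1),
      (∀ v, v ∈ R1 ∨ v ∈ B1) ∧ Disjoint R1 B1 ∧ R1.card = B1.card ∧
      |torusP2 m k1 R1 - p.1| < ε ∧ |torusP2 m k1 B1 - p.2| < ε := by
  obtain ⟨k, hk0, hkev, R, B, hcov, hdis, hcards, hR, hB⟩ := hp (ε/2) (by positivity)
  by_cases hk3 : 3 ≤ k
  · exact ⟨k, hk3, R, B, hcov, hdis, hcards,
      hR.trans_le (by linarith), hB.trans_le (by linarith)⟩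
  · have hk2 : k = 2 := by
      have heven : Even k := (Nat.even_pow.mp hkev).1
      rcases heven with ⟨r, hr⟩
      omega
    subst hk2
    obtain ⟨k', hk'pos, hk'3, hk'ev, R', B', hcov', hdis', hcard', hR', hB'⟩ :=
      master (m := m) (k1 := 2) (k2 := 2) (e1 := 2) (e2 := 2) hm
        (Or.inr ⟨rfl, rfl⟩) (Or.inr ⟨rfl, rfl⟩)
        R B (paritySet m 0) (paritySet m 1)
        hcov hdis hcards paritySet_cover paritySet_disjoint paritySet_card
        (1/4) (ε/2) (by norm_num) (by norm_num) (by positivity)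
    refine ⟨k', hk'3, R', B', hcov', hdis', hcard', ?_, ?_⟩
    · rw [paritySet_P2 0] at hR'
      have he : (1:ℝ)/4 * ((2:ℕ):ℝ)^2 * torusP2 m 2 R + (1 - 1/4) * ((2:ℕ):ℝ)^2 * 0
          = torusP2 m 2 R := by norm_num
      rw [he] at hR'
      calc |torusP2 m k' R' - p.1|
          ≤ |torusP2 m k' R' - torusP2 m 2 R| + |torusP2 m 2 R - p.1| := abs_sub_le _ _ _
        _ < ε/2 + ε/2 := add_lt_add hR' hR
        _ = ε := by ring
    · rw [paritySet_P2 1] at hB'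
      have he : (1:ℝ)/4 * ((2:ℕ):ℝ)^2 * torusP2 m 2 B + (1 - 1/4) * ((2:ℕ):ℝ)^2 * 0
          = torusP2 m 2 B := by norm_num
      rw [he] at hB'
      calc |torusP2 m k' B' - p.2|
          ≤ |torusP2 m k' B' - torusP2 m 2 B| + |torusP2 m 2 B - p.2| := abs_sub_le _ _ _
        _ < ε/2 + ε/2 := add_lt_add hB' hB
        _ = ε := by ring

end TorusAux

/-- For every `m ≥ 2`, the set `𝒫(𝒯^m)` is convex. -/
theorem torusP_convex (m : ℕ) (hm : 2 ≤ m) : Convex ℝ (torusP m) := by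
  haveI : NeZero m := ⟨by omega⟩
  intro p hp q hq α β hα hβ hαβ
  intro ε hε
  obtain ⟨k1, hk13, R1, B1, hc1, hd1, hq1, hpR, hpB⟩ :=
    TorusAux.upgrade hm p hp (show (0:ℝ) < ε/4 by positivity)
  obtain ⟨k2, hk23, R2, B2, hc2, hd2, hq2, hqR, hqB⟩ :=
    TorusAux.upgrade hm q hq (show (0:ℝ) < ε/4 by positivity)
  haveI : NeZero k1 := ⟨by omega⟩
  haveI : NeZero k2 := ⟨by omega⟩
  obtain ⟨k, hkpos, hk3, hkev, R, B, hcov, hdis, hcard, hR, hB⟩ :=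
    TorusAux.master (m := m) (e1 := 1) (e2 := 1) hm (Or.inl ⟨rfl, hk13⟩)
      (Or.inl ⟨rfl, hk23⟩) R1 B1 R2 B2 hc1 hd1 hq1 hc2 hd2 hq2 α (ε/2) hα
      (by linarith) (by positivity)
  have hβ' : (1:ℝ) - α = β := by linarith
  refine ⟨k, hkpos, hkev, R, B, hcov, hdis, hcard, ?_, ?_⟩
  · have hfst : (α • p + β • q).1 = α * p.1 + β * q.1 := by
      simp [Prod.fst_add, Prod.smul_fst, smul_eq_mul]
    rw [hfst]
    rw [hβ'] at hR
    norm_num at hR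
    have habs2 : |α * torusP2 m k1 R1 + β * torusP2 m k2 R2 - (α * p.1 + β * q.1)| ≤ ε/4 := by
      have e : α * torusP2 m k1 R1 + β * torusP2 m k2 R2 - (α * p.1 + β * q.1)
          = α * (torusP2 m k1 R1 - p.1) + β * (torusP2 m k2 R2 - q.1) := by ring
      rw [e]
      calc |α * (torusP2 m k1 R1 - p.1) + β * (torusP2 m k2 R2 - q.1)|
          ≤ |α * (torusP2 m k1 R1 - p.1)| + |β * (torusP2 m k2 R2 - q.1)| := abs_add_le _ _
        _ = α * |torusP2 m k1 R1 - p.1| + β * |torusP2 m k2 R2 - q.1| := by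
            rw [abs_mul, abs_mul, abs_of_nonneg hα, abs_of_nonneg hβ]
        _ ≤ α * (ε/4) + β * (ε/4) := by
            apply add_le_add
            · exact mul_le_mul_of_nonneg_left (le_of_lt hpR) hα
            · exact mul_le_mul_of_nonneg_left (le_of_lt hqR) hβ
        _ = ε/4 := by rw [← add_mul, hαβ, one_mul]
    calc |torusP2 m k R - (α * p.1 + β * q.1)|
        ≤ |torusP2 m k R - (α * torusP2 m k1 R1 + β * torusP2 m k2 R2)|
          + |α * torusP2 m k1 R1 + β * torusP2 m k2 R2 - (α * p.1 + β * q.1)| :=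
          abs_sub_le _ _ _
      _ < ε/2 + ε/4 := by
          apply add_lt_add_of_lt_of_le hR habs2
      _ < ε := by linarith
  · have hsnd : (α • p + β • q).2 = α * p.2 + β * q.2 := by
      simp [Prod.snd_add, Prod.smul_snd, smul_eq_mul]
    rw [hsnd]
    rw [hβ'] at hB
    norm_num at hB
    have habs2 : |α * torusP2 m k1 B1 + β * torusP2 m k2 B2 - (α * p.2 + β * q.2)| ≤ ε/4 := by
      have e : α * torusP2 m k1 B1 + β * torusP2 m k2 B2 - (α * p.2 + β * q.2)
          = α * (torusP2 m k1 B1 - p.2) + β * (torusP2 m k2 B2 - q.2) := by ring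
      rw [e]
      calc |α * (torusP2 m k1 B1 - p.2) + β * (torusP2 m k2 B2 - q.2)|
          ≤ |α * (torusP2 m k1 B1 - p.2)| + |β * (torusP2 m k2 B2 - q.2)| := abs_add_le _ _
        _ = α * |torusP2 m k1 B1 - p.2| + β * |torusP2 m k2 B2 - q.2| := by
            rw [abs_mul, abs_mul, abs_of_nonneg hα, abs_of_nonneg hβ]
        _ ≤ α * (ε/4) + β * (ε/4) := by
            apply add_le_add
            · exact mul_le_mul_of_nonneg_left (le_of_lt hpB) hα
            · exact mul_le_mul_of_nonneg_left (le_of_lt hqB) hβ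
        _ = ε/4 := by rw [← add_mul, hαβ, one_mul]
    calc |torusP2 m k B - (α * p.2 + β * q.2)|
        ≤ |torusP2 m k B - (α * torusP2 m k1 B1 + β * torusP2 m k2 B2)|
          + |α * torusP2 m k1 B1 + β * torusP2 m k2 B2 - (α * p.2 + β * q.2)| :=
          abs_sub_le _ _ _
      _ < ε/2 + ε/4 := by
          apply add_lt_add_of_lt_of_le hB habs2
      _ < ε := by linarith
end

section
/- Let m ≥ 2 and 0 ≤ r ≤ 2m. If an independent exact r-cover of the grid graph ℤ^m exists, then the point (((2m−r)/(2m))², (2m−r)/(2m)) belongs to P(T^m). -/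
open Finset
open scoped Classical

/-- Adjacency in the grid graph `ℤ^m`: two vertices are adjacent iff they differ by `±1`
in exactly one coordinate. -/
def gridAdj (m : ℕ) (x y : Fin m → ℤ) : Prop :=
  ∃ j, (y j = x j + 1 ∨ y j = x j - 1) ∧ ∀ i, i ≠ j → y i = x i

/-- `S ⊆ ℤ^m` is an independent exact `r`-cover if `S` is an independent set in the grid
graph `ℤ^m` and every vertex not in `S` is adjacent to exactly `r` elements of `S`. -/
def IsIndepExactCover (m r : ℕ) (S : Set (Fin m → ℤ)) : Prop :=
  (∀ x ∈ S, ∀ y ∈ S, ¬ gridAdj m x y) ∧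
    ∀ x ∉ S, {y | y ∈ S ∧ gridAdj m x y}.ncard = r

/-- grid neighbour parametrization -/
def gnbr (m : ℕ) (x : Fin m → ℤ) (p : Fin m × Bool) : Fin m → ℤ :=
  Function.update x p.1 (x p.1 + if p.2 then 1 else -1)

def tnbr (m k : ℕ) (v : Fin m → ZMod k) (p : Fin m × Bool) : Fin m → ZMod k :=
  Function.update v p.1 (v p.1 + if p.2 then 1 else -1)

lemma gnbr_self (m : ℕ) (x : Fin m → ℤ) (p : Fin m × Bool) :
    gnbr m x p p.1 = x p.1 + if p.2 then 1 else -1 := by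
  simp [gnbr]

lemma gnbr_other (m : ℕ) (x : Fin m → ℤ) (p : Fin m × Bool) {i : Fin m} (hi : i ≠ p.1) :
    gnbr m x p i = x i := by
  simp [gnbr, Function.update_of_ne hi]

lemma tnbr_self (m k : ℕ) (v : Fin m → ZMod k) (p : Fin m × Bool) :
    tnbr m k v p p.1 = v p.1 + if p.2 then 1 else -1 := by
  simp [tnbr]

lemma tnbr_other (m k : ℕ) (v : Fin m → ZMod k) (p : Fin m × Bool) {i : Fin m} (hi : i ≠ p.1) :
    tnbr m k v p i = v i := by
  simp [tnbr, Function.update_of_ne hi]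

lemma gridAdj_iff (m : ℕ) (x y : Fin m → ℤ) :
    gridAdj m x y ↔ ∃ p : Fin m × Bool, y = gnbr m x p := by
  constructor
  · rintro ⟨j, hj, hother⟩
    rcases hj with hj | hj
    · exact ⟨(j, true), funext fun i => by
        by_cases hij : i = j
        · subst hij; simp [gnbr, hj]
        · rw [hother i hij, gnbr_other m x (j, true) hij]⟩
    · exact ⟨(j, false), funext fun i => by
        by_cases hij : i = j
        · subst hij; simp [gnbr, hj, sub_eq_add_neg]
        · rw [hother i hij, gnbr_other m x (j, false) hij]⟩
  · rintro ⟨p, rfl⟩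
    refine ⟨p.1, ?_, fun i hi => gnbr_other m x p hi⟩
    rcases Bool.eq_false_or_eq_true p.2 with hb | hb <;>
      simp [gnbr_self, hb, sub_eq_add_neg]

lemma gnbr_injective (m : ℕ) (x : Fin m → ℤ) : Function.Injective (gnbr m x) := by
  intro p q hpq
  have h1 : p.1 = q.1 := by
    by_contra hne
    have := congrFun hpq p.1
    rw [gnbr_self, gnbr_other m x q (Ne.symm (by exact fun h => hne h.symm) : p.1 ≠ q.1)] at this
    rcases Bool.eq_false_or_eq_true p.2 with hb | hb <;> simp [hb] at this
  have h2 : p.2 = q.2 := by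
    have := congrFun hpq p.1
    rw [gnbr_self, show p.1 = q.1 from h1, gnbr_self] at this
    rcases Bool.eq_false_or_eq_true p.2 with hb | hb <;>
      rcases Bool.eq_false_or_eq_true q.2 with hc | hc <;> simp [hb, hc] at this ⊢ <;> omega
  exact Prod.ext h1 h2

lemma two_ne_zero_zmod {k : ℕ} (hk : 3 ≤ k) : (2 : ZMod k) ≠ 0 := by
  intro h2
  have : ((2 : ℕ) : ZMod k) = 0 := by push_cast; exact h2
  rw [ZMod.natCast_eq_zero_iff] at this
  have := Nat.le_of_dvd (by norm_num) this
  omega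

lemma ite_pm_ne_zero {k : ℕ} (hk : 3 ≤ k) (b : Bool) :
    (if b then (1 : ZMod k) else -1) ≠ 0 := by
  haveI : Fact (1 < k) := ⟨by omega⟩
  cases b
  · simpa using (neg_ne_zero.mpr (one_ne_zero (α := ZMod k)))
  · simpa using one_ne_zero (α := ZMod k)

lemma ite_pm_inj {k : ℕ} (hk : 3 ≤ k) {b c : Bool}
    (h : (if b then (1 : ZMod k) else -1) = (if c then (1 : ZMod k) else -1)) : b = c := by
  cases b <;> cases c
  · rfl
  · norm_num at h
    exact absurd (by linear_combination -h) (two_ne_zero_zmod hk)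
  · norm_num at h
    exact absurd (by linear_combination h) (two_ne_zero_zmod hk)
  · rfl

lemma torusAdj_iff {m k : ℕ} (hk : 3 ≤ k) (v w : Fin m → ZMod k) :
    torusAdj m k v w ↔ ∃ p : Fin m × Bool, w = tnbr m k v p := by
  haveI : Fact (1 < k) := ⟨by omega⟩
  constructor
  · rintro ⟨-, j, hj, hother⟩
    rcases hj with hj | hj
    · exact ⟨(j, true), funext fun i => by
        by_cases hij : i = j
        · subst hij; simp [tnbr, hj]
        · rw [hother i hij, tnbr_other m k v (j, true) hij]⟩
    · exact ⟨(j, false), funext fun i => by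
        by_cases hij : i = j
        · subst hij; simp [tnbr, hj, sub_eq_add_neg]
        · rw [hother i hij, tnbr_other m k v (j, false) hij]⟩
  · rintro ⟨p, rfl⟩
    refine ⟨?_, p.1, ?_, fun i hi => tnbr_other m k v p hi⟩
    · intro hvw
      have h0 := congrFun hvw p.1
      rw [tnbr_self] at h0
      exact ite_pm_ne_zero hk p.2 (by linear_combination -h0)
    · rcases Bool.eq_false_or_eq_true p.2 with hb | hb <;>
        simp [tnbr_self, hb, sub_eq_add_neg]

lemma tnbr_injective {m k : ℕ} (hk : 3 ≤ k) (v : Fin m → ZMod k) :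
    Function.Injective (tnbr m k v) := by
  intro p q hpq
  have h1 : p.1 = q.1 := by
    by_contra hne
    have h0 := congrFun hpq p.1
    rw [tnbr_self, tnbr_other m k v q (hne : p.1 ≠ q.1)] at h0
    exact ite_pm_ne_zero hk p.2 (by linear_combination h0)
  have h2 : p.2 = q.2 := by
    have h0 := congrFun hpq p.1
    rw [tnbr_self, show p.1 = q.1 from h1, tnbr_self, ← show p.1 = q.1 from h1] at h0
    exact ite_pm_inj hk (by linear_combination h0)
  exact Prod.ext h1 h2

/-- Counting neighbours in a finite set via the parametrization, grid version. -/
lemma grid_count (m : ℕ) (T : Finset (Fin m → ℤ)) (x : Fin m → ℤ) :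
    (T.filter (fun y => gridAdj m x y)).card
      = ((univ : Finset (Fin m × Bool)).filter (fun p => gnbr m x p ∈ T)).card := by
  refine (Finset.card_bij (fun p _ => gnbr m x p) ?_ ?_ ?_).symm
  · intro p hp
    simp only [mem_filter] at hp ⊢
    exact ⟨hp.2, (gridAdj_iff m x _).2 ⟨p, rfl⟩⟩
  · intro p _ q _ hpq
    exact gnbr_injective m x hpq
  · intro y hy
    simp only [mem_filter] at hy
    obtain ⟨p, rfl⟩ := (gridAdj_iff m x y).1 hy.2
    exact ⟨p, by simp [hy.1], rfl⟩

/-- Counting neighbours in a finite set via the parametrization, torus version. -/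
lemma torus_count {m k : ℕ} (hk : 3 ≤ k) (T : Finset (Fin m → ZMod k)) (v : Fin m → ZMod k) :
    torusDegIn m k T v
      = ((univ : Finset (Fin m × Bool)).filter (fun p => tnbr m k v p ∈ T)).card := by
  refine (Finset.card_bij (fun p _ => tnbr m k v p) ?_ ?_ ?_).symm
  · intro p hp
    simp only [mem_filter] at hp ⊢
    exact ⟨hp.2, (torusAdj_iff hk v _).2 ⟨p, rfl⟩⟩
  · intro p _ q _ hpq
    exact tnbr_injective hk v hpq
  · intro w hw
    simp only [torusDegIn, mem_filter] at hw
    obtain ⟨p, rfl⟩ := (torusAdj_iff hk v w).1 hw.2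
    exact ⟨p, by simp [hw.1], rfl⟩

lemma torusDegIn_le {m k : ℕ} (hk : 3 ≤ k) (T : Finset (Fin m → ZMod k)) (v : Fin m → ZMod k) :
    torusDegIn m k T v ≤ 2 * m := by
  rw [torus_count hk]
  calc ((univ : Finset (Fin m × Bool)).filter _).card ≤ (univ : Finset (Fin m × Bool)).card :=
        card_filter_le _ _
    _ = 2 * m := by simp [Finset.card_univ, mul_comm]

lemma torusAdj_symm {m k : ℕ} {v w : Fin m → ZMod k} (h : torusAdj m k v w) :
    torusAdj m k w v := by
  obtain ⟨hne, j, hj, hother⟩ := h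
  refine ⟨hne.symm, j, ?_, fun i hi => (hother i hi).symm⟩
  rcases hj with hj | hj
  · right; rw [hj]; ring
  · left; rw [hj]; ring

/-- From the exact cover property: `x ∉ S` has exactly `r` parametrized neighbours in `S`. -/
lemma cover_count {m r : ℕ} {S : Set (Fin m → ℤ)} (hS : IsIndepExactCover m r S)
    {x : Fin m → ℤ} (hx : x ∉ S) :
    ((univ : Finset (Fin m × Bool)).filter (fun p => gnbr m x p ∈ S)).card = r := by
  have hset : {y | y ∈ S ∧ gridAdj m x y}
      = ↑(((univ : Finset (Fin m × Bool)).filter (fun p => gnbr m x p ∈ S)).image (gnbr m x)) := by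
    ext y
    simp only [Set.mem_setOf_eq, coe_image, Set.mem_image, mem_coe, mem_filter, mem_univ,
      true_and]
    constructor
    · rintro ⟨hyS, hadj⟩
      obtain ⟨p, rfl⟩ := (gridAdj_iff m x y).1 hadj
      exact ⟨p, hyS, rfl⟩
    · rintro ⟨p, hpS, rfl⟩
      exact ⟨hpS, (gridAdj_iff m x _).2 ⟨p, rfl⟩⟩
  have := hS.2 x hx
  rw [hset, Set.ncard_coe_finset, Finset.card_image_of_injective _ (gnbr_injective m x)] at this
  exact this

/-- Independence: neighbours of a point of `S` are not in `S`. -/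
lemma indep_nbr {m r : ℕ} {S : Set (Fin m → ℤ)} (hS : IsIndepExactCover m r S)
    {x : Fin m → ℤ} (hx : x ∈ S) (p : Fin m × Bool) : gnbr m x p ∉ S := by
  intro hmem
  exact hS.1 x hx (gnbr m x p) hmem ((gridAdj_iff m x _).2 ⟨p, rfl⟩)

lemma zmod_val_add_one {k : ℕ} (hk : 3 ≤ k) (a : ZMod k) (h : a.val + 1 < k) :
    (a + 1).val = a.val + 1 := by
  haveI : NeZero k := ⟨by omega⟩
  haveI : Fact (1 < k) := ⟨by omega⟩
  rw [ZMod.val_add, ZMod.val_one]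
  exact Nat.mod_eq_of_lt h

lemma zmod_val_sub_one {k : ℕ} (hk : 3 ≤ k) (a : ZMod k) (h : 1 ≤ a.val) :
    (a - 1).val + 1 = a.val := by
  haveI : NeZero k := ⟨by omega⟩
  haveI : Fact (1 < k) := ⟨by omega⟩
  have key : a - 1 + 1 = a := by ring
  have hval : a.val = ((a - 1).val + 1) % k := by
    conv_lhs => rw [← key]
    rw [ZMod.val_add, ZMod.val_one]
  have hlt : (a - 1).val < k := ZMod.val_lt _
  rcases lt_or_ge ((a - 1).val + 1) k with hc | hc
  · rw [Nat.mod_eq_of_lt hc] at hval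
    omega
  · have : (a - 1).val + 1 = k := by omega
    rw [this, Nat.mod_self] at hval
    omega

/-- The canonical representative of a torus vertex in the box `[0,k)^m`. -/
def rep (m k : ℕ) (v : Fin m → ZMod k) : Fin m → ℤ := fun i => ((v i).val : ℤ)

lemma rep_injective (m k : ℕ) (hk : 3 ≤ k) : Function.Injective (rep m k) := by
  haveI : NeZero k := ⟨by omega⟩
  intro v w hvw
  funext i
  have := congrFun hvw i
  simp only [rep, Int.natCast_inj] at this
  exact ZMod.val_injective k this

lemma rep_tnbr {m k : ℕ} (hk : 3 ≤ k) (v : Fin m → ZMod k) (p : Fin m × Bool)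
    (h1 : 1 ≤ (v p.1).val) (h2 : (v p.1).val + 2 ≤ k) :
    rep m k (tnbr m k v p) = gnbr m (rep m k v) p := by
  funext i
  by_cases hi : i = p.1
  · rw [hi]
    show ((tnbr m k v p p.1).val : ℤ) = gnbr m (rep m k v) p p.1
    rw [tnbr_self, gnbr_self]
    rcases Bool.eq_false_or_eq_true p.2 with hb | hb
    · rw [hb, if_pos rfl, if_pos rfl]
      have := zmod_val_add_one hk (v p.1) (by omega)
      show ((v p.1 + 1).val : ℤ) = ((v p.1).val : ℤ) + 1
      omega
    · rw [hb, if_neg (by simp : ¬(false = true)), if_neg (by simp : ¬(false = true))]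
      have := zmod_val_sub_one hk (v p.1) h1
      rw [show v p.1 + -1 = v p.1 - 1 by ring]
      show ((v p.1 - 1).val : ℤ) = ((v p.1).val : ℤ) + -1
      omega
  · show ((tnbr m k v p i).val : ℤ) = gnbr m (rep m k v) p i
    rw [tnbr_other m k v p hi, gnbr_other m (rep m k v) p hi]
    rfl

/-- Transfer of counting along `rep`: the torus maps bijectively onto the box `[0,k)^m`. -/
lemma card_rep_filter {m k : ℕ} [NeZero k] (hk : 3 ≤ k) (P : (Fin m → ℤ) → Prop) [DecidablePred P] :
    ((univ : Finset (Fin m → ZMod k)).filter (fun v => P (rep m k v))).card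
      = ((Fintype.piFinset (fun _ : Fin m => Finset.Ico (0 : ℤ) k)).filter P).card := by
  refine Finset.card_bij (fun v _ => rep m k v) ?_ ?_ ?_
  · intro v hv
    simp only [mem_filter, mem_univ, true_and] at hv
    simp only [mem_filter, Fintype.mem_piFinset, Finset.mem_Ico]
    refine ⟨fun i => ⟨?_, ?_⟩, hv⟩
    · show (0 : ℤ) ≤ ((v i).val : ℤ)
      positivity
    · show ((v i).val : ℤ) < (k : ℤ)
      exact_mod_cast ZMod.val_lt (v i)
  · intro v _ w _ hvw
    exact rep_injective m k hk hvw
  · intro x hx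
    simp only [mem_filter, Fintype.mem_piFinset, Finset.mem_Ico] at hx
    have hrep : rep m k (fun i => ((x i).toNat : ZMod k)) = x := by
      funext i
      have h0 := (hx.1 i).1
      have h1 := (hx.1 i).2
      show ((((x i).toNat : ZMod k)).val : ℤ) = x i
      rw [ZMod.val_natCast, Nat.mod_eq_of_lt (by omega)]
      omega
    exact ⟨fun i => ((x i).toNat : ZMod k), by
      simp only [mem_filter, mem_univ, true_and, hrep]; exact hx.2, hrep⟩

section boxes
variable {m : ℕ}

lemma box_card (lo hi : Fin m → ℤ) :
    (Fintype.piFinset fun i => Finset.Ico (lo i) (hi i)).card = ∏ i, (hi i - lo i).toNat := by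
  rw [Fintype.card_piFinset]
  exact Finset.prod_congr rfl fun i _ => Int.card_Ico _ _

lemma slice_card_le (lo hi : Fin m → ℤ) (k : ℕ) (hbound : ∀ i, (hi i - lo i).toNat ≤ k)
    (j : Fin m) (c : ℤ) :
    (((Fintype.piFinset fun i => Finset.Ico (lo i) (hi i))).filter (fun x => x j = c)).card
      ≤ k ^ (m - 1) := by
  have hsub : ((Fintype.piFinset fun i => Finset.Ico (lo i) (hi i))).filter (fun x => x j = c)
      ⊆ Fintype.piFinset fun i => if i = j then {c} else Finset.Ico (lo i) (hi i) := by
    intro x hx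
    simp only [mem_filter, Fintype.mem_piFinset] at hx ⊢
    intro i
    by_cases hij : i = j
    · rw [if_pos hij, hij, hx.2]; exact Finset.mem_singleton_self c
    · rw [if_neg hij]; exact hx.1 i
  calc _ ≤ (Fintype.piFinset fun i => if i = j then ({c} : Finset ℤ)
        else Finset.Ico (lo i) (hi i)).card := Finset.card_le_card hsub
    _ = ∏ i, (if i = j then ({c} : Finset ℤ) else Finset.Ico (lo i) (hi i)).card :=
        Fintype.card_piFinset _
    _ ≤ ∏ i, (if i = j then 1 else k) := by
        apply Finset.prod_le_prod'
        intro i _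
        by_cases hij : i = j
        · simp [hij]
        · rw [if_neg hij, if_neg hij, Int.card_Ico]
          exact hbound i
    _ = 1 * ∏ i ∈ univ.erase j, (if i = j then 1 else k) := by
        rw [← Finset.mul_prod_erase univ _ (mem_univ j), if_pos rfl]
    _ ≤ k ^ (m - 1) := by
        rw [one_mul]
        calc ∏ i ∈ univ.erase j, (if i = j then 1 else k)
            ≤ ∏ _i ∈ univ.erase j, k :=
              Finset.prod_le_prod' (fun i hi => by rw [if_neg (Finset.ne_of_mem_erase hi)])
          _ = k ^ (m - 1) := by
              rw [Finset.prod_const, Finset.card_erase_of_mem (mem_univ j), Finset.card_univ,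
                Fintype.card_fin]

lemma boundary_card_le (lo hi : Fin m → ℤ) (k : ℕ) (hbound : ∀ i, (hi i - lo i).toNat ≤ k) :
    ((Fintype.piFinset fun i => Finset.Ico (lo i) (hi i))
        \ (Fintype.piFinset fun i => Finset.Ico (lo i + 1) (hi i - 1))).card
      ≤ 2 * m * k ^ (m - 1) := by
  have hsub : (Fintype.piFinset fun i => Finset.Ico (lo i) (hi i))
        \ (Fintype.piFinset fun i => Finset.Ico (lo i + 1) (hi i - 1))
      ⊆ (univ : Finset (Fin m × Bool)).biUnion (fun p =>
          ((Fintype.piFinset fun i => Finset.Ico (lo i) (hi i))).filter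
            (fun x => x p.1 = if p.2 then lo p.1 else hi p.1 - 1)) := by
    intro x hx
    simp only [mem_sdiff, Fintype.mem_piFinset, Finset.mem_Ico] at hx
    obtain ⟨hQ, hnot⟩ := hx
    push_neg at hnot
    obtain ⟨j, hj⟩ := hnot
    have hj2 := hQ j
    have hj' : x j = lo j ∨ x j = hi j - 1 := by omega
    simp only [mem_biUnion, mem_univ, mem_filter, Fintype.mem_piFinset, Finset.mem_Ico]
    rcases hj' with hj | hj
    · exact ⟨(j, true), trivial, fun i => hQ i, by simp only [if_pos rfl]; exact hj⟩
    · exact ⟨(j, false), trivial, fun i => hQ i, by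
        simp only [if_neg (by simp : ¬(false = true))]; exact hj⟩
  calc _ ≤ _ := Finset.card_le_card hsub
    _ ≤ ∑ p : Fin m × Bool, (((Fintype.piFinset fun i => Finset.Ico (lo i) (hi i))).filter
          (fun x => x p.1 = if p.2 then lo p.1 else hi p.1 - 1)).card := Finset.card_biUnion_le
    _ ≤ ∑ _p : Fin m × Bool, k ^ (m - 1) :=
        Finset.sum_le_sum (fun p _ => slice_card_le lo hi k hbound p.1 _)
    _ = 2 * m * k ^ (m - 1) := by
        rw [Finset.sum_const, Finset.card_univ, Fintype.card_prod, Fintype.card_fin,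
          Fintype.card_bool, smul_eq_mul]
        ring

lemma interior_nbr_mem (lo hi : Fin m → ℤ) {x : Fin m → ℤ}
    (hx : x ∈ Fintype.piFinset fun i => Finset.Ico (lo i + 1) (hi i - 1)) (p : Fin m × Bool) :
    gnbr m x p ∈ Fintype.piFinset fun i => Finset.Ico (lo i) (hi i) := by
  simp only [Fintype.mem_piFinset, Finset.mem_Ico] at hx ⊢
  intro i
  by_cases hij : i = p.1
  · rw [hij, gnbr_self]
    have h := hx p.1
    rcases Bool.eq_false_or_eq_true p.2 with hb | hb <;> rw [hb] <;> norm_num <;> omega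
  · rw [gnbr_other m x p hij]
    have := hx i
    omega
end boxes

lemma card_filter_product {α β : Type*} (s : Finset α) (t : Finset β) (p : α → β → Prop) :
    ((s ×ˢ t).filter (fun q => p q.1 q.2)).card = ∑ a ∈ s, (t.filter (p a)).card := by
  rw [Finset.card_filter, Finset.sum_product]
  exact Finset.sum_congr rfl fun a _ => (Finset.card_filter _ _).symm

lemma card_filter_product' {α β : Type*} (s : Finset α) (t : Finset β) (p : α → β → Prop) :
    ((s ×ˢ t).filter (fun q => p q.1 q.2)).card = ∑ b ∈ t, (s.filter (fun a => p a b)).card := by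
  rw [Finset.card_filter, Finset.sum_product_right]
  exact Finset.sum_congr rfl fun b _ => (Finset.card_filter _ _).symm

lemma gridAdj_symm {m : ℕ} {x y : Fin m → ℤ} (h : gridAdj m x y) : gridAdj m y x := by
  obtain ⟨j, hj, hother⟩ := h
  refine ⟨j, ?_, fun i hi => (hother i hi).symm⟩
  rcases hj with hj | hj
  · right; rw [hj]; ring
  · left; rw [hj]; ring

lemma density_estimate {m r : ℕ} {S : Set (Fin m → ℤ)} (hS : IsIndepExactCover m r S)
    (hr : r ≤ 2 * m) (lo hi : Fin m → ℤ) (k : ℕ)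
    (hbound : ∀ i, (hi i - lo i).toNat ≤ k) :
    (2 * m + r) * ((Fintype.piFinset fun i => Finset.Ico (lo i) (hi i)).filter
        (fun x => x ∈ S)).card
      ≤ r * (Fintype.piFinset fun i => Finset.Ico (lo i) (hi i)).card + 4 * m ^ 2 * k ^ (m - 1)
    ∧ r * (Fintype.piFinset fun i => Finset.Ico (lo i) (hi i)).card
      ≤ (2 * m + r) * ((Fintype.piFinset fun i => Finset.Ico (lo i) (hi i)).filter
        (fun x => x ∈ S)).card + 4 * m ^ 2 * k ^ (m - 1) := by
  set Q := Fintype.piFinset fun i => Finset.Ico (lo i) (hi i) with hQdef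
  set iQ := Fintype.piFinset fun i => Finset.Ico (lo i + 1) (hi i - 1) with hiQdef
  set SQ := Q.filter (fun x => x ∈ S) with hSQdef
  set NQ := Q.filter (fun x => x ∉ S) with hNQdef
  have hpart : SQ.card + NQ.card = Q.card := Finset.card_filter_add_card_filter_not _
  have hbnd : (Q \ iQ).card ≤ 2 * m * k ^ (m - 1) := boundary_card_le lo hi k hbound
  set A := ((SQ ×ˢ NQ).filter (fun q => gridAdj m q.1 q.2)).card with hAdef
  -- counts from the S side
  have hA1 : A = ∑ x ∈ SQ, (NQ.filter (fun y => gridAdj m x y)).card :=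
    card_filter_product _ _ _
  have hA2 : A = ∑ y ∈ NQ, (SQ.filter (fun x => gridAdj m x y)).card :=
    card_filter_product' _ _ _
  have hcx_le : ∀ x ∈ SQ, (NQ.filter (fun y => gridAdj m x y)).card ≤ 2 * m := by
    intro x _
    rw [grid_count]
    calc _ ≤ (univ : Finset (Fin m × Bool)).card := card_filter_le _ _
      _ = 2 * m := by simp [Finset.card_univ, mul_comm]
  have hcx_eq : ∀ x ∈ SQ, x ∈ iQ → (NQ.filter (fun y => gridAdj m x y)).card = 2 * m := by
    intro x hx hxi
    rw [grid_count]
    have : (univ : Finset (Fin m × Bool)).filter (fun p => gnbr m x p ∈ NQ) = univ := by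
      apply Finset.filter_true_of_mem
      intro p _
      simp only [hNQdef, mem_filter]
      have hxS : x ∈ S := (Finset.mem_filter.1 hx).2
      exact ⟨interior_nbr_mem lo hi hxi p, indep_nbr hS hxS p⟩
    rw [this]
    simp [Finset.card_univ, mul_comm]
  have hdy_le : ∀ y ∈ NQ, (SQ.filter (fun x => gridAdj m x y)).card ≤ r := by
    intro y hy
    have hyS : y ∉ S := (Finset.mem_filter.1 hy).2
    have hsub : SQ.filter (fun x => gridAdj m x y)
        ⊆ ((univ : Finset (Fin m × Bool)).filter (fun p => gnbr m y p ∈ S)).image (gnbr m y) := by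
      intro x hx
      simp only [mem_filter, hSQdef] at hx
      obtain ⟨⟨_, hxS⟩, hadj⟩ := hx
      obtain ⟨p, rfl⟩ := (gridAdj_iff m y x).1 (gridAdj_symm hadj)
      exact Finset.mem_image_of_mem _ (by simp [hxS])
    calc _ ≤ _ := Finset.card_le_card hsub
      _ = _ := Finset.card_image_of_injective _ (gnbr_injective m y)
      _ = r := cover_count hS hyS
  have hdy_eq : ∀ y ∈ NQ, y ∈ iQ → (SQ.filter (fun x => gridAdj m x y)).card = r := by
    intro y hy hyi
    have hyS : y ∉ S := (Finset.mem_filter.1 hy).2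
    have heq : SQ.filter (fun x => gridAdj m x y)
        = ((univ : Finset (Fin m × Bool)).filter (fun p => gnbr m y p ∈ S)).image (gnbr m y) := by
      apply Finset.Subset.antisymm
      · intro x hx
        simp only [mem_filter, hSQdef] at hx
        obtain ⟨⟨_, hxS⟩, hadj⟩ := hx
        obtain ⟨p, rfl⟩ := (gridAdj_iff m y x).1 (gridAdj_symm hadj)
        exact Finset.mem_image_of_mem _ (by simp [hxS])
      · intro x hx
        simp only [Finset.mem_image, mem_filter, mem_univ, true_and] at hx
        obtain ⟨p, hpS, rfl⟩ := hx
        simp only [mem_filter, hSQdef]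
        exact ⟨⟨interior_nbr_mem lo hi hyi p, hpS⟩,
          gridAdj_symm ((gridAdj_iff m y _).2 ⟨p, rfl⟩)⟩
    rw [heq, Finset.card_image_of_injective _ (gnbr_injective m y), cover_count hS hyS]
  -- upper bounds for A
  have hA_le_S : A ≤ 2 * m * SQ.card := by
    rw [hA1]
    calc _ ≤ ∑ _x ∈ SQ, 2 * m := Finset.sum_le_sum hcx_le
      _ = 2 * m * SQ.card := by rw [Finset.sum_const, smul_eq_mul, mul_comm]
  have hA_le_N : A ≤ r * NQ.card := by
    rw [hA2]
    calc _ ≤ ∑ _y ∈ NQ, r := Finset.sum_le_sum hdy_le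
      _ = r * NQ.card := by rw [Finset.sum_const, smul_eq_mul, mul_comm]
  -- lower bounds for A
  have hSQsplit : SQ.card ≤ (SQ.filter (fun x => x ∈ iQ)).card + (Q \ iQ).card := by
    have : SQ ⊆ (SQ.filter (fun x => x ∈ iQ)) ∪ (Q \ iQ) := by
      intro x hx
      by_cases hxi : x ∈ iQ
      · exact Finset.mem_union_left _ (Finset.mem_filter.2 ⟨hx, hxi⟩)
      · exact Finset.mem_union_right _
          (Finset.mem_sdiff.2 ⟨(Finset.mem_filter.1 hx).1, hxi⟩)
    calc SQ.card ≤ _ := Finset.card_le_card this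
      _ ≤ _ := Finset.card_union_le _ _
  have hNQsplit : NQ.card ≤ (NQ.filter (fun y => y ∈ iQ)).card + (Q \ iQ).card := by
    have : NQ ⊆ (NQ.filter (fun y => y ∈ iQ)) ∪ (Q \ iQ) := by
      intro y hy
      by_cases hyi : y ∈ iQ
      · exact Finset.mem_union_left _ (Finset.mem_filter.2 ⟨hy, hyi⟩)
      · exact Finset.mem_union_right _
          (Finset.mem_sdiff.2 ⟨(Finset.mem_filter.1 hy).1, hyi⟩)
    calc NQ.card ≤ _ := Finset.card_le_card this
      _ ≤ _ := Finset.card_union_le _ _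
  have hA_ge_S : 2 * m * SQ.card ≤ A + 2 * m * (Q \ iQ).card := by
    have h1 : 2 * m * (SQ.filter (fun x => x ∈ iQ)).card ≤ A := by
      rw [hA1]
      calc 2 * m * (SQ.filter (fun x => x ∈ iQ)).card
          = ∑ _x ∈ SQ.filter (fun x => x ∈ iQ), 2 * m := by
            rw [Finset.sum_const, smul_eq_mul, mul_comm]
        _ = ∑ x ∈ SQ.filter (fun x => x ∈ iQ), (NQ.filter (fun y => gridAdj m x y)).card :=
            Finset.sum_congr rfl (fun x hx => (hcx_eq x (Finset.mem_of_mem_filter _ hx)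
              (Finset.mem_filter.1 hx).2).symm)
        _ ≤ _ := Finset.sum_le_sum_of_subset (Finset.filter_subset _ _)
    calc 2 * m * SQ.card ≤ 2 * m * ((SQ.filter (fun x => x ∈ iQ)).card + (Q \ iQ).card) :=
          Nat.mul_le_mul_left _ hSQsplit
      _ = 2 * m * (SQ.filter (fun x => x ∈ iQ)).card + 2 * m * (Q \ iQ).card := by ring
      _ ≤ A + 2 * m * (Q \ iQ).card := by omega
  have hA_ge_N : r * NQ.card ≤ A + r * (Q \ iQ).card := by
    have h1 : r * (NQ.filter (fun y => y ∈ iQ)).card ≤ A := by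
      rw [hA2]
      calc r * (NQ.filter (fun y => y ∈ iQ)).card
          = ∑ _y ∈ NQ.filter (fun y => y ∈ iQ), r := by
            rw [Finset.sum_const, smul_eq_mul, mul_comm]
        _ = ∑ y ∈ NQ.filter (fun y => y ∈ iQ), (SQ.filter (fun x => gridAdj m x y)).card :=
            Finset.sum_congr rfl (fun y hy => (hdy_eq y (Finset.mem_of_mem_filter _ hy)
              (Finset.mem_filter.1 hy).2).symm)
        _ ≤ _ := Finset.sum_le_sum_of_subset (Finset.filter_subset _ _)
    calc r * NQ.card ≤ r * ((NQ.filter (fun y => y ∈ iQ)).card + (Q \ iQ).card) :=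
          Nat.mul_le_mul_left _ hNQsplit
      _ = r * (NQ.filter (fun y => y ∈ iQ)).card + r * (Q \ iQ).card := by ring
      _ ≤ A + r * (Q \ iQ).card := by omega
  constructor
  · -- (2m+r)|SQ| ≤ r|Q| + 4m²k^(m-1)
    have : (2 * m + r) * SQ.card = 2 * m * SQ.card + r * SQ.card := by ring
    rw [this]
    have h2 : 2 * m * (Q \ iQ).card ≤ 2 * m * (2 * m * k ^ (m - 1)) :=
      Nat.mul_le_mul_left _ hbnd
    have h4 : 2 * m * (2 * m * k ^ (m - 1)) = 4 * m ^ 2 * k ^ (m - 1) := by ring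
    have hrQ : r * NQ.card + r * SQ.card = r * Q.card := by
      rw [← hpart]; ring
    omega
  · have h2 : r * (Q \ iQ).card ≤ 2 * m * (2 * m * k ^ (m - 1)) :=
      Nat.mul_le_mul (by omega) hbnd
    have h4 : 2 * m * (2 * m * k ^ (m - 1)) = 4 * m ^ 2 * k ^ (m - 1) := by ring
    have hrQ : r * NQ.card + r * SQ.card = r * Q.card := by
      rw [← hpart]; ring
    have : (2 * m + r) * SQ.card = 2 * m * SQ.card + r * SQ.card := by ring
    omega

lemma piFinset_special_card (m k : ℕ) [NeZero m] (a : Finset ℤ) :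
    (Fintype.piFinset fun i : Fin m => if i = 0 then a else Finset.Ico (0 : ℤ) k).card
      = a.card * k ^ (m - 1) := by
  rw [Fintype.card_piFinset]
  rw [← Finset.mul_prod_erase univ _ (mem_univ (0 : Fin m)), if_pos rfl]
  congr 1
  calc ∏ i ∈ univ.erase (0 : Fin m), (if i = 0 then a else Finset.Ico (0 : ℤ) k).card
      = ∏ _i ∈ univ.erase (0 : Fin m), k := by
        refine Finset.prod_congr rfl fun i hi => ?_
        rw [if_neg (Finset.ne_of_mem_erase hi), Int.card_Ico]
        omega
    _ = k ^ (m - 1) := by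
        rw [Finset.prod_const, Finset.card_erase_of_mem (mem_univ _), Finset.card_univ,
          Fintype.card_fin]

/-- If an independent exact `r`-cover of `ℤ^m` exists, then
`(((2m−r)/(2m))², (2m−r)/(2m)) ∈ 𝒫(𝒯^m)`. -/
theorem cover_gives_point (m r : ℕ) (hm : 2 ≤ m) (hr : r ≤ 2 * m)
    (h : ∃ S : Set (Fin m → ℤ), IsIndepExactCover m r S) :
    (((2 * (m : ℝ) - r) / (2 * m)) ^ 2, (2 * (m : ℝ) - r) / (2 * m)) ∈ torusP m := by
  classical
  obtain ⟨S, hS⟩ := h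
  intro ε hε
  haveI : NeZero m := ⟨by omega⟩
  -- choose the scale K
  obtain ⟨K₀, hK₀⟩ := exists_nat_gt ((8 * m : ℝ) / ε)
  set K := K₀ + 1 with hKdef
  have hKpos : 0 < K := Nat.succ_pos _
  have hKbig : (8 * m : ℝ) / K < ε := by
    have hK' : (8 * m : ℝ) / ε < K := by
      have : (K₀ : ℝ) ≤ K := by exact_mod_cast Nat.le_succ _
      linarith
    have hKR : (0 : ℝ) < K := by positivity
    rw [div_lt_iff₀ hε] at hK'
    rw [div_lt_iff₀ hKR]
    nlinarith
  set k := 4 * m * K with hkdef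
  have h8 : 8 ≤ k := by
    calc (8 : ℕ) = (4 * 2) * 1 := by norm_num
      _ ≤ (4 * m) * K := Nat.mul_le_mul (by omega) hKpos
  have hk3 : 3 ≤ k := by omega
  haveI : NeZero k := ⟨by omega⟩
  refine ⟨k, by omega, ?_, ?_⟩
  · -- Even (k ^ m)
    refine (Nat.even_pow).2 ⟨⟨2 * m * K, by show 4*m*K = 2*m*K + 2*m*K; ring⟩, by omega⟩
  set t := (2 * m - r) * K with htdef
  have htk : t + r * K = 2 * m * K := by
    rw [htdef, Nat.sub_mul, Nat.sub_add_cancel (Nat.mul_le_mul_right K hr)]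
  set N1 := k ^ (m - 1) with hN1def
  have hN1pos : 0 < N1 := Nat.pow_pos (by omega)
  have hkm : k ^ m = k * N1 := by
    rw [hN1def, ← pow_succ']
    congr 1
    omega
  set half := 2 * m * K * N1 with hhalfdef
  have hhalfk : half + half = k ^ m := by
    rw [hkm, hhalfdef, hkdef]
    ring
  have ht_le : t ≤ k := by
    rw [htdef, hkdef]
    exact Nat.mul_le_mul (by omega) (le_refl K)
  have hhalfpos : 0 < half := by
    rw [hhalfdef]
    positivity
  have hktr : t + (2 * m + r) * K = k := by
    rw [htdef, hkdef, ← Nat.add_mul]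
    congr 1
    omega
  clear_value K k t N1 half
  -- grid-level colouring predicate
  set P0 : (Fin m → ℤ) → Prop := fun x => x 0 < (t : ℤ) ∨ ((t : ℤ) ≤ x 0 ∧ x ∈ S) with hP0def
  set B0 := (univ : Finset (Fin m → ZMod k)).filter (fun v => P0 (rep m k v)) with hB0def
  set Lset := (univ : Finset (Fin m → ZMod k)).filter
      (fun v => rep m k v 0 < (t : ℤ)) with hLdef
  set Sset := (univ : Finset (Fin m → ZMod k)).filter
      (fun v => (t : ℤ) ≤ rep m k v 0 ∧ rep m k v ∈ S) with hSsetdef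
  have hVcard : (univ : Finset (Fin m → ZMod k)).card = k ^ m := by
    rw [Finset.card_univ]
    simp [ZMod.card]
  -- cardinality of Lset
  have hLcard : Lset.card = t * N1 := by
    have hext : ((Fintype.piFinset fun _ : Fin m => Finset.Ico (0 : ℤ) k)).filter
          (fun x => x 0 < (t : ℤ))
        = Fintype.piFinset fun i : Fin m =>
            if i = 0 then Finset.Ico (0 : ℤ) t else Finset.Ico (0 : ℤ) k := by
      ext x
      simp only [mem_filter, Fintype.mem_piFinset, Finset.mem_Ico]
      constructor
      · rintro ⟨hx, hx0⟩ i
        by_cases hi : i = 0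
        · rw [if_pos hi, Finset.mem_Ico, hi]
          exact ⟨(hx 0).1, hx0⟩
        · rw [if_neg hi, Finset.mem_Ico]
          exact hx i
      · intro hx
        have hk0 : (t : ℤ) ≤ k := by exact_mod_cast ht_le
        constructor
        · intro i
          have := hx i
          by_cases hi : i = 0
          · rw [if_pos hi, Finset.mem_Ico] at this
            constructor
            · exact this.1
            · omega
          · rw [if_neg hi, Finset.mem_Ico] at this
            exact this
        · have := hx 0
          rw [if_pos rfl, Finset.mem_Ico] at this
          exact this.2
    have h2 : (((Fintype.piFinset fun _ : Fin m => Finset.Ico (0 : ℤ) k)).filter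
          (fun x => x 0 < (t : ℤ))).card = t * N1 := by
      rw [hext, piFinset_special_card, Int.card_Ico, hN1def]
      simp
    rw [hLdef]
    exact (card_rep_filter (m := m) (k := k) hk3 (fun x => x 0 < (t : ℤ))).trans h2
  -- the upper box and the density estimate
  set lo : Fin m → ℤ := fun i => if i = 0 then (t : ℤ) else 0 with hlodef
  set hi : Fin m → ℤ := fun _ => (k : ℤ) with hhidef
  have hbound : ∀ i, (hi i - lo i).toNat ≤ k := by
    intro i
    by_cases hi0 : i = 0
    · simp only [hlodef, hhidef, if_pos hi0]
      omega
    · simp only [hlodef, hhidef, if_neg hi0]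
      omega
  have hQ : Fintype.piFinset (fun i => Finset.Ico (lo i) (hi i))
      = Fintype.piFinset fun i : Fin m =>
          if i = 0 then Finset.Ico (t : ℤ) k else Finset.Ico (0 : ℤ) k := by
    congr 1
    funext i
    by_cases hi0 : i = 0
    · simp [hlodef, hhidef, hi0]
    · simp [hlodef, hhidef, hi0]
  have hQcard : (Fintype.piFinset (fun i => Finset.Ico (lo i) (hi i))).card
      = (2 * m + r) * K * N1 := by
    rw [hQ, piFinset_special_card, Int.card_Ico, hN1def]
    congr 1
    omega
  have hSQ : Sset.card
      = ((Fintype.piFinset fun i => Finset.Ico (lo i) (hi i)).filter (fun x => x ∈ S)).card := by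
    rw [hSsetdef]
    refine (card_rep_filter hk3 (fun x => (t : ℤ) ≤ x 0 ∧ x ∈ S)).trans ?_
    congr 1
    ext x
    simp only [mem_filter, Fintype.mem_piFinset, Finset.mem_Ico, hQ]
    constructor
    · rintro ⟨hx, hx0, hxS⟩
      refine ⟨fun i => ?_, hxS⟩
      by_cases hi0 : i = 0
      · rw [if_pos hi0, Finset.mem_Ico, hi0]
        exact ⟨hx0, (hx 0).2⟩
      · rw [if_neg hi0, Finset.mem_Ico]
        exact hx i
    · rintro ⟨hx, hxS⟩
      have h0 := hx 0
      rw [if_pos rfl, Finset.mem_Ico] at h0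
      have ht0 : (0 : ℤ) ≤ t := by positivity
      refine ⟨fun i => ?_, h0.1, hxS⟩
      by_cases hi0 : i = 0
      · rw [hi0]
        omega
      · have := hx i
        rw [if_neg hi0, Finset.mem_Ico] at this
        exact this
  obtain ⟨hd1, hd2⟩ := density_estimate hS hr lo hi k hbound
  rw [← hSQ, hQcard, ← hN1def] at hd1 hd2
  have hmr_pos : 0 < 2 * m + r := by omega
  have hcoe : 4 * m ^ 2 * N1 ≤ (2 * m + r) * (2 * m * N1) := by
    calc 4 * m ^ 2 * N1 = (2 * m) * (2 * m * N1) := by ring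
      _ ≤ (2 * m + r) * (2 * m * N1) := Nat.mul_le_mul_right _ (by omega)
  have hsq_ub : Sset.card ≤ r * K * N1 + 2 * m * N1 := by
    refine Nat.le_of_mul_le_mul_left ?_ hmr_pos
    calc (2 * m + r) * Sset.card ≤ r * ((2 * m + r) * K * N1) + 4 * m ^ 2 * N1 := hd1
      _ = (2 * m + r) * (r * K * N1) + 4 * m ^ 2 * N1 := by ring
      _ ≤ (2 * m + r) * (r * K * N1) + (2 * m + r) * (2 * m * N1) := Nat.add_le_add_left hcoe _
      _ = (2 * m + r) * (r * K * N1 + 2 * m * N1) := by ring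
  have hsq_lb : r * K * N1 ≤ Sset.card + 2 * m * N1 := by
    refine Nat.le_of_mul_le_mul_left ?_ hmr_pos
    calc (2 * m + r) * (r * K * N1) = r * ((2 * m + r) * K * N1) := by ring
      _ ≤ (2 * m + r) * Sset.card + 4 * m ^ 2 * N1 := hd2
      _ ≤ (2 * m + r) * Sset.card + (2 * m + r) * (2 * m * N1) := Nat.add_le_add_left hcoe _
      _ = (2 * m + r) * (Sset.card + 2 * m * N1) := by ring
  -- B0 decomposition
  have hB0union : B0 = Lset ∪ Sset := by
    ext v
    simp only [hB0def, hLdef, hSsetdef, mem_filter, mem_union, mem_univ, true_and, hP0def]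
  have hdisjLS : Disjoint Lset Sset := by
    rw [Finset.disjoint_left]
    intro v hv hv'
    rw [hLdef, mem_filter] at hv
    rw [hSsetdef, mem_filter] at hv'
    omega
  have hB0card : B0.card = t * N1 + Sset.card := by
    rw [hB0union, Finset.card_union_of_disjoint hdisjLS, hLcard]
  have hhalf_eq : half = t * N1 + r * K * N1 := by
    rw [hhalfdef, ← Nat.add_mul, ← htk]
  -- choose the balanced blue set B
  obtain ⟨B, W, hBcard, hWcard, hBW⟩ : ∃ B W : Finset (Fin m → ZMod k),
      B.card = half ∧ W.card ≤ 2 * m * N1 ∧ ∀ v ∉ W, (v ∈ B ↔ v ∈ B0) := by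
    rcases le_or_gt half B0.card with hcase | hcase
    · obtain ⟨E, hEsub, hEcard⟩ := Finset.exists_subset_card_eq
        (show B0.card - half ≤ B0.card by omega)
      refine ⟨B0 \ E, E, ?_, ?_, ?_⟩
      · rw [Finset.card_sdiff_of_subset hEsub, hEcard]
        omega
      · rw [hEcard]
        omega
      · intro v hv
        simp [Finset.mem_sdiff, hv]
    · have hcompl : half - B0.card ≤ (univ \ B0).card := by
        rw [Finset.card_sdiff_of_subset (Finset.subset_univ _), hVcard]
        omega
      obtain ⟨E, hEsub, hEcard⟩ := Finset.exists_subset_card_eq hcompl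
      have hEdisj : Disjoint B0 E := by
        rw [Finset.disjoint_right]
        intro v hv
        exact (Finset.mem_sdiff.1 (hEsub hv)).2
      refine ⟨B0 ∪ E, E, ?_, ?_, ?_⟩
      · rw [Finset.card_union_of_disjoint hEdisj, hEcard]
        omega
      · rw [hEcard]
        omega
      · intro v hv
        simp [Finset.mem_union, hv]
  -- the red set
  set R := (univ : Finset (Fin m → ZMod k)) \ B with hRdef
  have hRB : ∀ v, v ∈ R ∨ v ∈ B := fun v => by
    by_cases hv : v ∈ B
    · exact Or.inr hv
    · exact Or.inl (Finset.mem_sdiff.2 ⟨mem_univ v, hv⟩)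
  have hRBdisj : Disjoint R B := Finset.sdiff_disjoint
  have hRcard : R.card = half := by
    rw [hRdef, Finset.card_sdiff_of_subset (Finset.subset_univ _), hVcard, hBcard]
    omega
  -- the set of (potentially) bad vertices
  set Bad := (((univ : Finset (Fin m → ZMod k)).filter
      (fun v => (¬ ∀ i, 1 ≤ rep m k v i ∧ rep m k v i ≤ (k : ℤ) - 2)
        ∨ rep m k v 0 = (t : ℤ) - 1 ∨ rep m k v 0 = (t : ℤ)))
      ∪ W) ∪ ((univ : Finset (Fin m → ZMod k)).filter
      (fun v => ∃ p : Fin m × Bool, tnbr m k v p ∈ W)) with hBadDef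
  have hBadCard : Bad.card ≤ 16 * m ^ 2 * N1 := by
    have hf1 : ((univ : Finset (Fin m → ZMod k)).filter
        (fun v => (¬ ∀ i, 1 ≤ rep m k v i ∧ rep m k v i ≤ (k : ℤ) - 2)
          ∨ rep m k v 0 = (t : ℤ) - 1 ∨ rep m k v 0 = (t : ℤ))).card
        ≤ 2 * m * N1 + N1 + N1 := by
      have hsplit : ((univ : Finset (Fin m → ZMod k)).filter
          (fun v => (¬ ∀ i, 1 ≤ rep m k v i ∧ rep m k v i ≤ (k : ℤ) - 2)
            ∨ rep m k v 0 = (t : ℤ) - 1 ∨ rep m k v 0 = (t : ℤ)))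
          ⊆ ((univ : Finset (Fin m → ZMod k)).filter
              (fun v => ¬ ∀ i, 1 ≤ rep m k v i ∧ rep m k v i ≤ (k : ℤ) - 2))
            ∪ ((univ : Finset (Fin m → ZMod k)).filter
              (fun v => rep m k v 0 = (t : ℤ) - 1))
            ∪ ((univ : Finset (Fin m → ZMod k)).filter
              (fun v => rep m k v 0 = (t : ℤ))) := by
        intro v hv
        simp only [mem_filter, mem_univ, true_and, Finset.mem_union] at hv ⊢
        tauto
      have hA : ((univ : Finset (Fin m → ZMod k)).filter
          (fun v => ¬ ∀ i, 1 ≤ rep m k v i ∧ rep m k v i ≤ (k : ℤ) - 2)).card ≤ 2 * m * N1 := by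
        rw [card_rep_filter hk3 (fun x => ¬ ∀ i, 1 ≤ x i ∧ x i ≤ (k : ℤ) - 2)]
        have hsub : ((Fintype.piFinset fun _ : Fin m => Finset.Ico (0 : ℤ) k)).filter
              (fun x => ¬ ∀ i, 1 ≤ x i ∧ x i ≤ (k : ℤ) - 2)
            ⊆ (Fintype.piFinset fun _ : Fin m => Finset.Ico ((0 : ℤ)) k)
              \ (Fintype.piFinset fun _ : Fin m => Finset.Ico ((0 : ℤ) + 1) ((k : ℤ) - 1)) := by
          intro x hx
          simp only [mem_filter] at hx
          rw [Finset.mem_sdiff]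
          refine ⟨hx.1, fun hmem => hx.2 ?_⟩
          intro i
          have := hmem
          rw [Fintype.mem_piFinset] at this
          have h2 := this i
          rw [Finset.mem_Ico] at h2
          omega
        calc _ ≤ _ := Finset.card_le_card hsub
          _ ≤ 2 * m * k ^ (m - 1) :=
            boundary_card_le (fun _ => (0 : ℤ)) (fun _ => (k : ℤ)) k (fun i => by show ((k:ℤ) - 0).toNat ≤ k; omega)
          _ = 2 * m * N1 := by rw [hN1def]
      have hB1 : ((univ : Finset (Fin m → ZMod k)).filter
          (fun v => rep m k v 0 = (t : ℤ) - 1)).card ≤ N1 := by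
        rw [card_rep_filter hk3 (fun x => x 0 = (t : ℤ) - 1)]
        calc _ ≤ k ^ (m - 1) :=
            slice_card_le (fun _ => (0 : ℤ)) (fun _ => (k : ℤ)) k (fun i => by show ((k:ℤ) - 0).toNat ≤ k; omega) 0 _
          _ = N1 := by rw [hN1def]
      have hB2 : ((univ : Finset (Fin m → ZMod k)).filter
          (fun v => rep m k v 0 = (t : ℤ))).card ≤ N1 := by
        rw [card_rep_filter hk3 (fun x => x 0 = (t : ℤ))]
        calc _ ≤ k ^ (m - 1) :=
            slice_card_le (fun _ => (0 : ℤ)) (fun _ => (k : ℤ)) k (fun i => by show ((k:ℤ) - 0).toNat ≤ k; omega) 0 _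
          _ = N1 := by rw [hN1def]
      calc _ ≤ _ := Finset.card_le_card hsplit
        _ ≤ _ + _ := Finset.card_union_le _ _
        _ ≤ (2 * m * N1 + N1) + N1 := by
            refine Nat.add_le_add (le_trans (Finset.card_union_le _ _) ?_) hB2
            exact Nat.add_le_add hA hB1
        _ = 2 * m * N1 + N1 + N1 := rfl
    have hf3 : ((univ : Finset (Fin m → ZMod k)).filter
        (fun v => ∃ p : Fin m × Bool, tnbr m k v p ∈ W)).card ≤ 2 * m * W.card := by
      have hsub : ((univ : Finset (Fin m → ZMod k)).filter
          (fun v => ∃ p : Fin m × Bool, tnbr m k v p ∈ W))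
          ⊆ W.biUnion (fun w => (univ : Finset (Fin m → ZMod k)).filter
              (fun v => torusAdj m k w v)) := by
        intro v hv
        simp only [mem_filter, mem_univ, true_and] at hv
        obtain ⟨p, hp⟩ := hv
        rw [Finset.mem_biUnion]
        exact ⟨tnbr m k v p, hp, by
          simp only [mem_filter, mem_univ, true_and]
          exact torusAdj_symm ((torusAdj_iff hk3 v _).2 ⟨p, rfl⟩)⟩
      calc _ ≤ _ := Finset.card_le_card hsub
        _ ≤ ∑ w ∈ W, ((univ : Finset (Fin m → ZMod k)).filter
              (fun v => torusAdj m k w v)).card := Finset.card_biUnion_le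
        _ ≤ ∑ _w ∈ W, 2 * m := Finset.sum_le_sum (fun w _ => by
            have := torusDegIn_le hk3 (univ : Finset (Fin m → ZMod k)) w
            rw [torusDegIn] at this
            simpa using this)
        _ = 2 * m * W.card := by rw [Finset.sum_const, smul_eq_mul, mul_comm]
    have hmono : Bad.card ≤ (2 * m * N1 + N1 + N1) + W.card + 2 * m * W.card := by
      rw [hBadDef]
      calc _ ≤ _ + _ := Finset.card_union_le _ _
        _ ≤ (2 * m * N1 + N1 + N1) + W.card + 2 * m * W.card := by
          refine Nat.add_le_add (le_trans (Finset.card_union_le _ _) ?_) hf3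
          exact Nat.add_le_add hf1 le_rfl
    have hWb : W.card ≤ 2 * m * N1 := hWcard
    have hmm : 2 * m ≤ m * m := Nat.mul_le_mul_right m hm
    have h1 : W.card + 2 * m * W.card ≤ 2 * m * N1 + 2 * m * (2 * m * N1) :=
      Nat.add_le_add hWb (Nat.mul_le_mul_left _ hWb)
    have hc : 2 * m * N1 + N1 + N1 + (2 * m * N1 + 2 * m * (2 * m * N1)) ≤ 16 * m ^ 2 * N1 := by
      have h5 : 2 * m + 1 + 1 + (2 * m + 4 * (m * m)) ≤ 16 * (m * m) := by omega
      calc 2 * m * N1 + N1 + N1 + (2 * m * N1 + 2 * m * (2 * m * N1))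
          = (2 * m + 1 + 1 + (2 * m + 4 * (m * m))) * N1 := by ring
        _ ≤ 16 * (m * m) * N1 := Nat.mul_le_mul_right _ h5
        _ = 16 * m ^ 2 * N1 := by ring
    omega
  -- structural facts at good vertices
  have hkey : ∀ v, v ∉ Bad →
      (∀ i, 1 ≤ rep m k v i ∧ rep m k v i ≤ (k : ℤ) - 2) ∧
      rep m k v 0 ≠ (t : ℤ) - 1 ∧ rep m k v 0 ≠ (t : ℤ) ∧
      (v ∈ B ↔ P0 (rep m k v)) ∧
      (∀ p : Fin m × Bool, (tnbr m k v p ∈ B ↔ P0 (gnbr m (rep m k v) p))) := by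
    intro v hv
    rw [hBadDef] at hv
    simp only [Finset.mem_union, mem_filter, mem_univ, true_and, not_or] at hv
    obtain ⟨⟨hf1, hWv⟩, hf3⟩ := hv
    push_neg at hf1
    obtain ⟨hint, hne1, hne2⟩ := hf1
    push_neg at hf3
    refine ⟨hint, hne1, hne2, ?_, ?_⟩
    · rw [hBW v hWv, hB0def, mem_filter]
      simp
    · intro p
      rw [hBW _ (hf3 p), hB0def, mem_filter]
      have hrt : rep m k (tnbr m k v p) = gnbr m (rep m k v) p := by
        refine rep_tnbr hk3 v p ?_ ?_
        · have := (hint p.1).1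
          show (1 : ℕ) ≤ (v p.1).val
          have hrep : rep m k v p.1 = ((v p.1).val : ℤ) := rfl
          omega
        · have := (hint p.1).2
          have hrep : rep m k v p.1 = ((v p.1).val : ℤ) := rfl
          omega
      rw [hrt]
      simp
  -- degrees of good red vertices
  have hgoodR : ∀ v ∈ R, v ∉ Bad → torusDegIn m k R v = 2 * m - r := by
    intro v hvR hvBad
    obtain ⟨hint, hne1, hne2, hmemB, hnbrB⟩ := hkey v hvBad
    have hvnotB : v ∉ B := (Finset.mem_sdiff.1 (by rw [hRdef] at hvR; exact hvR)).2
    have hnP0 : ¬ P0 (rep m k v) := fun hp => hvnotB (hmemB.2 hp)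
    rw [hP0def] at hnP0
    beta_reduce at hnP0
    push_neg at hnP0
    obtain ⟨hge, hS'⟩ := hnP0
    have hxS : rep m k v ∉ S := fun hmem => hS' hge hmem
    have hx0 : (t : ℤ) + 1 ≤ rep m k v 0 := by omega
    have hnbr0 : ∀ p : Fin m × Bool, (t : ℤ) ≤ gnbr m (rep m k v) p 0 := by
      intro p
      by_cases hp0 : p.1 = 0
      · rw [show (0 : Fin m) = p.1 from hp0.symm, gnbr_self]
        rcases Bool.eq_false_or_eq_true p.2 with hb | hb <;> rw [hb] <;> norm_num <;>
          rw [hp0] <;> omega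
      · rw [gnbr_other m _ p (fun hh => hp0 hh.symm)]
        omega
    have hdeg : torusDegIn m k R v
        = ((univ : Finset (Fin m × Bool)).filter
            (fun p => ¬ (gnbr m (rep m k v) p ∈ S))).card := by
      rw [torus_count hk3]
      congr 1
      apply Finset.filter_congr
      intro p _
      have h1 : tnbr m k v p ∈ R ↔ tnbr m k v p ∉ B := by
        rw [hRdef, Finset.mem_sdiff]
        simp
      rw [h1, hnbrB p, hP0def]
      simp only [not_or, not_and, not_lt]
      constructor
      · intro hh
        exact hh.2 (hnbr0 p)
      · intro hh
        exact ⟨hnbr0 p, fun _ => hh⟩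
    rw [hdeg]
    have hcnt := cover_count hS hxS
    have hpart := Finset.card_filter_add_card_filter_not
      (s := (univ : Finset (Fin m × Bool))) (p := fun p => gnbr m (rep m k v) p ∈ S)
    have hcardP : (univ : Finset (Fin m × Bool)).card = 2 * m := by
      simp [Finset.card_univ, mul_comm]
    omega
  -- degrees of good blue vertices
  have hgoodB : ∀ v ∈ B, v ∉ Bad →
      torusDegIn m k B v = (if rep m k v 0 < (t : ℤ) then 2 * m else 0) := by
    intro v hvB hvBad
    obtain ⟨hint, hne1, hne2, hmemB, hnbrB⟩ := hkey v hvBad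
    have hP0v : P0 (rep m k v) := hmemB.1 hvB
    rw [torus_count hk3]
    by_cases hcase : rep m k v 0 < (t : ℤ)
    · rw [if_pos hcase]
      have hx0 : rep m k v 0 ≤ (t : ℤ) - 2 := by omega
      have hall : ∀ p : Fin m × Bool, tnbr m k v p ∈ B := by
        intro p
        refine (hnbrB p).2 ?_
        rw [hP0def]
        beta_reduce
        left
        by_cases hp0 : p.1 = 0
        · rw [show (0 : Fin m) = p.1 from hp0.symm, gnbr_self]
          rcases Bool.eq_false_or_eq_true p.2 with hb | hb <;> rw [hb] <;> norm_num <;>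
            rw [hp0] <;> omega
        · rw [gnbr_other m _ p (fun hh => hp0 hh.symm)]
          omega
      rw [Finset.filter_true_of_mem (fun p _ => hall p)]
      simp [Finset.card_univ, mul_comm]
    · rw [if_neg hcase]
      rw [hP0def] at hP0v
      beta_reduce at hP0v
      rcases hP0v with hP0v | hP0v
      · exact absurd hP0v hcase
      have hxS : rep m k v ∈ S := hP0v.2
      have hx0 : (t : ℤ) + 1 ≤ rep m k v 0 := by omega
      have hnbr0 : ∀ p : Fin m × Bool, (t : ℤ) ≤ gnbr m (rep m k v) p 0 := by
        intro p
        by_cases hp0 : p.1 = 0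
        · rw [show (0 : Fin m) = p.1 from hp0.symm, gnbr_self]
          rcases Bool.eq_false_or_eq_true p.2 with hb | hb <;> rw [hb] <;> norm_num <;>
            rw [hp0] <;> omega
        · rw [gnbr_other m _ p (fun hh => hp0 hh.symm)]
          omega
      have hnone : ∀ p : Fin m × Bool, tnbr m k v p ∉ B := by
        intro p hmem
        have hp := (hnbrB p).1 hmem
        rw [hP0def] at hp
        beta_reduce at hp
        rcases hp with hp | hp
        · have := hnbr0 p
          omega
        · exact indep_nbr hS hxS p hp.2
      rw [Finset.filter_false_of_mem (fun p _ => hnone p), Finset.card_empty]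
  -- ℕ-level bounds on the degree sums
  set nn := 2 * m - r with hnndef
  have hbadsub : ∀ X : Finset (Fin m → ZMod k),
      (X.filter (fun v => v ∈ Bad)).card ≤ Bad.card :=
    fun X => Finset.card_le_card (fun v hv => (Finset.mem_filter.1 hv).2)
  -- red side
  have hsplitR : ∑ v ∈ R, (torusDegIn m k R v) ^ 2
      = ∑ v ∈ R.filter (fun v => v ∈ Bad), (torusDegIn m k R v) ^ 2
        + ∑ v ∈ R.filter (fun v => ¬ v ∈ Bad), (torusDegIn m k R v) ^ 2 :=
    (Finset.sum_filter_add_sum_filter_not R _ _).symm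
  have hgoodsumR : ∑ v ∈ R.filter (fun v => ¬ v ∈ Bad), (torusDegIn m k R v) ^ 2
      = (R.filter (fun v => ¬ v ∈ Bad)).card * nn ^ 2 := by
    rw [Finset.sum_congr rfl (fun v hv => by
      rw [hgoodR v (Finset.mem_of_mem_filter _ hv) (Finset.mem_filter.1 hv).2, hnndef]),
      Finset.sum_const, smul_eq_mul]
  have hbadsumR : ∑ v ∈ R.filter (fun v => v ∈ Bad), (torusDegIn m k R v) ^ 2
      ≤ Bad.card * (2 * m) ^ 2 := by
    calc _ ≤ ∑ _v ∈ R.filter (fun v => v ∈ Bad), (2 * m) ^ 2 :=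
        Finset.sum_le_sum (fun v _ => Nat.pow_le_pow_left (torusDegIn_le hk3 R v) 2)
      _ = (R.filter (fun v => v ∈ Bad)).card * (2 * m) ^ 2 := by
          rw [Finset.sum_const, smul_eq_mul]
      _ ≤ Bad.card * (2 * m) ^ 2 := Nat.mul_le_mul_right _ (hbadsub R)
  have hcardsR : (R.filter (fun v => v ∈ Bad)).card
      + (R.filter (fun v => ¬ v ∈ Bad)).card = half := by
    rw [Finset.card_filter_add_card_filter_not, hRcard]
  have hR_ub : ∑ v ∈ R, (torusDegIn m k R v) ^ 2 ≤ half * nn ^ 2 + Bad.card * (2 * m) ^ 2 := by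
    rw [hsplitR, hgoodsumR]
    have h1 : (R.filter (fun v => ¬ v ∈ Bad)).card * nn ^ 2 ≤ half * nn ^ 2 :=
      Nat.mul_le_mul_right _ (by omega)
    omega
  have hR_lb : half * nn ^ 2
      ≤ (∑ v ∈ R, (torusDegIn m k R v) ^ 2) + Bad.card * (2 * m) ^ 2 := by
    rw [hsplitR, hgoodsumR]
    have h1 : half ≤ (R.filter (fun v => ¬ v ∈ Bad)).card + Bad.card := by
      have := hbadsub R
      omega
    have h2 : Bad.card * nn ^ 2 ≤ Bad.card * (2 * m) ^ 2 :=
      Nat.mul_le_mul_left _ (Nat.pow_le_pow_left (by omega) 2)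
    calc half * nn ^ 2
        ≤ ((R.filter (fun v => ¬ v ∈ Bad)).card + Bad.card) * nn ^ 2 :=
          Nat.mul_le_mul_right _ h1
      _ = (R.filter (fun v => ¬ v ∈ Bad)).card * nn ^ 2 + Bad.card * nn ^ 2 := by ring
      _ ≤ _ := by omega
  -- blue side
  set Gset := (B.filter (fun v => ¬ v ∈ Bad)).filter (fun v => rep m k v 0 < (t : ℤ)) with hGsetdef
  have hsplitB : ∑ v ∈ B, (torusDegIn m k B v) ^ 2
      = ∑ v ∈ B.filter (fun v => v ∈ Bad), (torusDegIn m k B v) ^ 2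
        + ∑ v ∈ B.filter (fun v => ¬ v ∈ Bad), (torusDegIn m k B v) ^ 2 :=
    (Finset.sum_filter_add_sum_filter_not B _ _).symm
  have hgoodsumB : ∑ v ∈ B.filter (fun v => ¬ v ∈ Bad), (torusDegIn m k B v) ^ 2
      = Gset.card * (2 * m) ^ 2 := by
    have h1 : ∑ v ∈ B.filter (fun v => ¬ v ∈ Bad), (torusDegIn m k B v) ^ 2
        = ∑ v ∈ B.filter (fun v => ¬ v ∈ Bad),
            (if rep m k v 0 < (t : ℤ) then (2 * m) ^ 2 else 0) := by
      refine Finset.sum_congr rfl (fun v hv => ?_)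
      rw [hgoodB v (Finset.mem_of_mem_filter _ hv) (Finset.mem_filter.1 hv).2]
      split <;> simp
    rw [h1, ← Finset.sum_filter, ← hGsetdef, Finset.sum_const, smul_eq_mul]
  have hbadsumB : ∑ v ∈ B.filter (fun v => v ∈ Bad), (torusDegIn m k B v) ^ 2
      ≤ Bad.card * (2 * m) ^ 2 := by
    calc _ ≤ ∑ _v ∈ B.filter (fun v => v ∈ Bad), (2 * m) ^ 2 :=
        Finset.sum_le_sum (fun v _ => Nat.pow_le_pow_left (torusDegIn_le hk3 B v) 2)
      _ = (B.filter (fun v => v ∈ Bad)).card * (2 * m) ^ 2 := by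
          rw [Finset.sum_const, smul_eq_mul]
      _ ≤ Bad.card * (2 * m) ^ 2 := Nat.mul_le_mul_right _ (hbadsub B)
  have hGset_le : Gset.card ≤ t * N1 := by
    rw [← hLcard]
    refine Finset.card_le_card (fun v hv => ?_)
    rw [hLdef, mem_filter]
    exact ⟨mem_univ v, (Finset.mem_filter.1 hv).2⟩
  have hGset_ge : t * N1 ≤ Gset.card + Bad.card := by
    rw [← hLcard]
    have hsub : Lset ⊆ Gset ∪ Bad := by
      intro v hv
      by_cases hvBad : v ∈ Bad
      · exact Finset.mem_union_right _ hvBad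
      · refine Finset.mem_union_left _ ?_
        have hx0 : rep m k v 0 < (t : ℤ) := by
          rw [hLdef] at hv
          exact (mem_filter.1 hv).2
        obtain ⟨hint, hne1, hne2, hmemB, hnbrB⟩ := hkey v hvBad
        have hvB' : v ∈ B := hmemB.2 (by rw [hP0def]; beta_reduce; exact Or.inl hx0)
        rw [hGsetdef]
        exact mem_filter.2 ⟨mem_filter.2 ⟨hvB', hvBad⟩, hx0⟩
    calc Lset.card ≤ (Gset ∪ Bad).card := Finset.card_le_card hsub
      _ ≤ _ := Finset.card_union_le _ _
  have hB_ub : ∑ v ∈ B, (torusDegIn m k B v) ^ 2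
      ≤ t * N1 * (2 * m) ^ 2 + Bad.card * (2 * m) ^ 2 := by
    rw [hsplitB, hgoodsumB]
    have h1 : Gset.card * (2 * m) ^ 2 ≤ t * N1 * (2 * m) ^ 2 := Nat.mul_le_mul_right _ hGset_le
    omega
  have hB_lb : t * N1 * (2 * m) ^ 2
      ≤ (∑ v ∈ B, (torusDegIn m k B v) ^ 2) + Bad.card * (2 * m) ^ 2 := by
    rw [hsplitB, hgoodsumB]
    calc t * N1 * (2 * m) ^ 2 ≤ (Gset.card + Bad.card) * (2 * m) ^ 2 :=
        Nat.mul_le_mul_right _ hGset_ge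
      _ = Gset.card * (2 * m) ^ 2 + Bad.card * (2 * m) ^ 2 := by ring
      _ ≤ _ := by omega
  -- pass to the reals
  have hKR : (0 : ℝ) < K := by exact_mod_cast hKpos
  have hhalfR : (0 : ℝ) < half := by exact_mod_cast hhalfpos
  have hmR : (0 : ℝ) < (m : ℝ) := by exact_mod_cast (by omega : 0 < m)
  have hBadhalf : (Bad.card : ℝ) / half ≤ 8 * m / K := by
    rw [div_le_div_iff₀ hhalfR hKR]
    have hnat : Bad.card * K ≤ 8 * m * half := by
      calc Bad.card * K ≤ (16 * m ^ 2 * N1) * K := Nat.mul_le_mul_right _ hBadCard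
        _ = 8 * m * half := by rw [hhalfdef]; ring
    exact_mod_cast hnat
  have hKfin : (8 : ℝ) * m / K < ε := hKbig
  have hnn_cast : ((nn : ℕ) : ℝ) = 2 * (m : ℝ) - r := by
    rw [hnndef, Nat.cast_sub hr]
    push_cast
    ring
  have hden_pos : (0 : ℝ) < (half : ℝ) * (2 * (m : ℝ)) ^ 2 := by positivity
  refine ⟨R, B, hRB, hRBdisj, by rw [hRcard, hBcard], ?_, ?_⟩
  · -- red estimate
    show |torusP2 m k R - ((2 * (m : ℝ) - r) / (2 * m)) ^ 2| < ε
    have hP2R : torusP2 m k R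
        = ((∑ v ∈ R, (torusDegIn m k R v) ^ 2 : ℕ) : ℝ) / ((half : ℝ) * (2 * (m : ℝ)) ^ 2) := by
      rw [torusP2, hRcard]
      congr 1
      push_cast
      ring
    have hc2 : ((2 * (m : ℝ) - r) / (2 * m)) ^ 2
        = ((half : ℝ) * ((nn : ℕ) : ℝ) ^ 2) / ((half : ℝ) * (2 * (m : ℝ)) ^ 2) := by
      rw [← hnn_cast, div_pow, mul_div_mul_left _ _ (ne_of_gt hhalfR)]
    rw [hP2R, hc2, div_sub_div_same, abs_div, abs_of_pos hden_pos]
    have habs : |((∑ v ∈ R, (torusDegIn m k R v) ^ 2 : ℕ) : ℝ) - (half : ℝ) * ((nn : ℕ) : ℝ) ^ 2|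
        ≤ (Bad.card : ℝ) * (2 * (m : ℝ)) ^ 2 := by
      rw [abs_sub_le_iff]
      constructor
      · have := hR_ub
        have hcast : ((∑ v ∈ R, (torusDegIn m k R v) ^ 2 : ℕ) : ℝ)
            ≤ (half : ℝ) * ((nn : ℕ) : ℝ) ^ 2 + (Bad.card : ℝ) * (2 * (m : ℝ)) ^ 2 := by
          exact_mod_cast this
        linarith
      · have := hR_lb
        have hcast : (half : ℝ) * ((nn : ℕ) : ℝ) ^ 2
            ≤ ((∑ v ∈ R, (torusDegIn m k R v) ^ 2 : ℕ) : ℝ)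
              + (Bad.card : ℝ) * (2 * (m : ℝ)) ^ 2 := by
          exact_mod_cast this
        linarith
    calc |((∑ v ∈ R, (torusDegIn m k R v) ^ 2 : ℕ) : ℝ) - (half : ℝ) * ((nn : ℕ) : ℝ) ^ 2|
          / ((half : ℝ) * (2 * (m : ℝ)) ^ 2)
        ≤ ((Bad.card : ℝ) * (2 * (m : ℝ)) ^ 2) / ((half : ℝ) * (2 * (m : ℝ)) ^ 2) :=
          div_le_div_of_nonneg_right habs hden_pos.le
      _ = (Bad.card : ℝ) / half := by
          rw [mul_div_mul_right _ _ (by positivity : (2 * (m : ℝ)) ^ 2 ≠ 0)]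
      _ ≤ 8 * m / K := hBadhalf
      _ < ε := hKfin
  · -- blue estimate
    show |torusP2 m k B - (2 * (m : ℝ) - r) / (2 * m)| < ε
    have hP2B : torusP2 m k B
        = ((∑ v ∈ B, (torusDegIn m k B v) ^ 2 : ℕ) : ℝ) / ((half : ℝ) * (2 * (m : ℝ)) ^ 2) := by
      rw [torusP2, hBcard]
      congr 1
      push_cast
      ring
    have htarget : (2 * (m : ℝ) - r) / (2 * m)
        = (((t * N1 : ℕ) : ℝ) * (2 * (m : ℝ)) ^ 2) / ((half : ℝ) * (2 * (m : ℝ)) ^ 2) := by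
      rw [mul_div_mul_right _ _ (by positivity : (2 * (m : ℝ)) ^ 2 ≠ 0), ← hnn_cast]
      rw [div_eq_div_iff (by positivity : (2 * (m : ℝ)) ≠ 0) (ne_of_gt hhalfR)]
      have hnat : nn * half = t * N1 * (2 * m) := by
        rw [hnndef, hhalfdef, htdef]
        ring
      exact_mod_cast hnat
    rw [hP2B, htarget, div_sub_div_same, abs_div, abs_of_pos hden_pos]
    have habs : |((∑ v ∈ B, (torusDegIn m k B v) ^ 2 : ℕ) : ℝ)
          - ((t * N1 : ℕ) : ℝ) * (2 * (m : ℝ)) ^ 2|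
        ≤ (Bad.card : ℝ) * (2 * (m : ℝ)) ^ 2 := by
      rw [abs_sub_le_iff]
      constructor
      · have hcast : ((∑ v ∈ B, (torusDegIn m k B v) ^ 2 : ℕ) : ℝ)
            ≤ ((t * N1 : ℕ) : ℝ) * (2 * (m : ℝ)) ^ 2 + (Bad.card : ℝ) * (2 * (m : ℝ)) ^ 2 := by
          exact_mod_cast hB_ub
        linarith
      · have hcast : ((t * N1 : ℕ) : ℝ) * (2 * (m : ℝ)) ^ 2
            ≤ ((∑ v ∈ B, (torusDegIn m k B v) ^ 2 : ℕ) : ℝ)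
              + (Bad.card : ℝ) * (2 * (m : ℝ)) ^ 2 := by
          exact_mod_cast hB_lb
        linarith
    calc |((∑ v ∈ B, (torusDegIn m k B v) ^ 2 : ℕ) : ℝ)
            - ((t * N1 : ℕ) : ℝ) * (2 * (m : ℝ)) ^ 2| / ((half : ℝ) * (2 * (m : ℝ)) ^ 2)
        ≤ ((Bad.card : ℝ) * (2 * (m : ℝ)) ^ 2) / ((half : ℝ) * (2 * (m : ℝ)) ^ 2) :=
          div_le_div_of_nonneg_right habs hden_pos.le
      _ = (Bad.card : ℝ) / half := by
          rw [mul_div_mul_right _ _ (by positivity : (2 * (m : ℝ)) ^ 2 ≠ 0)]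
      _ ≤ 8 * m / K := hBadhalf
      _ < ε := hKfin
end

section
/- For every m ≥ 2, the set S_1 = { (x_1,…,x_m) ∈ ℤ^m : Σ_{i=1}^m i·x_i ≡ 0 (mod 2m+1) } is an independent exact 1-cover of the grid graph ℤ^m: S_1 is an independent set and every vertex of ℤ^m not in S_1 has exactly one neighbour in S_1. -/
lemma sum_diff_aux (m : ℕ) (x y : Fin m → ℤ) (j : Fin m) (h : ∀ i, i ≠ j → y i = x i) :
    (∑ i : Fin m, ((i.val : ℤ) + 1) * y i) - (∑ i : Fin m, ((i.val : ℤ) + 1) * x i)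
      = ((j.val : ℤ) + 1) * (y j - x j) := by
  rw [← Finset.sum_sub_distrib, Finset.sum_eq_single j]
  · ring
  · intro i _ hi; rw [h i hi]; ring
  · simp

lemma dvd_small_zero (n a : ℤ) (hd : n ∣ a) (hb : |a| < n) : a = 0 := by
  by_contra h0
  have h1 : n ∣ |a| := (dvd_abs n a).mpr hd
  have h2 : (0:ℤ) < |a| := abs_pos.mpr h0
  have := Int.le_of_dvd h2 h1
  omega

/-- For every `m ≥ 2`, the set `S₁ = {x ∈ ℤ^m : ∑ i·xᵢ ≡ 0 (mod 2m+1)}` (coordinates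
weighted `1,…,m`) is an independent exact `1`-cover of the grid graph `ℤ^m`. -/
theorem exact_one_cover (m : ℕ) (hm : 2 ≤ m) :
    IsIndepExactCover m 1
      {x : Fin m → ℤ | (2 * (m : ℤ) + 1) ∣ ∑ i : Fin m, ((i.val : ℤ) + 1) * x i} := by
  set n : ℤ := 2 * (m : ℤ) + 1 with hn
  have hnpos : (0:ℤ) < n := by positivity
  constructor
  · -- independence
    intro x hx y hy hadj
    obtain ⟨j, hj, hoth⟩ := hadj
    have hd := sum_diff_aux m x y j hoth
    have hdvd : n ∣ ((j.val : ℤ) + 1) * (y j - x j) := by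
      rw [← hd]; exact dvd_sub hy hx
    have hjm : (j.val : ℤ) + 1 ≤ m := by
      have := j.isLt; omega
    have hyx : y j - x j = 1 ∨ y j - x j = -1 := by
      rcases hj with h | h <;> [left; right] <;> omega
    have hz : ((j.val : ℤ) + 1) * (y j - x j) = 0 := by
      apply dvd_small_zero n _ hdvd
      rw [abs_mul]
      have h1 : |(j.val:ℤ)+1| = (j.val:ℤ)+1 := abs_of_nonneg (by positivity)
      have h2 : |y j - x j| = 1 := by rcases hyx with h | h <;> rw [h] <;> norm_num
      rw [h1, h2]; omega
    rcases hyx with h | h <;> rw [h] at hz <;> omega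
  · -- exact cover
    intro x hx
    simp only [Set.mem_setOf_eq] at hx
    set s : ℤ := ∑ i : Fin m, ((i.val : ℤ) + 1) * x i with hs
    set r : ℤ := s % n with hr
    have hr0 : 0 ≤ r := Int.emod_nonneg s (by omega)
    have hrn : r < n := Int.emod_lt_of_pos s hnpos
    have hrne : r ≠ 0 := fun h => hx (Int.dvd_of_emod_eq_zero h)
    have hsr : n ∣ s - r := ⟨s / n, by have h := Int.mul_ediv_add_emod s n; omega⟩
    obtain ⟨j0, e, he, hdvd0⟩ :
        ∃ (j0 : Fin m) (e : ℤ), (e = 1 ∨ e = -1) ∧ n ∣ s + ((j0.val : ℤ) + 1) * e := by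
      by_cases hc : r ≤ m
      · refine ⟨⟨(r-1).toNat, by omega⟩, -1, Or.inr rfl, ?_⟩
        have hv : (((r-1).toNat : ℤ)) = r - 1 := by omega
        simp only [hv]
        have : s + (r - 1 + 1) * (-1) = s - r := by ring
        rw [this]; exact hsr
      · refine ⟨⟨(n-r-1).toNat, by omega⟩, 1, Or.inl rfl, ?_⟩
        have hv : (((n-r-1).toNat : ℤ)) = n - r - 1 := by omega
        simp only [hv]
        have : s + (n - r - 1 + 1) * 1 = (s - r) + n := by ring
        rw [this]
        exact dvd_add hsr (dvd_refl n)
    set y0 : Fin m → ℤ := Function.update x j0 (x j0 + e) with hy0def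
    have hy0oth : ∀ i, i ≠ j0 → y0 i = x i := fun i hi => Function.update_of_ne hi _ _
    have hy0j : y0 j0 = x j0 + e := Function.update_self _ _ _
    have hy0S : n ∣ ∑ i : Fin m, ((i.val : ℤ) + 1) * y0 i := by
      have hd := sum_diff_aux m x y0 j0 hy0oth
      rw [hy0j, show x j0 + e - x j0 = e by ring] at hd
      have : (∑ i : Fin m, ((i.val : ℤ) + 1) * y0 i) = s + ((j0.val : ℤ) + 1) * e := by
        rw [← hs] at hd; omega
      rw [this]; exact hdvd0
    have hadj0 : gridAdj m x y0 := by
      refine ⟨j0, ?_, hy0oth⟩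
      rcases he with h | h <;> [left; right] <;> rw [hy0j, h] <;> ring
    have hset : {y | y ∈ {x : Fin m → ℤ | n ∣ ∑ i : Fin m, ((i.val : ℤ) + 1) * x i}
        ∧ gridAdj m x y} = {y0} := by
      ext y
      simp only [Set.mem_setOf_eq, Set.mem_singleton_iff]
      constructor
      · rintro ⟨hyS, j, hj, hoth⟩
        have hd := sum_diff_aux m x y j hoth
        rw [← hs] at hd
        have hyx : y j - x j = 1 ∨ y j - x j = -1 := by
          rcases hj with h | h <;> [left; right] <;> omega
        have hdvd1 : n ∣ ((j.val:ℤ)+1) * (y j - x j) - ((j0.val:ℤ)+1) * e := by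
          have h1 : n ∣ s + ((j.val:ℤ)+1) * (y j - x j) := by
            have : s + ((j.val:ℤ)+1) * (y j - x j) = ∑ i : Fin m, ((i.val : ℤ) + 1) * y i := by
              omega
            rw [this]; exact hyS
          have := dvd_sub h1 hdvd0
          simpa using this
        have hjm : (j.val : ℤ) + 1 ≤ m := by have := j.isLt; omega
        have hj0m : (j0.val : ℤ) + 1 ≤ m := by have := j0.isLt; omega
        have heq : ((j.val:ℤ)+1) * (y j - x j) = ((j0.val:ℤ)+1) * e := by
          have := dvd_small_zero n _ hdvd1 ?_
          · omega
          · rcases hyx with h1 | h1 <;> rcases he with h2 | h2 <;> rw [h1, h2] <;>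
              rw [abs_lt] <;> constructor <;> nlinarith
        have hjj0 : j = j0 := by
          rcases hyx with h1 | h1 <;> rcases he with h2 | h2 <;> rw [h1, h2] at heq <;>
            (apply Fin.ext; omega)
        have hee : y j - x j = e := by
          rw [hjj0] at heq ⊢
          exact mul_left_cancel₀ (show ((j0.val:ℤ)+1) ≠ 0 by positivity) heq
        funext i
        by_cases hij : i = j0
        · subst hij; rw [hy0j, ← hjj0]; omega
        · rw [hy0oth i hij, hoth i (by rw [hjj0]; exact hij)]
      · rintro rfl
        exact ⟨hy0S, hadj0⟩
    rw [hset, Set.ncard_singleton]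
end

section
/- For every m ≥ 2, the set S_2 = { (x_1,…,x_m) ∈ ℤ^m : Σ_{i=1}^m i·x_i ≡ 0 (mod m+1) } is an independent exact 2-cover of the grid graph ℤ^m: S_2 is an independent set and every vertex of ℤ^m not in S_2 has exactly two neighbours in S_2. -/
lemma sum_diff_adj {m : ℕ} {x y : Fin m → ℤ} {j : Fin m} {c : ℤ}
    (hj : y j = x j + c) (h : ∀ i, i ≠ j → y i = x i) :
    ∑ i : Fin m, ((i.val : ℤ) + 1) * y i
      = (∑ i : Fin m, ((i.val : ℤ) + 1) * x i) + ((j.val : ℤ) + 1) * c := by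
  have key : ∀ i : Fin m,
      ((i.val : ℤ) + 1) * y i
        = ((i.val : ℤ) + 1) * x i + (if i = j then ((j.val : ℤ) + 1) * c else 0) := by
    intro i
    by_cases hi : i = j
    · subst hi; rw [hj]; simp; ring
    · simp [hi, h i hi]
  rw [Finset.sum_congr rfl fun i _ => key i, Finset.sum_add_distrib,
    Finset.sum_ite_eq' Finset.univ j]
  simp

/-- For every `m ≥ 2`, the set `S₂ = {x ∈ ℤ^m : ∑ i·xᵢ ≡ 0 (mod m+1)}` (coordinates
weighted `1,…,m`) is an independent exact `2`-cover of the grid graph `ℤ^m`. -/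
theorem exact_two_cover (m : ℕ) (hm : 2 ≤ m) :
    IsIndepExactCover m 2
      {x : Fin m → ℤ | ((m : ℤ) + 1) ∣ ∑ i : Fin m, ((i.val : ℤ) + 1) * x i} := by
  set n : ℤ := (m : ℤ) + 1 with hn
  have hn3 : (3 : ℤ) ≤ n := by omega
  constructor
  · -- independence
    rintro x hx y hy ⟨j, hj, hne⟩
    simp only [Set.mem_setOf_eq] at hx hy
    obtain ⟨c, hc1, hc⟩ : ∃ c : ℤ, (c = 1 ∨ c = -1) ∧ y j = x j + c := by
      rcases hj with h1 | h1
      · exact ⟨1, Or.inl rfl, h1⟩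
      · exact ⟨-1, Or.inr rfl, by omega⟩
    have hsum := sum_diff_adj hc hne
    rw [hsum] at hy
    have hd : n ∣ ((j.val : ℤ) + 1) * c := (dvd_add_right hx).mp hy
    have hj1 : (j.val : ℤ) + 1 < n := by
      have := j.isLt; omega
    rcases hc1 with rfl | rfl
    · rw [mul_one] at hd
      have := Int.le_of_dvd (by positivity) hd
      omega
    · rw [mul_neg_one, Int.dvd_neg] at hd
      have := Int.le_of_dvd (by positivity) hd
      omega
  · -- exact 2-cover
    intro x hx
    simp only [Set.mem_setOf_eq] at hx
    set s : ℤ := ∑ i : Fin m, ((i.val : ℤ) + 1) * x i with hs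
    set r : ℤ := s % n with hr
    have hr0 : 0 ≤ r := Int.emod_nonneg s (by omega)
    have hrn : r < n := Int.emod_lt_of_pos s (by omega)
    have hrne : r ≠ 0 := fun h => hx (Int.dvd_of_emod_eq_zero h)
    have hdsr : n ∣ s - r := by
      refine ⟨s / n, ?_⟩
      rw [hr, Int.emod_def]; ring
    -- the two neighbours
    have hjm : ((n - r - 1).toNat) < m := by omega
    have hjp : ((r - 1).toNat) < m := by omega
    set jp : Fin m := ⟨(n - r - 1).toNat, hjm⟩ with hjpd
    set jm : Fin m := ⟨(r - 1).toNat, hjp⟩ with hjmd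
    have hjpv : ((jp.val : ℤ) + 1) = n - r := by simp [hjpd]; omega
    have hjmv : ((jm.val : ℤ) + 1) = r := by simp [hjmd]; omega
    set yp : Fin m → ℤ := Function.update x jp (x jp + 1) with hyp
    set ym : Fin m → ℤ := Function.update x jm (x jm - 1) with hym
    have hypj : yp jp = x jp + 1 := by simp [hyp]
    have hymj : ym jm = x jm - 1 := by simp [hym]
    have hypne : ∀ i, i ≠ jp → yp i = x i := fun i hi => Function.update_of_ne hi _ _
    have hymne : ∀ i, i ≠ jm → ym i = x i := fun i hi => Function.update_of_ne hi _ _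
    have hypS : n ∣ ∑ i : Fin m, ((i.val : ℤ) + 1) * yp i := by
      rw [sum_diff_adj hypj hypne, hjpv]
      have : s + (n - r) * 1 = (s - r) + n * 1 := by ring
      rw [this]
      exact dvd_add hdsr ⟨1, rfl⟩
    have hymS : n ∣ ∑ i : Fin m, ((i.val : ℤ) + 1) * ym i := by
      rw [sum_diff_adj (c := -1) (by omega) hymne, hjmv]
      have : s + r * (-1) = s - r := by ring
      rw [this]
      exact hdsr
    have hne2 : yp ≠ ym := by
      intro h
      have h1 := congrFun h jp
      rw [hypj] at h1
      by_cases hj : jp = jm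
      · rw [hj, hymj] at h1; omega
      · rw [hymne jp (by simpa using hj)] at h1; omega
    have hset : {y | y ∈ {x : Fin m → ℤ | n ∣ ∑ i : Fin m, ((i.val : ℤ) + 1) * x i}
        ∧ gridAdj m x y} = {yp, ym} := by
      ext y
      simp only [Set.mem_setOf_eq, Set.mem_insert_iff, Set.mem_singleton_iff]
      constructor
      · rintro ⟨hyS, j, hj, hne⟩
        have hj1 : (1 : ℤ) ≤ (j.val : ℤ) + 1 := by omega
        have hj2 : (j.val : ℤ) + 1 < n := by have := j.isLt; omega
        rcases hj with h1 | h1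
        · left
          rw [sum_diff_adj h1 hne, mul_one] at hyS
          have hdd : n ∣ ((j.val : ℤ) + 1) + r := by
            have := dvd_sub hyS hdsr
            have he : s + ((j.val : ℤ) + 1) - (s - r) = ((j.val : ℤ) + 1) + r := by ring
            rwa [he] at this
          obtain ⟨k, hk⟩ := hdd
          have hk1 : k = 1 := by nlinarith
          have hjv : j = jp := by
            apply Fin.ext
            have : ((j.val : ℤ)) = ((jp.val : ℤ)) := by rw [hk1, mul_one] at hk; omega
            exact_mod_cast this
          subst hjv
          funext i
          by_cases hi : i = jp
          · rw [hi, h1, hypj]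
          · rw [hne i hi, hypne i hi]
        · right
          rw [sum_diff_adj (c := -1) (by omega) hne, mul_neg_one] at hyS
          have hdd : n ∣ ((j.val : ℤ) + 1) - r := by
            have := dvd_sub hdsr hyS
            have he : (s - r) - (s + -((j.val : ℤ) + 1)) = ((j.val : ℤ) + 1) - r := by ring
            rwa [he] at this
          obtain ⟨k, hk⟩ := hdd
          have hk1 : k = 0 := by nlinarith
          have hjv : j = jm := by
            apply Fin.ext
            have : ((j.val : ℤ)) = ((jm.val : ℤ)) := by rw [hk1, mul_zero] at hk; omega
            exact_mod_cast this
          subst hjv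
          funext i
          by_cases hi : i = jm
          · rw [hi, h1, hymj]
          · rw [hne i hi, hymne i hi]
      · rintro (rfl | rfl)
        · exact ⟨hypS, jp, Or.inl hypj, hypne⟩
        · exact ⟨hymS, jm, Or.inr hymj, hymne⟩
    rw [hset, Set.ncard_pair hne2]
end

section
/- For every m ≥ 2, the set S_m = { (x_1,…,x_m) ∈ ℤ^m : Σ_{i=1}^m x_i ≡ 0 (mod 3) } is an independent exact m-cover of the grid graph ℤ^m: S_m is an independent set and every vertex of ℤ^m not in S_m has exactly m neighbours in S_m. -/
lemma sum_update_eq (m : ℕ) (x : Fin m → ℤ) (j : Fin m) (c : ℤ) :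
    ∑ i, Function.update x j c i = ∑ i, x i - x j + c := by
  rw [Finset.sum_update_of_mem (Finset.mem_univ j),
    Finset.sum_sdiff_eq_sub (Finset.subset_univ _), Finset.sum_singleton]
  ring

lemma sum_adj (m : ℕ) (x y : Fin m → ℤ) (h : gridAdj m x y) :
    ∑ i, y i = ∑ i, x i + 1 ∨ ∑ i, y i = ∑ i, x i - 1 := by
  obtain ⟨j, hj, hother⟩ := h
  have hy : y = Function.update x j (y j) := by
    funext i
    by_cases hi : i = j
    · subst hi; simp
    · rw [Function.update_of_ne hi]; exact hother i hi
  have : ∑ i, y i = ∑ i, x i - x j + y j := by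
    conv_lhs => rw [hy]
    exact sum_update_eq m x j (y j)
  rcases hj with h1 | h1 <;> [left; right] <;> omega

lemma ncard_nbrs (m : ℕ) (x : Fin m → ℤ) (ε : ℤ) (hε : ε = 1 ∨ ε = -1)
    (h : (3 : ℤ) ∣ ∑ i, x i + ε) :
    {y | (3 : ℤ) ∣ ∑ i, y i ∧ gridAdj m x y}.ncard = m := by
  have hset : {y | (3 : ℤ) ∣ ∑ i, y i ∧ gridAdj m x y}
      = Set.range (fun j : Fin m => Function.update x j (x j + ε)) := by
    ext y
    simp only [Set.mem_setOf_eq, Set.mem_range]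
    constructor
    · rintro ⟨hdvd, j, hj, hother⟩
      refine ⟨j, ?_⟩
      have hy : y = Function.update x j (y j) := by
        funext i
        by_cases hi : i = j
        · subst hi; simp
        · rw [Function.update_of_ne hi]; exact hother i hi
      have hsum : ∑ i, y i = ∑ i, x i - x j + y j := by
        conv_lhs => rw [hy]
        exact sum_update_eq m x j (y j)
      have : y j = x j + ε := by
        rcases hj with h1 | h1 <;> rcases hε with h2 | h2 <;> subst h2 <;> omega
      rw [hy, this]
    · rintro ⟨j, rfl⟩
      constructor
      · rw [sum_update_eq]
        obtain ⟨k, hk⟩ := h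
        exact ⟨k, by omega⟩
      · refine ⟨j, ?_, fun i hi => Function.update_of_ne hi _ _⟩
        rcases hε with h2 | h2 <;> subst h2 <;> simp <;> omega
  rw [hset]
  have hinj : Function.Injective (fun j : Fin m => Function.update x j (x j + ε)) := by
    intro a b hab
    by_contra hne
    have := congrFun hab a
    simp only [Function.update_self, Function.update_of_ne hne] at this
    rcases hε with h2 | h2 <;> omega
  rw [← Set.image_univ, Set.ncard_image_of_injective _ hinj, Set.ncard_univ, Nat.card_eq_fintype_card,
    Fintype.card_fin]

/-- For every `m ≥ 2`, the set `S_m = {x ∈ ℤ^m : ∑ xᵢ ≡ 0 (mod 3)}` is an independent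
exact `m`-cover of the grid graph `ℤ^m`. -/
theorem exact_m_cover (m : ℕ) (hm : 2 ≤ m) :
    IsIndepExactCover m m
      {x : Fin m → ℤ | (3 : ℤ) ∣ ∑ i, x i} := by
  constructor
  · intro x hx y hy hadj
    have := sum_adj m x y hadj
    simp only [Set.mem_setOf_eq] at hx hy
    omega
  · intro x hx
    simp only [Set.mem_setOf_eq] at hx
    have h3 : (3 : ℤ) ∣ ∑ i, x i + 1 ∨ (3 : ℤ) ∣ ∑ i, x i + (-1) := by omega
    rcases h3 with h | h
    · exact ncard_nbrs m x 1 (Or.inl rfl) h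
    · exact ncard_nbrs m x (-1) (Or.inr rfl) h
end
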